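/- arXiv:math/0512606 — 6 statements merged into one kernel-verified Lean document; each statement's English description precedes it below -/
import Mathlib

section
/- Let f₁,…,f_k : ℍ → ℂ be linearly independent functions, each of the form f_i(τ) = e^{2πi h_i τ} g_i(e^{2πiτ}) with h_i ∈ ℚ and g_i holomorphic on the open unit disk. Then the span V of f₁,…,f_k admits a basis f̄₁,…,f̄_k with f̄_i(τ) = e^{2πi h̄_i τ} ḡ_i(e^{2πiτ}), where each ḡ_i is holomorphic on the open unit disk with ḡ_i(0) ≠ 0 and the rational numbers satisfy h̄₁ < h̄₂ < ⋯ < h̄_k; the numbers h̄₁,…,h̄_k are uniquely determined by V; and the Wronskian W_{(q d/dq)}(f̄₁,…,f̄_k) equals e^{2πi(h̄₁+⋯+h̄_k)τ} u(e^{2πiτ}) with u holomorphic on the open unit disk and u(0) equal, up to sign, to the nonzero Vandermonde determinant ∏_{i<j}(h̄_j − h̄_i); in particular the order of vanishing at i∞ of the Wronskian is h̄₁+⋯+h̄_k. -/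
open Complex Finset

/-- The Ramanujan derivative `(q d/dq) f = (2πi)⁻¹ df/dτ`. -/
noncomputable def ramD : (ℂ → ℂ) → (ℂ → ℂ) :=
  fun f τ => (2 * (Real.pi : ℂ) * I)⁻¹ * deriv f τ

/-- The upper half-plane as a subset of `ℂ`. -/
def UHP : Set ℂ := {z : ℂ | 0 < z.im}

namespace Stmt0

open Metric Set Filter Topology

noncomputable def qq (τ : ℂ) : ℂ := Complex.exp (2 * (Real.pi : ℂ) * I * τ)

noncomputable def ee (h : ℚ) (τ : ℂ) : ℂ :=
  Complex.exp (2 * (Real.pi : ℂ) * I * (h : ℂ) * τ)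

lemma uhp_open : IsOpen UHP := isOpen_lt continuous_const Complex.continuous_im

lemma qq_mem {τ : ℂ} (hτ : τ ∈ UHP) : qq τ ∈ Metric.ball (0:ℂ) 1 := by
  have hre : (2 * (Real.pi : ℂ) * I * τ).re = -(2 * Real.pi * τ.im) := by
    simp [Complex.mul_re, Complex.mul_im]
  have : ‖qq τ‖ = Real.exp (-(2 * Real.pi * τ.im)) := by
    rw [qq, Complex.norm_exp, hre]
  rw [mem_ball_zero_iff, this]
  have him : 0 < τ.im := hτ
  have : -(2 * Real.pi * τ.im) < 0 := by nlinarith [Real.pi_pos]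
  exact Real.exp_lt_one_iff.mpr this

lemma ee_ne (h : ℚ) (τ : ℂ) : ee h τ ≠ 0 := Complex.exp_ne_zero _

lemma qq_eval (t : ℝ) : qq ((t:ℂ) * I) = ((Real.exp (-(2 * Real.pi * t)) : ℝ) : ℂ) := by
  rw [qq, Complex.ofReal_exp]
  congr 1
  push_cast
  ring_nf
  rw [Complex.I_sq]
  ring

lemma ee_eval (h : ℚ) (t : ℝ) :
    ee h ((t:ℂ) * I) = ((Real.exp (-(2 * Real.pi * (h:ℝ) * t)) : ℝ) : ℂ) := by
  rw [ee, Complex.ofReal_exp]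
  congr 1
  push_cast
  ring_nf
  rw [Complex.I_sq]
  ring

lemma ee_add_nat (a : ℚ) (o : ℕ) (τ : ℂ) : ee (a + o) τ = ee a τ * qq τ ^ o := by
  rw [ee, ee, qq, ← Complex.exp_nat_mul, ← Complex.exp_add]
  congr 1
  push_cast
  ring

/-- `v : ↥UHP → ℂ` has exponent `e`. -/
def HasExp (e : ℚ) (v : ↥UHP → ℂ) : Prop :=
  ∃ g : ℂ → ℂ, DifferentiableOn ℂ g (Metric.ball 0 1) ∧ g 0 ≠ 0 ∧
    ∀ τ : ↥UHP, v τ = ee e ↑τ * g (qq ↑τ)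


lemma exp_neg_mul_tendsto {δ : ℝ} (hδ : δ < 0) :
    Tendsto (fun t : ℝ => Real.exp (δ * t)) atTop (𝓝 0) := by
  apply Real.tendsto_exp_atBot.comp
  exact (tendsto_const_mul_atBot_of_neg hδ).mpr tendsto_id

lemma gcont {g : ℂ → ℂ} (hg : DifferentiableOn ℂ g (Metric.ball 0 1)) :
    ContinuousAt g 0 :=
  hg.continuousOn.continuousAt (Metric.ball_mem_nhds (0:ℂ) one_pos)

lemma rt_tendsto : Tendsto (fun t : ℝ => ((Real.exp (-(2 * Real.pi * t)) : ℝ) : ℂ))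
    atTop (𝓝 (0:ℂ)) := by
  have h1 : Tendsto (fun t : ℝ => Real.exp (-(2 * Real.pi) * t)) atTop (𝓝 0) :=
    exp_neg_mul_tendsto (by nlinarith [Real.pi_pos])
  have h2 := (Complex.continuous_ofReal.tendsto 0).comp h1
  simpa [Function.comp_def, neg_mul, mul_assoc] using h2

lemma vanish {m : ℕ} (h : Fin m → ℚ) (g : Fin m → ℂ → ℂ) (c : Fin m → ℂ)
    (hg : ∀ i, DifferentiableOn ℂ (g i) (Metric.ball 0 1)) (hg0 : ∀ i, g i 0 ≠ 0) :
    ∀ s : Finset (Fin m), Set.InjOn h s →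
      (∀ τ ∈ UHP, ∑ i ∈ s, c i * (ee (h i) τ * g i (qq τ)) = 0) → ∀ i ∈ s, c i = 0 := by
  intro s
  induction s using Finset.strongInduction with
  | _ s ih =>
    intro hinj hsum i hi
    obtain ⟨i₀, hi₀s, hmin⟩ := s.exists_min_image h ⟨i, hi⟩
    -- the auxiliary real-parameter function
    set φ : Fin m → ℝ → ℂ := fun j t =>
      c j * ((Real.exp (2 * Real.pi * ((h i₀ : ℝ) - (h j : ℝ)) * t) : ℝ) : ℂ) *
        g j (((Real.exp (-(2 * Real.pi * t)) : ℝ) : ℂ)) with hφ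
    have hterm : ∀ j ∈ s, Tendsto (fun t => φ j t) atTop
        (𝓝 (if j = i₀ then c i₀ * g i₀ 0 else 0)) := by
      intro j hjs
      by_cases hj : j = i₀
      · subst hj
        simp only [hφ, sub_self, mul_zero, zero_mul, Real.exp_zero,
          Complex.ofReal_one, mul_one, if_pos rfl]
        have : Tendsto (fun t : ℝ => g j (((Real.exp (-(2 * Real.pi * t)) : ℝ) : ℂ)))
            atTop (𝓝 (g j 0)) := (gcont (hg j)).tendsto.comp rt_tendsto
        exact (tendsto_const_nhds (x := c j)).mul this
      · rw [if_neg hj]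
        have hlt : (h i₀ : ℝ) < h j := by
          have hle : h i₀ ≤ h j := hmin j hjs
          have hne : h i₀ ≠ h j := fun e => hj (hinj hjs hi₀s e.symm)
          exact_mod_cast lt_of_le_of_ne hle hne
        have hexp : Tendsto (fun t : ℝ =>
            Real.exp (2 * Real.pi * ((h i₀ : ℝ) - (h j : ℝ)) * t)) atTop (𝓝 0) :=
          exp_neg_mul_tendsto (by nlinarith [Real.pi_pos])
        have h1 : Tendsto (fun t : ℝ =>
            ((Real.exp (2 * Real.pi * ((h i₀ : ℝ) - (h j : ℝ)) * t) : ℝ) : ℂ))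
            atTop (𝓝 (0:ℂ)) := by
          have := (Complex.continuous_ofReal.tendsto 0).comp hexp
          simpa [Function.comp_def] using this
        have h2 : Tendsto (fun t : ℝ => g j (((Real.exp (-(2 * Real.pi * t)) : ℝ) : ℂ)))
            atTop (𝓝 (g j 0)) := (gcont (hg j)).tendsto.comp rt_tendsto
        have := ((tendsto_const_nhds (x := c j)).mul h1).mul h2
        simp only [hφ]
        simpa only [mul_zero, zero_mul] using this
    have key : Tendsto (fun t => ∑ j ∈ s, φ j t) atTop
        (𝓝 (c i₀ * g i₀ 0)) := by
      have := tendsto_finset_sum s (fun j hj => hterm j hj)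
      simpa [Finset.sum_ite_eq' s i₀ (fun _ => c i₀ * g i₀ 0), hi₀s] using this
    have hev : ∀ᶠ t : ℝ in atTop, ∑ j ∈ s, φ j t = 0 := by
      filter_upwards [eventually_gt_atTop (0:ℝ)] with t ht
      have hτ : ((t:ℂ) * I) ∈ UHP := by
        simp only [UHP, Set.mem_setOf_eq, Complex.mul_im, Complex.I_im, Complex.I_re,
          Complex.ofReal_re, Complex.ofReal_im]
        simpa using ht
      have h0 := hsum ((t:ℂ) * I) hτ
      have : ∑ j ∈ s, φ j t =
          ((Real.exp (2 * Real.pi * (h i₀ : ℝ) * t) : ℝ) : ℂ) *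
            ∑ j ∈ s, c j * (ee (h j) ((t:ℂ) * I) * g j (qq ((t:ℂ) * I))) := by
        rw [Finset.mul_sum]
        apply Finset.sum_congr rfl
        intro j hj
        simp only [hφ]
        have hre : Real.exp (2 * Real.pi * ((h i₀ : ℝ) - (h j : ℝ)) * t) =
            Real.exp (2 * Real.pi * (h i₀ : ℝ) * t) *
              Real.exp (-(2 * Real.pi * (h j : ℝ) * t)) := by
          rw [← Real.exp_add]; ring_nf
        rw [ee_eval, qq_eval, hre]
        push_cast
        ring
      rw [this, h0, mul_zero]
    have hlim0 : Tendsto (fun t => ∑ j ∈ s, φ j t) atTop (𝓝 (0:ℂ)) :=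
      Tendsto.congr' (by filter_upwards [hev] with t ht using ht.symm) tendsto_const_nhds
    have hc0 : c i₀ * g i₀ 0 = 0 := tendsto_nhds_unique key hlim0
    have hci₀ : c i₀ = 0 := by
      rcases mul_eq_zero.mp hc0 with h' | h'
      · exact h'
      · exact absurd h' (hg0 i₀)
    by_cases hii : i = i₀
    · rw [hii]; exact hci₀
    · apply ih (s.erase i₀) (Finset.erase_ssubset hi₀s)
        (hinj.mono (Finset.erase_subset i₀ s)) ?_ i (Finset.mem_erase.mpr ⟨hii, hi⟩)
      intro τ hτ
      have h0 := hsum τ hτ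
      rw [← Finset.add_sum_erase s _ hi₀s, hci₀, zero_mul, zero_add] at h0
      exact h0


lemma vanish_univ {m : ℕ} (h : Fin m → ℚ) (g : Fin m → ℂ → ℂ) (c : Fin m → ℂ)
    (hinj : Function.Injective h)
    (hg : ∀ i, DifferentiableOn ℂ (g i) (Metric.ball 0 1)) (hg0 : ∀ i, g i 0 ≠ 0)
    (hsum : ∀ τ ∈ UHP, ∑ i, c i * (ee (h i) τ * g i (qq τ)) = 0) : ∀ i, c i = 0 :=
  fun i => vanish h g c hg hg0 Finset.univ hinj.injOn hsum i (Finset.mem_univ i)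

lemma hasExp_linind {m : ℕ} (e : Fin m → ℚ) (hinj : Function.Injective e)
    (v : Fin m → ↥UHP → ℂ) (hv : ∀ t, HasExp (e t) (v t)) : LinearIndependent ℂ v := by
  choose g hg hg0 hrep using hv
  rw [Fintype.linearIndependent_iff]
  intro c hc i
  apply vanish_univ e g c hinj hg hg0 ?_ i
  intro τ hτ
  have h1 := congrFun hc ⟨τ, hτ⟩
  rw [Finset.sum_apply] at h1
  simp only [Pi.smul_apply, smul_eq_mul] at h1
  calc ∑ j, c j * (ee (e j) τ * g j (qq τ)) = ∑ j, c j * v j ⟨τ, hτ⟩ := by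
        apply Finset.sum_congr rfl
        intro j _
        rw [hrep j ⟨τ, hτ⟩]
    _ = 0 := h1

lemma exp_mem_range {k : ℕ} (hb : Fin k → ℚ) (gb : Fin k → ℂ → ℂ)
    (hbinj : Function.Injective hb)
    (hgb : ∀ i, DifferentiableOn ℂ (gb i) (Metric.ball 0 1)) (hgb0 : ∀ i, gb i 0 ≠ 0)
    (e : ℚ) (g0 : ℂ → ℂ) (hg0d : DifferentiableOn ℂ g0 (Metric.ball 0 1))
    (hg00 : g0 0 ≠ 0) (c : Fin k → ℂ)
    (heq : ∀ τ ∈ UHP, ee e τ * g0 (qq τ) = ∑ i, c i * (ee (hb i) τ * gb i (qq τ))) :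
    e ∈ Set.range hb := by
  by_contra hne
  have hinj : Function.Injective (Fin.cons e hb : Fin (k+1) → ℚ) :=
    Fin.cons_injective_iff.mpr ⟨hne, hbinj⟩
  have h0 := vanish_univ (Fin.cons e hb) (Fin.cons g0 gb) (Fin.cons (-1) c) hinj
    (fun t => Fin.cases hg0d hgb t) (fun t => Fin.cases hg00 hgb0 t) ?_ 0
  · simp at h0
  · intro τ hτ
    rw [Fin.sum_univ_succ]
    simp only [Fin.cons_zero, Fin.cons_succ]
    rw [heq τ hτ]
    ring

lemma range_hb_eq {k : ℕ} (V0 : Submodule ℂ (↥UHP → ℂ)) (fb : Fin k → ℂ → ℂ)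
    (hb : Fin k → ℚ) (gb : Fin k → ℂ → ℂ) (hbinj : Function.Injective hb)
    (hd : ∀ i, DifferentiableOn ℂ (gb i) (Metric.ball 0 1)) (h0 : ∀ i, gb i 0 ≠ 0)
    (hrep : ∀ i, ∀ τ ∈ UHP, fb i τ = ee (hb i) τ * gb i (qq τ))
    (hspan : Submodule.span ℂ (Set.range fun i => UHP.restrict (fb i)) = V0) :
    {e : ℚ | ∃ v ∈ V0, HasExp e v} = Set.range hb := by
  ext e
  constructor
  · rintro ⟨v, hv, g0, hg0d, hg00, hvrep⟩
    rw [← hspan, Submodule.mem_span_range_iff_exists_fun] at hv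
    obtain ⟨c, hc⟩ := hv
    apply exp_mem_range hb gb hbinj hd h0 e g0 hg0d hg00 c
    intro τ hτ
    have h1 := congrFun hc ⟨τ, hτ⟩
    rw [Finset.sum_apply] at h1
    simp only [Pi.smul_apply, smul_eq_mul] at h1
    rw [← hvrep ⟨τ, hτ⟩, ← h1]
    apply Finset.sum_congr rfl
    intro j _
    show c j * fb j τ = _
    rw [hrep j τ hτ]
  · rintro ⟨j, rfl⟩
    refine ⟨UHP.restrict (fb j), ?_, gb j, hd j, h0 j, fun τ => hrep j τ τ.2⟩
    rw [← hspan]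
    exact Submodule.subset_span ⟨j, rfl⟩

lemma strictMono_eq_of_range_eq {k : ℕ} {a b : Fin k → ℚ} (ha : StrictMono a)
    (hb : StrictMono b) (h : Set.range a = Set.range b) : a = b := by
  set s : Finset ℚ := Finset.univ.image b with hs
  have hcard : s.card = k := by
    rw [hs, Finset.card_image_of_injective _ hb.injective, Finset.card_univ, Fintype.card_fin]
  have hmem_b : ∀ i, b i ∈ s := fun i => Finset.mem_image.mpr ⟨i, Finset.mem_univ i, rfl⟩
  have hmem_a : ∀ i, a i ∈ s := by
    intro i
    have : a i ∈ Set.range b := h ▸ ⟨i, rfl⟩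
    obtain ⟨j, hj⟩ := this
    exact hj ▸ hmem_b j
  rw [Finset.orderEmbOfFin_unique hcard hmem_a ha,
    Finset.orderEmbOfFin_unique hcard hmem_b hb]

lemma factor {G : ℂ → ℂ} (hG : DifferentiableOn ℂ G (Metric.ball 0 1))
    (hne : (Metric.ball (0:ℂ) 1).restrict G ≠ 0) :
    ∃ (o : ℕ) (R : ℂ → ℂ), DifferentiableOn ℂ R (Metric.ball 0 1) ∧ R 0 ≠ 0 ∧
      ∀ z ∈ Metric.ball (0:ℂ) 1, G z = z ^ o * R z := by
  have h01 : (0:ℂ) ∈ Metric.ball (0:ℂ) 1 := Metric.mem_ball_self one_pos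
  have hA : AnalyticAt ℂ G 0 := hG.analyticAt (Metric.isOpen_ball.mem_nhds h01)
  have htop : analyticOrderAt G 0 ≠ ⊤ := by
    intro htop
    rw [analyticOrderAt_eq_top] at htop
    have hzero : Set.EqOn G 0 (Metric.ball 0 1) :=
      (hG.analyticOnNhd Metric.isOpen_ball).eqOn_zero_of_preconnected_of_eventuallyEq_zero
        (convex_ball (0:ℂ) 1).isPreconnected h01 htop
    apply hne
    funext z
    exact hzero z.2
  obtain ⟨o, ho⟩ := ENat.ne_top_iff_exists.mp htop
  obtain ⟨gg, hgan, hg0, hev⟩ := (hA.analyticOrderAt_eq_natCast (n := o)).mp ho.symm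
  set R : ℂ → ℂ := fun z => if z = 0 then gg 0 else G z / z ^ o with hR
  have hRg : R =ᶠ[𝓝 0] gg := by
    filter_upwards [hev] with z hz
    by_cases h0 : z = 0
    · rw [hR]; simp [h0]
    · rw [hR]
      simp only [if_neg h0]
      rw [hz]
      field_simp
      rw [sub_zero, smul_eq_mul]
  refine ⟨o, R, ?_, ?_, ?_⟩
  · intro z hz
    by_cases h0 : z = 0
    · subst h0
      exact ((hRg.differentiableAt_iff).mpr hgan.differentiableAt).differentiableWithinAt
    · have hGz : DifferentiableAt ℂ G z :=
        hG.differentiableAt (Metric.isOpen_ball.mem_nhds hz)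
      have hDiv : DifferentiableAt ℂ (fun w => G w / w ^ o) z :=
        hGz.div (differentiableAt_pow o) (pow_ne_zero o h0)
      have hEq : R =ᶠ[𝓝 z] fun w => G w / w ^ o := by
        filter_upwards [isOpen_ne.mem_nhds (show z ≠ (0:ℂ) from h0)] with w hw
        rw [hR]; simp [if_neg hw]
      exact ((hEq.differentiableAt_iff).mpr hDiv).differentiableWithinAt
  · have : R 0 = gg 0 := by rw [hR]; simp
    rw [this]; exact hg0
  · intro z hz
    by_cases h0 : z = 0
    · subst h0
      have := hev.self_of_nhds
      simp only [sub_zero, smul_eq_mul] at this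
      rw [this, hR]
      simp
    · rw [hR]
      simp only [if_neg h0]
      field_simp


lemma mainloop (k : ℕ) (V0 : Submodule ℂ (↥UHP → ℂ)) (B : ℚ)
    (hB : ∀ (e : ℚ) (v : ↥UHP → ℂ), v ∈ V0 → HasExp e v → e ≤ B) :
    ∀ n : ℕ, ∀ (F : Fin k → ℂ → ℂ) (h : Fin k → ℚ) (R : Fin k → ℂ → ℂ),
    (∀ i, DifferentiableOn ℂ (R i) (Metric.ball 0 1)) →
    (∀ i, R i 0 ≠ 0) →
    (∀ i, ∀ τ ∈ UHP, F i τ = ee (h i) τ * R i (qq τ)) →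
    Submodule.span ℂ (Set.range fun i => UHP.restrict (F i)) = V0 →
    LinearIndependent ℂ (fun i => UHP.restrict (F i)) →
    Nat.ceil (∑ i, (B - h i)) < n →
    ∃ (F' : Fin k → ℂ → ℂ) (h' : Fin k → ℚ) (R' : Fin k → ℂ → ℂ),
      Function.Injective h' ∧
      (∀ i, DifferentiableOn ℂ (R' i) (Metric.ball 0 1)) ∧
      (∀ i, R' i 0 ≠ 0) ∧
      (∀ i, ∀ τ ∈ UHP, F' i τ = ee (h' i) τ * R' i (qq τ)) ∧
      Submodule.span ℂ (Set.range fun i => UHP.restrict (F' i)) = V0 := by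
  intro n
  induction n with
  | zero => intro F h R _ _ _ _ _ hlt; omega
  | succ n ih =>
    intro F h R hRd hR0 hrep hspan hli hlt
    by_cases hinj : Function.Injective h
    · exact ⟨F, h, R, hinj, hRd, hR0, hrep, hspan⟩
    -- pivot step
    obtain ⟨j, i, hij, hne⟩ := Function.not_injective_iff.mp hinj
    set c : ℂ := R j 0 / R i 0 with hc
    set G : ℂ → ℂ := fun z => R j z - c * R i z with hG
    have hGd : DifferentiableOn ℂ G (Metric.ball 0 1) :=
      (hRd j).sub ((hRd i).const_mul c)
    have hG0 : G 0 = 0 := by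
      rw [hG]
      simp only [hc]
      rw [div_mul_cancel₀ _ (hR0 i)]
      ring
    set Fj : ℂ → ℂ := fun τ => F j τ - c * F i τ with hFj
    have hFjrep : ∀ τ ∈ UHP, Fj τ = ee (h j) τ * G (qq τ) := by
      intro τ hτ
      simp only [hFj, hG, hrep j τ hτ, hrep i τ hτ, ← hij]
      ring
    have hres : UHP.restrict Fj = UHP.restrict (F j) - c • UHP.restrict (F i) := rfl
    have hmemV0 : ∀ t, UHP.restrict (F t) ∈ V0 := by
      intro t
      rw [← hspan]
      exact Submodule.subset_span ⟨t, rfl⟩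
    have hGne : (Metric.ball (0:ℂ) 1).restrict G ≠ 0 := by
      intro h0
      have hzero : UHP.restrict (F j) - c • UHP.restrict (F i) = 0 := by
        rw [← hres]
        funext τ
        have hq := qq_mem τ.2
        have hGq : G (qq ↑τ) = 0 := congrFun h0 ⟨qq ↑τ, hq⟩
        show Fj ↑τ = 0
        rw [hFjrep ↑τ τ.2, hGq, mul_zero]
      -- contradict linear independence
      have := Fintype.linearIndependent_iff.mp hli
        (fun t => if t = j then 1 else if t = i then -c else 0) ?_ j
      · simp at this
      · rw [← Finset.add_sum_erase _ _ (Finset.mem_univ j),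
          ← Finset.add_sum_erase _ _ (Finset.mem_erase.mpr ⟨hne.symm, Finset.mem_univ i⟩)]
        have hrest : ∑ t ∈ (Finset.univ.erase j).erase i,
            (if t = j then (1:ℂ) else if t = i then -c else 0) • UHP.restrict (F t) = 0 := by
          apply Finset.sum_eq_zero
          intro t ht
          have ht1 : t ≠ i := (Finset.mem_erase.mp ht).1
          have ht2 : t ≠ j := (Finset.mem_erase.mp (Finset.mem_erase.mp ht).2).1
          rw [if_neg ht2, if_neg ht1, zero_smul]
        beta_reduce
        rw [hrest, add_zero, if_pos rfl, if_neg hne.symm, if_pos rfl, one_smul, neg_smul,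
          ← sub_eq_add_neg, hzero]
    obtain ⟨o, R', hR'd, hR'0, hfac⟩ := factor hGd hGne
    have ho1 : 1 ≤ o := by
      by_contra ho
      have ho0 : o = 0 := by omega
      have := hfac 0 (Metric.mem_ball_self one_pos)
      rw [ho0, pow_zero, one_mul, hG0] at this
      exact hR'0 this.symm
    -- updated data
    set F2 : Fin k → ℂ → ℂ := Function.update F j Fj with hF2
    set h2 : Fin k → ℚ := Function.update h j (h j + o) with hh2
    set R2 : Fin k → ℂ → ℂ := Function.update R j R' with hR2
    have hR2d : ∀ t, DifferentiableOn ℂ (R2 t) (Metric.ball 0 1) := by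
      intro t
      by_cases ht : t = j
      · subst ht; rw [hR2, Function.update_self]; exact hR'd
      · rw [hR2, Function.update_of_ne ht]; exact hRd t
    have hR20 : ∀ t, R2 t 0 ≠ 0 := by
      intro t
      by_cases ht : t = j
      · subst ht; rw [hR2, Function.update_self]; exact hR'0
      · rw [hR2, Function.update_of_ne ht]; exact hR0 t
    have hrep2 : ∀ t, ∀ τ ∈ UHP, F2 t τ = ee (h2 t) τ * R2 t (qq τ) := by
      intro t τ hτ
      by_cases ht : t = j
      · subst ht
        rw [hF2, hh2, hR2]
        simp only [Function.update_self]
        rw [hFjrep τ hτ, hfac (qq τ) (qq_mem hτ), ee_add_nat]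
        ring
      · rw [hF2, hh2, hR2]
        simp only [Function.update_of_ne ht]
        exact hrep t τ hτ
    have hspan2 : Submodule.span ℂ (Set.range fun t => UHP.restrict (F2 t)) = V0 := by
      apply le_antisymm
      · rw [Submodule.span_le]
        rintro x ⟨t, rfl⟩
        by_cases ht : t = j
        · have hFt : F2 t = Fj := by rw [hF2, ht, Function.update_self]
          show UHP.restrict (F2 t) ∈ (V0 : Set (↥UHP → ℂ))
          rw [hFt, hres]
          exact sub_mem (hmemV0 j) (Submodule.smul_mem _ _ (hmemV0 i))
        · have hFt : F2 t = F t := by rw [hF2, Function.update_of_ne ht]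
          show UHP.restrict (F2 t) ∈ (V0 : Set (↥UHP → ℂ))
          rw [hFt]
          exact hmemV0 t
      · rw [← hspan, Submodule.span_le]
        rintro x ⟨t, rfl⟩
        have hmem2 : ∀ s, UHP.restrict (F2 s) ∈
            Submodule.span ℂ (Set.range fun t => UHP.restrict (F2 t)) :=
          fun s => Submodule.subset_span ⟨s, rfl⟩
        by_cases ht : t = j
        · show UHP.restrict (F t) ∈ _
          have e1 : F2 j = Fj := by rw [hF2, Function.update_self]
          have e2 : F2 i = F i := by rw [hF2, Function.update_of_ne hne.symm]
          have heq : UHP.restrict (F t) = UHP.restrict (F2 j) + c • UHP.restrict (F2 i) := by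
            rw [ht, e1, e2, hres]
            abel
          rw [heq]
          exact add_mem (hmem2 j) (Submodule.smul_mem _ _ (hmem2 i))
        · show UHP.restrict (F t) ∈ _
          have heq : F t = F2 t := by rw [hF2, Function.update_of_ne ht]
          rw [heq]
          exact hmem2 t
    have hli2 : LinearIndependent ℂ (fun t => UHP.restrict (F2 t)) := by
      rw [linearIndependent_iff_card_eq_finrank_span] at hli ⊢
      have e1 : Set.finrank ℂ (Set.range fun t => UHP.restrict (F2 t)) =
          Module.finrank ℂ V0 := by rw [Set.finrank, hspan2]
      have e2 : Set.finrank ℂ (Set.range fun t => UHP.restrict (F t)) =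
          Module.finrank ℂ V0 := by rw [Set.finrank, hspan]
      rw [e1, ← e2]
      exact hli
    have hball : ∀ t, h2 t ≤ B := by
      intro t
      apply hB (h2 t) (UHP.restrict (F2 t)) (hspan2 ▸ Submodule.subset_span ⟨t, rfl⟩)
      exact ⟨R2 t, hR2d t, hR20 t, fun τ => hrep2 t ↑τ τ.2⟩
    have hsum2 : ∑ t, (B - h2 t) = (∑ t, (B - h t)) - o := by
      rw [hh2]
      rw [show (fun t => B - Function.update h j (h j + (o:ℚ)) t) =
          Function.update (fun t => B - h t) j (B - (h j + o)) by
        funext t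
        by_cases ht : t = j
        · subst ht; simp
        · simp [Function.update_of_ne ht]]
      rw [Finset.sum_update_of_mem (Finset.mem_univ j)]
      rw [show ∑ t, (B - h t) = (B - h j) + ∑ t ∈ Finset.univ \ {j}, (B - h t) by
        rw [Finset.sum_eq_sum_sdiff_singleton_add (Finset.mem_univ j)]; ring]
      ring
    have hnonneg : (0:ℚ) ≤ ∑ t, (B - h2 t) :=
      Finset.sum_nonneg fun t _ => sub_nonneg.2 (hball t)
    have hceil : Nat.ceil (∑ t, (B - h2 t)) < n := by
      have h1 : (∑ t, (B - h2 t)) + 1 ≤ ∑ t, (B - h t) := by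
        rw [hsum2]
        have : (1:ℚ) ≤ (o:ℚ) := by exact_mod_cast ho1
        linarith
      have h2' : Nat.ceil ((∑ t, (B - h2 t)) + 1) = Nat.ceil (∑ t, (B - h2 t)) + 1 :=
        Nat.ceil_add_one hnonneg
      have h3 : Nat.ceil ((∑ t, (B - h2 t)) + 1) ≤ Nat.ceil (∑ t, (B - h t)) :=
        Nat.ceil_le_ceil h1
      omega
    exact ih F2 h2 R2 hR2d hR20 hrep2 hspan2 hli2 hceil


lemma c0_ne : (2 * (Real.pi : ℂ) * I) ≠ 0 :=
  mul_ne_zero (mul_ne_zero two_ne_zero (Complex.ofReal_ne_zero.mpr Real.pi_ne_zero)) I_ne_zero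

lemma ramd_iter (e : ℚ) (Fq Rq : ℂ → ℂ) (hRd : DifferentiableOn ℂ Rq (Metric.ball 0 1))
    (hrep : ∀ τ ∈ UHP, Fq τ = ee e τ * Rq (qq τ)) (n : ℕ) :
    ∃ Rn : ℂ → ℂ, DifferentiableOn ℂ Rn (Metric.ball 0 1) ∧ Rn 0 = (e:ℂ)^n * Rq 0 ∧
      ∀ τ ∈ UHP, (ramD^[n] Fq) τ = ee e τ * Rn (qq τ) := by
  induction n with
  | zero => exact ⟨Rq, hRd, by simp, by simpa using hrep⟩
  | succ n ihn =>
    obtain ⟨Rn, hRnd, hRn0, hrepn⟩ := ihn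
    have hRn'd : DifferentiableOn ℂ (deriv Rn) (Metric.ball 0 1) :=
      ((hRnd.analyticOnNhd Metric.isOpen_ball).deriv).differentiableOn
    refine ⟨fun z => (e:ℂ) * Rn z + z * deriv Rn z,
      (hRnd.const_mul _).add (differentiableOn_id.mul hRn'd), by simp [hRn0]; ring, ?_⟩
    intro τ hτ
    rw [Function.iterate_succ_apply']
    show (2 * (Real.pi:ℂ) * I)⁻¹ * deriv (ramD^[n] Fq) τ = _
    have hEq : (ramD^[n] Fq) =ᶠ[𝓝 τ] fun σ => ee e σ * Rn (qq σ) :=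
      Filter.eventuallyEq_of_mem (uhp_open.mem_nhds hτ) (fun σ hσ => hrepn σ hσ)
    rw [hEq.deriv_eq]
    have dE : HasDerivAt (fun σ : ℂ => ee e σ)
        (2 * (Real.pi:ℂ) * I * (e:ℂ) * ee e τ) τ := by
      have h1 : HasDerivAt (fun σ : ℂ => 2 * (Real.pi:ℂ) * I * (e:ℂ) * σ)
          (2 * (Real.pi:ℂ) * I * (e:ℂ)) τ := by
        simpa using (hasDerivAt_id τ).const_mul (2 * (Real.pi:ℂ) * I * (e:ℂ))
      have := h1.cexp
      simpa [ee, mul_comm] using this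
    have dQ : HasDerivAt qq (2 * (Real.pi:ℂ) * I * qq τ) τ := by
      have h1 : HasDerivAt (fun σ : ℂ => 2 * (Real.pi:ℂ) * I * σ)
          (2 * (Real.pi:ℂ) * I) τ := by
        simpa using (hasDerivAt_id τ).const_mul (2 * (Real.pi:ℂ) * I)
      have h2 := h1.cexp
      show HasDerivAt (fun σ : ℂ => Complex.exp (2 * (Real.pi:ℂ) * I * σ))
        (2 * (Real.pi:ℂ) * I * qq τ) τ
      have h3 : 2 * (Real.pi:ℂ) * I * qq τ =
          Complex.exp (2 * (Real.pi:ℂ) * I * τ) * (2 * (Real.pi:ℂ) * I) := by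
        rw [qq]; ring
      rw [h3]
      exact h2
    have dR : HasDerivAt Rn (deriv Rn (qq τ)) (qq τ) :=
      (hRnd.differentiableAt (Metric.isOpen_ball.mem_nhds (qq_mem hτ))).hasDerivAt
    have dRQ : HasDerivAt (fun σ => Rn (qq σ))
        (deriv Rn (qq τ) * (2 * (Real.pi:ℂ) * I * qq τ)) τ := by
      have := dR.comp τ dQ
      simpa [Function.comp_def] using this
    have dF : HasDerivAt (fun σ => ee e σ * Rn (qq σ))
        (2 * (Real.pi:ℂ) * I * (e:ℂ) * ee e τ * Rn (qq τ) +
          ee e τ * (deriv Rn (qq τ) * (2 * (Real.pi:ℂ) * I * qq τ))) τ := dE.mul dRQ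
    rw [dF.deriv]
    have hπ : (Real.pi:ℂ) ≠ 0 := Complex.ofReal_ne_zero.mpr Real.pi_ne_zero
    have hI : I ≠ 0 := I_ne_zero
    field_simp

lemma diffOn_prod {ι : Type*} (s : Finset ι) (F : ι → ℂ → ℂ)
    (h : ∀ i ∈ s, DifferentiableOn ℂ (F i) (Metric.ball 0 1)) :
    DifferentiableOn ℂ (fun z => ∏ i ∈ s, F i z) (Metric.ball 0 1) := by
  classical
  induction s using Finset.induction with
  | empty => simpa using (differentiableOn_const (1:ℂ))
  | @insert a s' hni ih =>
    simp only [Finset.prod_insert hni]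
    exact (h a (Finset.mem_insert_self a s')).mul
      (ih fun i hi => h i (Finset.mem_insert_of_mem hi))

lemma prod_pairs {k : ℕ} (F : Fin k → Fin k → ℂ) :
    ∏ p ∈ Finset.univ.filter (fun p : Fin k × Fin k => p.1 < p.2), F p.1 p.2 =
      ∏ i, ∏ j ∈ Finset.Ioi i, F i j := by
  rw [Finset.prod_filter]
  rw [← Finset.univ_product_univ, Finset.prod_product]
  apply Finset.prod_congr rfl
  intro i _
  rw [← Finset.prod_filter]
  congr 1
  ext j
  simp [Finset.mem_Ioi]


end Stmt0

open Stmt0 in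
/-- given linearly independent `f₁,…,f_k : ℍ → ℂ` of the form
`f_i(τ) = e^{2πi h_i τ} g_i(e^{2πiτ})` with `h_i ∈ ℚ` and `g_i` holomorphic on the
open unit disk, their span admits a basis `f̄_i(τ) = e^{2πi h̄_i τ} ḡ_i(e^{2πiτ})`
with `ḡ_i(0) ≠ 0` and `h̄₁ < ⋯ < h̄_k`; the `h̄_i` are uniquely determined; and the
Wronskian `W_{(q d/dq)}(f̄₁,…,f̄_k)` equals `e^{2πi(∑h̄_i)τ} u(e^{2πiτ})` with `u`
holomorphic on the unit disk and `u(0) = ±∏_{i<j}(h̄_j − h̄_i) ≠ 0`; in particular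
its order of vanishing at `i∞` is `∑ h̄_i`. -/
theorem stmt_0 (k : ℕ) (hk : 0 < k)
    (f : Fin k → ℂ → ℂ) (h : Fin k → ℚ) (g : Fin k → ℂ → ℂ)
    (hg : ∀ i, DifferentiableOn ℂ (g i) (Metric.ball 0 1))
    (hf : ∀ i, ∀ τ ∈ UHP, f i τ =
      Complex.exp (2 * (Real.pi : ℂ) * I * (h i : ℂ) * τ) *
        g i (Complex.exp (2 * (Real.pi : ℂ) * I * τ)))
    (hli : LinearIndependent ℂ fun i => UHP.restrict (f i)) :
    ∃ (fb : Fin k → ℂ → ℂ) (hb : Fin k → ℚ) (gb : Fin k → ℂ → ℂ),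
      StrictMono hb ∧
      (∀ i, DifferentiableOn ℂ (gb i) (Metric.ball 0 1)) ∧
      (∀ i, gb i 0 ≠ 0) ∧
      (∀ i, ∀ τ ∈ UHP, fb i τ =
        Complex.exp (2 * (Real.pi : ℂ) * I * (hb i : ℂ) * τ) *
          gb i (Complex.exp (2 * (Real.pi : ℂ) * I * τ))) ∧
      Submodule.span ℂ (Set.range fun i => UHP.restrict (fb i)) =
        Submodule.span ℂ (Set.range fun i => UHP.restrict (f i)) ∧
      (∀ (fb' : Fin k → ℂ → ℂ) (hb' : Fin k → ℚ) (gb' : Fin k → ℂ → ℂ),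
        StrictMono hb' →
        (∀ i, DifferentiableOn ℂ (gb' i) (Metric.ball 0 1)) →
        (∀ i, gb' i 0 ≠ 0) →
        (∀ i, ∀ τ ∈ UHP, fb' i τ =
          Complex.exp (2 * (Real.pi : ℂ) * I * (hb' i : ℂ) * τ) *
            gb' i (Complex.exp (2 * (Real.pi : ℂ) * I * τ))) →
        Submodule.span ℂ (Set.range fun i => UHP.restrict (fb' i)) =
          Submodule.span ℂ (Set.range fun i => UHP.restrict (f i)) →
        hb' = hb) ∧
      ∃ u : ℂ → ℂ,
        DifferentiableOn ℂ u (Metric.ball 0 1) ∧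
        (u 0 = ∏ p ∈ Finset.univ.filter (fun p : Fin k × Fin k => p.1 < p.2),
            ((hb p.2 : ℂ) - (hb p.1 : ℂ)) ∨
         u 0 = -∏ p ∈ Finset.univ.filter (fun p : Fin k × Fin k => p.1 < p.2),
            ((hb p.2 : ℂ) - (hb p.1 : ℂ))) ∧
        u 0 ≠ 0 ∧
        ∀ τ ∈ UHP,
          Matrix.det (Matrix.of fun i j : Fin k => (ramD^[(i : ℕ)] (fb j)) τ) =
            Complex.exp (2 * (Real.pi : ℂ) * I * ((∑ i, hb i : ℚ) : ℂ) * τ) *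
              u (Complex.exp (2 * (Real.pi : ℂ) * I * τ)) := by
  classical
  set V0 : Submodule ℂ (↥UHP → ℂ) :=
    Submodule.span ℂ (Set.range fun i => UHP.restrict (f i)) with hV0
  have hf' : ∀ i, ∀ τ ∈ UHP, f i τ = ee (h i) τ * g i (qq τ) := hf
  -- initial normalization
  have hgne : ∀ i, (Metric.ball (0:ℂ) 1).restrict (g i) ≠ 0 := by
    intro i h0
    apply hli.ne_zero i
    funext τ
    have hz : g i (qq ↑τ) = 0 := congrFun h0 ⟨_, qq_mem τ.2⟩
    show f i ↑τ = 0
    rw [hf' i ↑τ τ.2, hz, mul_zero]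
  have hfac0 : ∀ i, ∃ o : ℕ, ∃ Rr : ℂ → ℂ,
      DifferentiableOn ℂ Rr (Metric.ball 0 1) ∧ Rr 0 ≠ 0 ∧
      ∀ z ∈ Metric.ball (0:ℂ) 1, g i z = z ^ o * Rr z :=
    fun i => factor (hg i) (hgne i)
  choose o R hRd hR0 hfacg using hfac0
  set h1 : Fin k → ℚ := fun i => h i + o i with hh1
  have hrep1 : ∀ i, ∀ τ ∈ UHP, f i τ = ee (h1 i) τ * R i (qq τ) := by
    intro i τ hτ
    rw [hf' i τ hτ, hfacg i (qq τ) (qq_mem hτ), hh1, ee_add_nat]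
    ring
  -- finiteness of the set of achievable exponents, and the bound B
  have hfinE : {e : ℚ | ∃ v ∈ V0, HasExp e v}.Finite := by
    by_contra hinf
    have hinf' : {e : ℚ | ∃ v ∈ V0, HasExp e v}.Infinite := hinf
    obtain ⟨t, hts, htc⟩ := hinf'.exists_subset_card_eq (k+1)
    have hmem : ∀ s : Fin (k+1), (t.orderEmbOfFin htc) s ∈ {e : ℚ | ∃ v ∈ V0, HasExp e v} :=
      fun s => hts (Finset.orderEmbOfFin_mem t htc s)
    choose v hvV hvE using hmem
    have hind : LinearIndependent ℂ v :=
      hasExp_linind _ (t.orderEmbOfFin htc).injective v hvE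
    have hindV : LinearIndependent ℂ (fun s => (⟨v s, hvV s⟩ : V0)) :=
      LinearIndependent.of_comp V0.subtype hind
    haveI : FiniteDimensional ℂ V0 := FiniteDimensional.span_of_finite ℂ (Set.finite_range _)
    have hcard := hindV.fintype_card_le_finrank
    have hfr : Module.finrank ℂ V0 = k := by
      rw [hV0, finrank_span_eq_card hli, Fintype.card_fin]
    rw [hfr, Fintype.card_fin] at hcard
    omega
  obtain ⟨B, hBub⟩ := hfinE.bddAbove
  have hB : ∀ (e' : ℚ) (v : ↥UHP → ℂ), v ∈ V0 → HasExp e' v → e' ≤ B :=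
    fun e' v hv he => hBub ⟨v, hv, he⟩
  -- run the echelonization loop
  obtain ⟨F', h', R', hinj', hR'd, hR'0, hrep', hspan'⟩ :=
    mainloop k V0 B hB (Nat.ceil (∑ i, (B - h1 i)) + 1) f h1 R hRd hR0 hrep1 hV0.symm hli
      (Nat.lt_succ_self _)
  -- sort and normalize
  set σ : Equiv.Perm (Fin k) := Tuple.sort h' with hσ
  have hbstrict : StrictMono (fun i => h' (σ i)) :=
    (Tuple.monotone_sort h').strictMono_of_injective (hinj'.comp σ.injective)
  set hb : Fin k → ℚ := fun i => h' (σ i) with hhb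
  set gb : Fin k → ℂ → ℂ := fun i z => (R' (σ i) 0)⁻¹ * R' (σ i) z with hgb
  set fb : Fin k → ℂ → ℂ := fun i τ => (R' (σ i) 0)⁻¹ * F' (σ i) τ with hfb
  have hgbd : ∀ i, DifferentiableOn ℂ (gb i) (Metric.ball 0 1) :=
    fun i => (hR'd _).const_mul _
  have hgb1 : ∀ i, gb i 0 = 1 := fun i => inv_mul_cancel₀ (hR'0 (σ i))
  have hgb0 : ∀ i, gb i 0 ≠ 0 := fun i => by rw [hgb1 i]; exact one_ne_zero
  have hrepb : ∀ i, ∀ τ ∈ UHP, fb i τ = ee (hb i) τ * gb i (qq τ) := by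
    intro i τ hτ
    rw [hfb, hgb, hhb]
    simp only
    rw [hrep' (σ i) τ hτ]
    ring
  have hspanb : Submodule.span ℂ (Set.range fun i => UHP.restrict (fb i)) = V0 := by
    apply le_antisymm
    · rw [Submodule.span_le]
      rintro x ⟨t, rfl⟩
      beta_reduce
      have heq : UHP.restrict (fb t) = (R' (σ t) 0)⁻¹ • UHP.restrict (F' (σ t)) := rfl
      rw [heq]
      exact Submodule.smul_mem _ _ (hspan' ▸ Submodule.subset_span ⟨σ t, rfl⟩)
    · rw [← hspan', Submodule.span_le]
      rintro x ⟨t, rfl⟩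
      beta_reduce
      have heq : UHP.restrict (F' t) = (R' t 0) • UHP.restrict (fb (σ.symm t)) := by
        funext τ
        show F' t ↑τ = R' t 0 * fb (σ.symm t) ↑τ
        rw [hfb]
        simp only [Equiv.apply_symm_apply]
        rw [mul_inv_cancel_left₀ (hR'0 t)]
      rw [heq]
      exact Submodule.smul_mem _ _ (Submodule.subset_span ⟨σ.symm t, rfl⟩)
  -- the uniqueness clause
  have huniq : ∀ (fb' : Fin k → ℂ → ℂ) (hb' : Fin k → ℚ) (gb' : Fin k → ℂ → ℂ),
      StrictMono hb' →
      (∀ i, DifferentiableOn ℂ (gb' i) (Metric.ball 0 1)) →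
      (∀ i, gb' i 0 ≠ 0) →
      (∀ i, ∀ τ ∈ UHP, fb' i τ =
        Complex.exp (2 * (Real.pi : ℂ) * I * (hb' i : ℂ) * τ) *
          gb' i (Complex.exp (2 * (Real.pi : ℂ) * I * τ))) →
      Submodule.span ℂ (Set.range fun i => UHP.restrict (fb' i)) = V0 →
      hb' = hb := by
    intro fb' hb' gb' hmono' hd' h0' hrep'' hspan''
    have h1 := range_hb_eq V0 fb' hb' gb' hmono'.injective hd' h0' hrep'' hspan''
    have h2 := range_hb_eq V0 fb hb gb hbstrict.injective hgbd hgb0 hrepb hspanb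
    exact strictMono_eq_of_range_eq hmono' hbstrict (h1.symm.trans h2)
  -- the Wronskian
  have hradial : ∀ (j : Fin k) (n : ℕ), ∃ Rn : ℂ → ℂ,
      DifferentiableOn ℂ Rn (Metric.ball 0 1) ∧ Rn 0 = ((hb j : ℚ):ℂ)^n * gb j 0 ∧
      ∀ τ ∈ UHP, (ramD^[n] (fb j)) τ = ee (hb j) τ * Rn (qq τ) :=
    fun j n => ramd_iter (hb j) (fb j) (gb j) (hgbd j) (hrepb j) n
  choose W hWd hW0 hWrep using hradial
  set u : ℂ → ℂ := fun z => (Matrix.of fun i j : Fin k => W j (i:ℕ) z).det with hu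
  have hueq : u = fun z => ∑ σ' : Equiv.Perm (Fin k),
      ((Equiv.Perm.sign σ' : ℤ):ℂ) * ∏ i, W i (((σ' i : Fin k)) : ℕ) z := by
    funext z
    rw [hu]
    simp only [Matrix.det_apply', Matrix.of_apply, Units.smul_def, zsmul_eq_mul]
  have hud : DifferentiableOn ℂ u (Metric.ball 0 1) := by
    rw [hueq]
    apply DifferentiableOn.fun_sum
    intro σ' _
    exact (diffOn_prod Finset.univ _ (fun i _ => hWd i _)).const_mul _
  have hu0 : u 0 = ∏ p ∈ Finset.univ.filter (fun p : Fin k × Fin k => p.1 < p.2),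
      ((hb p.2 : ℂ) - (hb p.1 : ℂ)) := by
    show (Matrix.of fun i j : Fin k => W j (i:ℕ) 0).det = _
    have hM0 : (Matrix.of fun i j : Fin k => W j (i:ℕ) 0) =
        (Matrix.vandermonde fun j => ((hb j : ℚ):ℂ)).transpose := by
      ext i j
      rw [Matrix.of_apply, hW0 j i, hgb1 j, mul_one, Matrix.transpose_apply,
        Matrix.vandermonde_apply]
    rw [hM0, Matrix.det_transpose, Matrix.det_vandermonde]
    exact (prod_pairs fun i j => ((hb j : ℂ) - (hb i : ℂ))).symm
  have hu0ne : u 0 ≠ 0 := by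
    rw [hu0]
    apply Finset.prod_ne_zero_iff.mpr
    intro p hp
    have hlt : p.1 < p.2 := (Finset.mem_filter.mp hp).2
    have : hb p.1 < hb p.2 := hbstrict hlt
    have : (hb p.1 : ℂ) ≠ (hb p.2 : ℂ) := by exact_mod_cast this.ne
    exact sub_ne_zero.mpr (Ne.symm this)
  have hdet : ∀ τ ∈ UHP,
      Matrix.det (Matrix.of fun i j : Fin k => (ramD^[(i : ℕ)] (fb j)) τ) =
        Complex.exp (2 * (Real.pi : ℂ) * I * ((∑ i, hb i : ℚ) : ℂ) * τ) * u (qq τ) := by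
    intro τ hτ
    have hdmr := Matrix.det_mul_row (fun j => ee (hb j) τ)
      (Matrix.of fun i j : Fin k => W j (i:ℕ) (qq τ))
    have hM : (Matrix.of fun i j : Fin k => (ramD^[(i : ℕ)] (fb j)) τ) =
        (Matrix.of fun i j : Fin k => (fun j' => ee (hb j') τ) j *
          (Matrix.of fun i' j' : Fin k => W j' (i':ℕ) (qq τ)) i j) := by
      ext i j
      simp only [Matrix.of_apply]
      rw [hWrep j i τ hτ]
    rw [hM, hdmr]
    have hcast : ((∑ i, hb i : ℚ) : ℂ) = ∑ i, ((hb i : ℚ) : ℂ) := by push_cast; rfl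
    have hexp : Complex.exp (2 * (Real.pi : ℂ) * I * ((∑ i, hb i : ℚ) : ℂ) * τ) =
        ∏ j, ee (hb j) τ := by
      rw [hcast, Finset.mul_sum, Finset.sum_mul, Complex.exp_sum]
      rfl
    rw [hexp]
  exact ⟨fb, hb, gb, hbstrict, hgbd, hgb0, hrepb, hspanb, huniq, u, hud, Or.inl hu0,
    hu0ne, hdet⟩
end

section
/- Let Ω ⊆ ℂ be a nonempty connected open set and let f₁, f₂ : Ω → ℂ be holomorphic functions that are linearly independent over ℂ. Then for every positive integer m, the m+1 functions f₁^i f₂^{m−i} (0 ≤ i ≤ m) are linearly independent over ℂ. -/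
open Polynomial in
/-- If `f₁, f₂` are holomorphic on a nonempty connected open set `Ω ⊆ ℂ`
and linearly independent over `ℂ` (as functions on `Ω`), then for every positive
integer `m` the `m+1` functions `f₁^i f₂^(m-i)` (`0 ≤ i ≤ m`) are linearly
independent over `ℂ`. -/
theorem stmt_2 (Ω : Set ℂ) (hΩne : Ω.Nonempty) (hΩo : IsOpen Ω) (hΩc : IsConnected Ω)
    (f₁ f₂ : ℂ → ℂ) (hf₁ : DifferentiableOn ℂ f₁ Ω) (hf₂ : DifferentiableOn ℂ f₂ Ω)
    (hli : LinearIndependent ℂ ![Ω.restrict f₁, Ω.restrict f₂])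
    (m : ℕ) (hm : 0 < m) :
    LinearIndependent ℂ (fun i : Fin (m + 1) =>
      Ω.restrict (fun z => f₁ z ^ (i : ℕ) * f₂ z ^ (m - (i : ℕ)))) := by
  classical
  rw [LinearIndependent.pair_iff] at hli
  -- `f₂` is not identically zero on `Ω`
  have hf₂ne : ∃ z ∈ Ω, f₂ z ≠ 0 := by
    by_contra h
    push_neg at h
    have h1 := (hli 0 1 (by
      ext z
      simp [Set.restrict, h z.1 z.2])).2
    exact one_ne_zero h1
  -- `f₁ - r f₂` is not identically zero on `Ω`
  have hnr : ∀ r : ℂ, ¬ Set.EqOn (fun z => f₁ z - r * f₂ z) 0 Ω := by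
    intro r hr
    have h1 := (hli 1 (-r) (by
      ext z
      have := hr z.2
      simp only [Pi.zero_apply] at this
      simp [Set.restrict, sub_eq_zero.mp this])).1
    exact one_ne_zero h1
  have hA : ∀ r : ℂ, AnalyticOnNhd ℂ (fun z => f₁ z - r * f₂ z) Ω :=
    fun r => ((hf₁.sub ((differentiableOn_const r).mul hf₂))).analyticOnNhd hΩo
  -- identity theorem: if `f₁ = r f₂` on a nonempty open subset of `Ω`, contradiction
  have keyId : ∀ r : ℂ, ∀ V : Set ℂ, IsOpen V → V.Nonempty → V ⊆ Ω →
      (∀ z ∈ V, f₁ z = r * f₂ z) → False := by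
    rintro r V hVo ⟨z₀, hz₀⟩ hVΩ hV
    apply hnr r
    apply (hA r).eqOn_zero_of_preconnected_of_eventuallyEq_zero hΩc.isPreconnected (hVΩ hz₀)
    filter_upwards [hVo.mem_nhds hz₀] with z hz
    simp [hV z hz]
  -- the set where `f₂ ≠ 0`
  set U : Set ℂ := Ω ∩ f₂ ⁻¹' {0}ᶜ with hU
  have hUo : IsOpen U := hf₂.continuousOn.isOpen_inter_preimage hΩo isOpen_compl_singleton
  have hUsub : U ⊆ Ω := Set.inter_subset_left
  have hUne : ∀ z ∈ U, f₂ z ≠ 0 := fun z hz => hz.2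
  -- ratios take infinitely many values
  have hRinf : Set.Infinite ((fun z => f₁ z / f₂ z) '' U) := by
    intro hfin
    obtain ⟨z₀, hz₀Ω, hz₀⟩ := hf₂ne
    have hz₀U : z₀ ∈ U := ⟨hz₀Ω, hz₀⟩
    set V := connectedComponentIn U z₀ with hVdef
    have hVo : IsOpen V := hUo.connectedComponentIn
    have hz₀V : z₀ ∈ V := mem_connectedComponentIn hz₀U
    have hVU : V ⊆ U := connectedComponentIn_subset U z₀
    have hg : ContinuousOn (fun z => f₁ z / f₂ z) V :=
      ((hf₁.continuousOn.mono (hVU.trans hUsub)).div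
        (hf₂.continuousOn.mono (hVU.trans hUsub)) (fun z hz => hUne z (hVU hz)))
    have himg : IsPreconnected ((fun z => f₁ z / f₂ z) '' V) :=
      isPreconnected_connectedComponentIn.image _ hg
    have himgfin : ((fun z => f₁ z / f₂ z) '' V).Finite :=
      hfin.subset (Set.image_mono hVU)
    have hsub : ((fun z => f₁ z / f₂ z) '' V).Subsingleton := by
      by_contra hns
      exact (himg.infinite_of_nontrivial (Set.not_subsingleton_iff.mp hns)) himgfin
    have hconst : ∀ z ∈ V, f₁ z / f₂ z = f₁ z₀ / f₂ z₀ := fun z hz =>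
      hsub (Set.mem_image_of_mem _ hz) (Set.mem_image_of_mem _ hz₀V)
    refine keyId (f₁ z₀ / f₂ z₀) V hVo ⟨z₀, hz₀V⟩ (hVU.trans hUsub) (fun z hz => ?_)
    have := hconst z hz
    rw [div_eq_iff (hUne z (hVU hz))] at this
    exact this
  obtain ⟨t, htsub, htcard⟩ := hRinf.exists_subset_card_eq (m + 1)
  -- main argument
  rw [Fintype.linearIndependent_iff]
  intro c hc i
  set P : ℂ[X] := ∑ i : Fin (m + 1), C (c i) * X ^ (i : ℕ) with hP
  have hdeg : P.natDegree < m + 1 := by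
    refine Nat.lt_succ_of_le (natDegree_sum_le_of_forall_le _ _ (fun j _ => ?_))
    exact (natDegree_C_mul_le _ _).trans (by simp [Fin.is_le])
  have heval : ∀ r ∈ t, P.eval r = 0 := by
    intro r hr
    obtain ⟨z, hzU, hz⟩ := htsub hr
    have hne := hUne z hzU
    have hc' := congrFun hc ⟨z, hUsub hzU⟩
    simp only [Finset.sum_apply, Pi.smul_apply, Set.restrict_apply, smul_eq_mul,
      Pi.zero_apply] at hc'
    have key : P.eval r * f₂ z ^ m = 0 := by
      rw [hP, eval_finset_sum, Finset.sum_mul, ← hc']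
      refine Finset.sum_congr rfl (fun j _ => ?_)
      rw [eval_mul, eval_C, eval_pow, eval_X, ← hz, div_pow, mul_assoc,
        div_mul_eq_mul_div, mul_div_assoc]
      show _ = c j * (f₁ z ^ (j : ℕ) * f₂ z ^ (m - (j : ℕ)))
      rw [pow_sub₀ _ hne (Fin.is_le j), div_eq_mul_inv]
    exact (mul_eq_zero.mp key).resolve_right (pow_ne_zero _ hne)
  have hP0 : P = 0 := P.eq_zero_of_natDegree_lt_card_of_eval_eq_zero' t heval (htcard ▸ hdeg)
  have := congrArg (fun q => Polynomial.coeff q (i : ℕ)) hP0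
  simp only [hP, finset_sum_coeff, coeff_C_mul, coeff_X_pow, coeff_zero, mul_ite, mul_one,
    mul_zero] at this
  rwa [Finset.sum_eq_single i (fun j _ hji => by
      simp [Fin.val_eq_val, (by simpa [eq_comm, Fin.ext_iff] using hji : ¬(i : ℕ) = (j : ℕ))])
    (fun h => absurd (Finset.mem_univ i) h), if_pos rfl] at this
end

section
/- Let Ω ⊆ ℂ be an open set, c ∈ ℂ a fixed constant, and let D denote the differential operator Df = c·(df/dz) acting on holomorphic functions on Ω. Then for any holomorphic f₁, f₂ : Ω → ℂ and any positive integer m, the Wronskian determinant satisfies W_D(f₁^m, f₁^{m−1}f₂, …, f₁f₂^{m−1}, f₂^m) = (∏_{k=1}^m k!) · (f₁·Df₂ − f₂·Df₁)^{m(m+1)/2} identically on Ω. -/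
open Finset Topology Filter

/-- The differential operator `D f = c · df/dz`. With `c = (2πi)⁻¹` and `Ω = ℍ`
this is the Ramanujan derivative `q d/dq`, `q = e^{2πiτ}`. -/
noncomputable def Dop (c : ℂ) (f : ℂ → ℂ) : ℂ → ℂ := fun z => c * deriv f z

private lemma analyticAt_deriv {f : ℂ → ℂ} {z : ℂ} (h : AnalyticAt ℂ f z) :
    AnalyticAt ℂ (deriv f) z := by
  obtain ⟨s, hs, h2⟩ := h.eventually_analyticAt.exists_mem
  exact (AnalyticOnNhd.deriv (fun w hw => h2 w hw)) z (mem_of_mem_nhds hs)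

private lemma analyticAt_itd {f : ℂ → ℂ} {z : ℂ} (h : AnalyticAt ℂ f z) (n : ℕ) :
    AnalyticAt ℂ (iteratedDeriv n f) z := by
  induction n with
  | zero => simpa using h
  | succ n ih => rw [iteratedDeriv_succ]; exact analyticAt_deriv ih

private lemma itd_const_mul {f : ℂ → ℂ} {z : ℂ} (h : AnalyticAt ℂ f z) (a : ℂ) (n : ℕ) :
    iteratedDeriv n (fun w => a * f w) z = a * iteratedDeriv n f z := by
  induction n generalizing z h with
  | zero => simp
  | succ n ih =>
    have hev : iteratedDeriv n (fun w => a * f w) =ᶠ[𝓝 z] fun w => a * iteratedDeriv n f w := by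
      filter_upwards [h.eventually_analyticAt] with w hw using ih hw
    rw [iteratedDeriv_succ, hev.deriv_eq, iteratedDeriv_succ,
      deriv_const_mul a ((analyticAt_itd h n).differentiableAt)]

private lemma itd_mul {f g : ℂ → ℂ} {z : ℂ} (hf : AnalyticAt ℂ f z) (hg : AnalyticAt ℂ g z)
    (n : ℕ) :
    iteratedDeriv n (fun w => f w * g w) z
      = ∑ k ∈ range (n + 1),
          (n.choose k : ℂ) * iteratedDeriv k f z * iteratedDeriv (n - k) g z := by
  induction n generalizing z hf hg with
  | zero => simp
  | succ n ih =>
    have hev : iteratedDeriv n (fun w => f w * g w) =ᶠ[𝓝 z]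
        fun w => ∑ k ∈ range (n + 1),
          (n.choose k : ℂ) * iteratedDeriv k f w * iteratedDeriv (n - k) g w := by
      filter_upwards [hf.eventually_analyticAt, hg.eventually_analyticAt] with w h1 h2
      exact ih h1 h2
    rw [iteratedDeriv_succ, hev.deriv_eq]
    rw [deriv_fun_sum (fun k _ => by
      exact (((analyticAt_const.mul (analyticAt_itd hf k)).mul (analyticAt_itd hg (n - k)))).differentiableAt)]
    have hterm : ∀ k ∈ range (n + 1),
        deriv (fun w => (n.choose k : ℂ) * iteratedDeriv k f w * iteratedDeriv (n - k) g w) z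
          = (n.choose k : ℂ) * iteratedDeriv (k+1) f z * iteratedDeriv (n - k) g z
            + (n.choose k : ℂ) * iteratedDeriv k f z * iteratedDeriv (n - k + 1) g z := by
      intro k _
      rw [deriv_fun_mul (c := fun w => (n.choose k : ℂ) * iteratedDeriv k f w) ((analyticAt_const.mul (analyticAt_itd hf k)).differentiableAt)
        ((analyticAt_itd hg (n-k)).differentiableAt),
        deriv_const_mul _ ((analyticAt_itd hf k).differentiableAt),
        ← iteratedDeriv_succ, ← iteratedDeriv_succ]
    rw [Finset.sum_congr rfl hterm, Finset.sum_add_distrib]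
    -- now pure algebra with a_i := itd i f z, b_i := itd i g z
    set a : ℕ → ℂ := fun i => iteratedDeriv i f z
    set b : ℕ → ℂ := fun i => iteratedDeriv i g z
    have h1 : ∀ k ∈ range (n+1), (n.choose k : ℂ) * a k * b (n - k + 1)
        = (n.choose k : ℂ) * a k * b (n + 1 - k) := by
      intro k hk
      have : k ≤ n := by simpa using Nat.lt_succ_iff.mp (mem_range.mp hk)
      rw [Nat.succ_sub this]
    rw [Finset.sum_congr rfl h1]
    rw [Finset.sum_range_succ' (fun k => ((n+1).choose k : ℂ) * a k * b (n + 1 - k)) (n+1)]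
    have h2 : ∀ k ∈ range (n+1), ((n+1).choose (k+1) : ℂ) * a (k+1) * b (n + 1 - (k+1))
        = (n.choose k : ℂ) * a (k+1) * b (n - k) + (n.choose (k+1) : ℂ) * a (k+1) * b (n - k) := by
      intro k hk
      rw [Nat.choose_succ_succ]
      have : n + 1 - (k + 1) = n - k := by omega
      rw [this]
      push_cast
      ring
    rw [Finset.sum_congr rfl h2, Finset.sum_add_distrib]
    have h3 : ∑ k ∈ range (n+1), (n.choose (k+1) : ℂ) * a (k+1) * b (n - k)
        = ∑ k ∈ range (n+1), (n.choose k : ℂ) * a k * b (n + 1 - k)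
          - (n.choose 0 : ℂ) * a 0 * b (n + 1) := by
      rw [Finset.sum_range_succ' (fun k => (n.choose k : ℂ) * a k * b (n + 1 - k)) n]
      have : ∀ k ∈ range n, (n.choose (k+1) : ℂ) * a (k+1) * b (n + 1 - (k+1))
          = (n.choose (k+1) : ℂ) * a (k+1) * b (n - k) := by
        intro k hk; congr 2; omega
      rw [Finset.sum_congr rfl this, Finset.sum_range_succ
        (fun k => (n.choose (k+1) : ℂ) * a (k+1) * b (n - k)) n]
      simp [Nat.choose_succ_self]
    rw [h3]
    simp only [Nat.choose_zero_right, Nat.cast_one, one_mul, Nat.sub_zero, Nat.choose_self]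
    ring

private lemma det_factor {n : ℕ} (φ : ℂ → ℂ) (g : Fin n → ℂ → ℂ) {z : ℂ}
    (hφ : AnalyticAt ℂ φ z) (hg : ∀ j, AnalyticAt ℂ (g j) z) :
    Matrix.det (Matrix.of fun i j : Fin n => iteratedDeriv i (fun w => φ w * g j w) z)
      = φ z ^ n * Matrix.det (Matrix.of fun i j : Fin n => iteratedDeriv i (g j) z) := by
  have key : (Matrix.of fun i j : Fin n => iteratedDeriv i (fun w => φ w * g j w) z)
      = (Matrix.of fun i k : Fin n =>
            ((i : ℕ).choose (k : ℕ) : ℂ) * iteratedDeriv ((i : ℕ) - (k : ℕ)) φ z) *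
        (Matrix.of fun k j : Fin n => iteratedDeriv (k : ℕ) (g j) z) := by
    ext i j
    rw [Matrix.mul_apply]
    have hcomm : (fun w => φ w * g j w) = fun w => g j w * φ w := by
      funext w; ring
    rw [Matrix.of_apply, hcomm, itd_mul (hg j) hφ]
    simp only [Matrix.of_apply]
    have hB : (∑ k : Fin n, ((i:ℕ).choose (k:ℕ) : ℂ) * iteratedDeriv ((i:ℕ) - (k:ℕ)) φ z
          * iteratedDeriv (k:ℕ) (g j) z)
        = ∑ k ∈ range n, ((i:ℕ).choose k : ℂ) * iteratedDeriv ((i:ℕ) - k) φ z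
          * iteratedDeriv k (g j) z :=
      Fin.sum_univ_eq_sum_range
        (fun k => ((i:ℕ).choose k : ℂ) * iteratedDeriv ((i:ℕ) - k) φ z
          * iteratedDeriv k (g j) z) n
    rw [hB, ← Finset.sum_subset (Finset.range_subset_range.mpr (by omega : (i:ℕ) + 1 ≤ n))
      (fun k _ hk2 => by
        have : (i:ℕ) < k := by simp only [mem_range] at *; omega
        simp [Nat.choose_eq_zero_of_lt this])]
    exact Finset.sum_congr rfl fun k _ => by ring
  rw [key, Matrix.det_mul]
  congr 1
  rw [Matrix.det_of_lowerTriangular _ (by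
    intro i j hij
    have : (j : ℕ) < (i : ℕ) → ((i:ℕ).choose (j:ℕ) : ℂ) * iteratedDeriv ((i:ℕ)-(j:ℕ)) φ z
        = ((i:ℕ).choose (j:ℕ) : ℂ) * iteratedDeriv ((i:ℕ)-(j:ℕ)) φ z := fun _ => rfl
    simp only [Matrix.of_apply]
    have hji : (i : ℕ) < (j : ℕ) := hij
    rw [Nat.choose_eq_zero_of_lt hji]
    simp)]
  simp [Nat.choose_self]

private lemma itd_zero_fun (n : ℕ) : iteratedDeriv n (fun _ : ℂ => (0:ℂ)) = fun _ => 0 := by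
  induction n with
  | zero => simp
  | succ n ih => rw [iteratedDeriv_succ, ih]; simp

private lemma prod_succ_fac (m : ℕ) :
    (∏ j : Fin (m + 1), (((j : ℕ) : ℂ) + 1)) = ((m + 1).factorial : ℂ) := by
  induction m with
  | zero => simp [Nat.factorial]
  | succ k ih =>
    rw [Fin.prod_univ_castSucc]
    simp only [Fin.coe_castSucc, Fin.val_last]
    rw [ih, Nat.factorial_succ (k+1)]
    push_cast
    ring

private lemma tri_succ (m : ℕ) : (m + 1) + m * (m + 1) / 2 = (m + 1) * (m + 1 + 1) / 2 := by
  obtain ⟨t, ht⟩ := Nat.even_mul_succ_self m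
  have h2 : (m + 1) * (m + 1 + 1) = m * (m + 1) + 2 * (m + 1) := by ring
  omega

private lemma det_powers (m : ℕ) (u : ℂ → ℂ) {z : ℂ} (hu : AnalyticAt ℂ u z) :
    Matrix.det (Matrix.of fun i j : Fin (m + 1) =>
        iteratedDeriv (i : ℕ) (fun w => u w ^ (j : ℕ)) z)
      = (∏ k ∈ Finset.Icc 1 m, (Nat.factorial k : ℂ)) *
          deriv u z ^ (m * (m + 1) / 2) := by
  induction m generalizing z hu with
  | zero => simp
  | succ m ih =>
    set M : Matrix (Fin (m + 2)) (Fin (m + 2)) ℂ :=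
      Matrix.of fun i j : Fin (m + 2) => iteratedDeriv (i : ℕ) (fun w => u w ^ (j : ℕ)) z with hM
    -- first column is (1,0,...,0)
    have hcol0 : ∀ i : Fin (m + 2), M i 0 = if i = 0 then 1 else 0 := by
      intro i
      have h1 : (fun w => u w ^ ((0 : Fin (m+2)) : ℕ)) = fun _ => (1 : ℂ) := by
        funext w; simp
      by_cases hi : i = 0
      · subst hi; simp [hM, h1]
      · simp only [hM, Matrix.of_apply, h1, hi, if_false]
        have hne : (i : ℕ) ≠ 0 := fun h => hi (Fin.ext h)
        obtain ⟨k, hk⟩ : ∃ k, (i : ℕ) = k + 1 := ⟨(i : ℕ) - 1, by omega⟩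
        rw [hk, iteratedDeriv_succ', deriv_const']
        rw [itd_zero_fun]
    have hexp : M.det = Matrix.det (M.submatrix Fin.succ Fin.succ) := by
      rw [Matrix.det_succ_column_zero]
      rw [Finset.sum_eq_single 0]
      · simp [hcol0, Fin.succAbove_zero]
      · intro i _ hi
        rw [hcol0 i]
        simp [hi]
      · simp
    rw [hexp]
    -- submatrix entries
    have hsub : M.submatrix Fin.succ Fin.succ
        = Matrix.of fun i j : Fin (m + 1) =>
            (((j : ℕ) : ℂ) + 1) *
              iteratedDeriv (i : ℕ) (fun w => deriv u w * u w ^ (j : ℕ)) z := by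
      ext i j
      simp only [Matrix.submatrix_apply, hM, Matrix.of_apply, Fin.val_succ]
      rw [iteratedDeriv_succ']
      have hev : deriv (fun w => u w ^ ((j : ℕ) + 1)) =ᶠ[𝓝 z]
          fun w => (((j : ℕ) : ℂ) + 1) * (deriv u w * u w ^ (j : ℕ)) := by
        filter_upwards [hu.eventually_analyticAt] with w hw
        rw [show (fun w => u w ^ ((j : ℕ) + 1)) = u ^ ((j : ℕ) + 1) from rfl, (hw.differentiableAt.hasDerivAt.pow _).deriv]
        push_cast
        ring
      rw [hev.iteratedDeriv_eq]
      exact itd_const_mul ((analyticAt_deriv hu).mul (hu.pow _)) _ _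
    rw [hsub]
    have : (Matrix.of fun i j : Fin (m + 1) =>
          (((j : ℕ) : ℂ) + 1) *
            iteratedDeriv (i : ℕ) (fun w => deriv u w * u w ^ (j : ℕ)) z)
        = Matrix.of fun i j : Fin (m + 1) => (fun j' : Fin (m+1) => (((j' : ℕ) : ℂ) + 1)) j *
            (Matrix.of fun i' j' : Fin (m + 1) =>
              iteratedDeriv (i' : ℕ) (fun w => deriv u w * u w ^ (j' : ℕ)) z) i j := rfl
    rw [this, Matrix.det_mul_row]
    rw [det_factor (fun w => deriv u w) (fun j : Fin (m+1) => fun w => u w ^ (j : ℕ))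
      (analyticAt_deriv hu) (fun j => hu.pow _)]
    rw [ih hu]
    rw [prod_succ_fac m]
    have hfac : ((m + 1).factorial : ℂ) * (∏ k ∈ Finset.Icc 1 m, (Nat.factorial k : ℂ))
        = ∏ k ∈ Finset.Icc 1 (m + 1), (Nat.factorial k : ℂ) := by
      rw [Finset.prod_Icc_succ_top (by omega : 1 ≤ m + 1)]
      ring
    have hexp2 : (m + 1) + m * (m + 1) / 2 = (m + 1) * (m + 1 + 1) / 2 := tri_succ m
    calc ((m + 1).factorial : ℂ) * (deriv u z ^ (m + 1) *
          ((∏ k ∈ Finset.Icc 1 m, (Nat.factorial k : ℂ)) * deriv u z ^ (m * (m + 1) / 2)))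
        = (((m + 1).factorial : ℂ) * ∏ k ∈ Finset.Icc 1 m, (Nat.factorial k : ℂ)) *
            (deriv u z ^ (m + 1) * deriv u z ^ (m * (m + 1) / 2)) := by ring
      _ = _ := by rw [hfac, ← pow_add, hexp2]

private lemma core_ne {f₁ f₂ : ℂ → ℂ} {z : ℂ} (h₁ : AnalyticAt ℂ f₁ z) (h₂ : AnalyticAt ℂ f₂ z)
    (m : ℕ) (hne : f₁ z ≠ 0) :
    Matrix.det (Matrix.of fun i j : Fin (m + 1) =>
        iteratedDeriv (i : ℕ) (fun w => f₁ w ^ (m - (j : ℕ)) * f₂ w ^ (j : ℕ)) z)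
      = (∏ k ∈ Finset.Icc 1 m, (Nat.factorial k : ℂ)) *
          (f₁ z * deriv f₂ z - f₂ z * deriv f₁ z) ^ (m * (m + 1) / 2) := by
  set u : ℂ → ℂ := fun w => f₂ w / f₁ w with hu_def
  have hu : AnalyticAt ℂ u z := h₂.div h₁ hne
  have hevent : ∀ᶠ w in 𝓝 z, f₁ w ≠ 0 := h₁.continuousAt.eventually_ne hne
  have hcol : ∀ j : Fin (m + 1),
      (fun w => f₁ w ^ (m - (j : ℕ)) * f₂ w ^ (j : ℕ)) =ᶠ[𝓝 z]
        fun w => f₁ w ^ m * u w ^ (j : ℕ) := by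
    intro j
    filter_upwards [hevent] with w hw
    have hj : (j : ℕ) ≤ m := Nat.lt_succ_iff.mp j.isLt
    have e1 : f₁ w ^ m = f₁ w ^ (m - (j : ℕ)) * f₁ w ^ (j : ℕ) := by
      rw [← pow_add, Nat.sub_add_cancel hj]
    rw [hu_def, div_pow, e1]
    field_simp
  have hdet : Matrix.det (Matrix.of fun i j : Fin (m + 1) =>
        iteratedDeriv (i : ℕ) (fun w => f₁ w ^ (m - (j : ℕ)) * f₂ w ^ (j : ℕ)) z)
      = Matrix.det (Matrix.of fun i j : Fin (m + 1) =>
        iteratedDeriv (i : ℕ) (fun w => f₁ w ^ m * u w ^ (j : ℕ)) z) := by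
    congr 1
    ext i j
    exact (hcol j).iteratedDeriv_eq _
  rw [hdet, det_factor (fun w => f₁ w ^ m) (fun j : Fin (m + 1) => fun w => u w ^ (j : ℕ))
    (h₁.pow m) (fun j => hu.pow _), det_powers m u hu]
  have hder : deriv u z = (f₁ z * deriv f₂ z - f₂ z * deriv f₁ z) / f₁ z ^ 2 := by
    rw [hu_def, deriv_fun_div h₂.differentiableAt h₁.differentiableAt hne]
    ring_nf
  set W : ℂ := f₁ z * deriv f₂ z - f₂ z * deriv f₁ z
  set T : ℕ := m * (m + 1) / 2 with hT
  have h2T : 2 * T = m * (m + 1) := by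
    obtain ⟨t, ht⟩ := Nat.even_mul_succ_self m
    omega
  have hp : (f₁ z ^ m) ^ (m + 1) = (f₁ z ^ 2) ^ T := by
    rw [← pow_mul, ← pow_mul, h2T]
  rw [hder, hp]
  rw [show (f₁ z ^ 2) ^ T * ((∏ k ∈ Finset.Icc 1 m, (Nat.factorial k : ℂ)) * (W / f₁ z ^ 2) ^ T)
      = (∏ k ∈ Finset.Icc 1 m, (Nat.factorial k : ℂ)) * (f₁ z ^ 2 * (W / f₁ z ^ 2)) ^ T by
    rw [mul_pow]; ring]
  rw [mul_div_cancel₀ _ (pow_ne_zero 2 hne)]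

private lemma continuousAt_det {n : ℕ} (E : Fin n → Fin n → ℂ → ℂ) {z : ℂ}
    (hE : ∀ i j, ContinuousAt (E i j) z) :
    ContinuousAt (fun w => Matrix.det (Matrix.of fun i j => E i j w)) z := by
  simp only [Matrix.det_apply', Matrix.of_apply]
  exact tendsto_finset_sum _ fun σ _ =>
    tendsto_const_nhds.mul (tendsto_finset_prod _ fun i _ => hE (σ i) i)

private lemma core {Ω : Set ℂ} (hΩo : IsOpen Ω) {f₁ f₂ : ℂ → ℂ}
    (hf₁ : AnalyticOnNhd ℂ f₁ Ω) (hf₂ : AnalyticOnNhd ℂ f₂ Ω) (m : ℕ) (hm : 0 < m)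
    {z : ℂ} (hz : z ∈ Ω) :
    Matrix.det (Matrix.of fun i j : Fin (m + 1) =>
        iteratedDeriv (i : ℕ) (fun w => f₁ w ^ (m - (j : ℕ)) * f₂ w ^ (j : ℕ)) z)
      = (∏ k ∈ Finset.Icc 1 m, (Nat.factorial k : ℂ)) *
          (f₁ z * deriv f₂ z - f₂ z * deriv f₁ z) ^ (m * (m + 1) / 2) := by
  have hT1 : 1 ≤ m * (m + 1) / 2 := by
    have h2 : 1 * 2 ≤ m * (m + 1) := Nat.mul_le_mul hm (by omega)
    omega
  by_cases hne : f₁ z ≠ 0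
  · exact core_ne (hf₁ z hz) (hf₂ z hz) m hne
  push_neg at hne
  rcases (hf₁ z hz).eventually_eq_zero_or_eventually_ne_zero with hev | hev
  · -- f₁ vanishes near z
    have hcol : ∀ i : Fin (m + 1),
        (Matrix.of fun i j : Fin (m + 1) =>
          iteratedDeriv (i : ℕ) (fun w => f₁ w ^ (m - (j : ℕ)) * f₂ w ^ (j : ℕ)) z) i 0 = 0 := by
      intro i
      have h0 : (fun w => f₁ w ^ (m - ((0 : Fin (m+1)) : ℕ)) * f₂ w ^ ((0 : Fin (m+1)) : ℕ))
          =ᶠ[𝓝 z] fun _ => (0 : ℂ) := by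
        filter_upwards [hev] with w hw
        simp only [Fin.val_zero, pow_zero, mul_one, Nat.sub_zero, hw]
        exact zero_pow (by omega)
      simp only [Matrix.of_apply]
      rw [h0.iteratedDeriv_eq, itd_zero_fun]
    rw [Matrix.det_eq_zero_of_column_eq_zero 0 hcol]
    have hev' : f₁ =ᶠ[𝓝 z] fun _ => (0 : ℂ) := hev
    have hd1 : deriv f₁ z = 0 := by
      rw [hev'.deriv_eq]; simp
    rw [hd1, hne]
    simp [zero_pow (show m * (m + 1) / 2 ≠ 0 by omega)]
  · -- isolated zero: use continuity
    set F : ℂ → ℂ := fun w => Matrix.det (Matrix.of fun i j : Fin (m + 1) =>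
        iteratedDeriv (i : ℕ) (fun x => f₁ x ^ (m - (j : ℕ)) * f₂ x ^ (j : ℕ)) w) with hF
    set G : ℂ → ℂ := fun w => (∏ k ∈ Finset.Icc 1 m, (Nat.factorial k : ℂ)) *
          (f₁ w * deriv f₂ w - f₂ w * deriv f₁ w) ^ (m * (m + 1) / 2) with hG
    show F z = G z
    have hΩev : ∀ᶠ w in 𝓝 z, w ∈ Ω := hΩo.mem_nhds hz
    have hFG : F =ᶠ[𝓝[≠] z] G := by
      filter_upwards [hev, hΩev.filter_mono nhdsWithin_le_nhds] with w hw hΩw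
      exact core_ne (hf₁ w hΩw) (hf₂ w hΩw) m hw
    have hFc : ContinuousAt F z := by
      apply continuousAt_det
      intro i j
      exact (analyticAt_itd (((hf₁ z hz).pow _).mul ((hf₂ z hz).pow _)) _).continuousAt
    have hGc : ContinuousAt G z := by
      apply continuousAt_const.mul
      exact (((hf₁ z hz).continuousAt.mul
          (analyticAt_deriv (hf₂ z hz)).continuousAt).sub
        ((hf₂ z hz).continuousAt.mul
          (analyticAt_deriv (hf₁ z hz)).continuousAt)).pow _
    exact tendsto_nhds_unique (hFc.continuousWithinAt.tendsto)
      ((hGc.continuousWithinAt.tendsto).congr' hFG.symm)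

private lemma Dop_iter (c : ℂ) (f : ℂ → ℂ) (n : ℕ) :
    (Dop c)^[n] f = fun z => c ^ n * iteratedDeriv n f z := by
  induction n with
  | zero => simp
  | succ n ih =>
    rw [Function.iterate_succ_apply', ih]
    funext z
    simp only [Dop]
    rw [deriv_const_mul_field, iteratedDeriv_succ]
    ring

/-- For holomorphic `f₁, f₂` on an open set `Ω ⊆ ℂ` and `D = c·d/dz`,
the Wronskian of `f₁^m, f₁^{m-1}f₂, …, f₂^m` (with respect to `D`) equals
`(∏_{k=1}^m k!) · (f₁·Df₂ − f₂·Df₁)^{m(m+1)/2}` identically on `Ω`. -/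
theorem stmt_3 (Ω : Set ℂ) (hΩo : IsOpen Ω) (c : ℂ)
    (f₁ f₂ : ℂ → ℂ) (hf₁ : DifferentiableOn ℂ f₁ Ω) (hf₂ : DifferentiableOn ℂ f₂ Ω)
    (m : ℕ) (hm : 0 < m) (z : ℂ) (hz : z ∈ Ω) :
    Matrix.det (Matrix.of fun i j : Fin (m + 1) =>
        ((Dop c)^[(i : ℕ)] (fun w => f₁ w ^ (m - (j : ℕ)) * f₂ w ^ (j : ℕ))) z)
      = (∏ k ∈ Finset.Icc 1 m, (Nat.factorial k : ℂ)) *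
        (f₁ z * Dop c f₂ z - f₂ z * Dop c f₁ z) ^ (m * (m + 1) / 2) := by
  have hf₁a : AnalyticOnNhd ℂ f₁ Ω := hf₁.analyticOnNhd hΩo
  have hf₂a : AnalyticOnNhd ℂ f₂ Ω := hf₂.analyticOnNhd hΩo
  have hmat : (Matrix.of fun i j : Fin (m + 1) =>
        ((Dop c)^[(i : ℕ)] (fun w => f₁ w ^ (m - (j : ℕ)) * f₂ w ^ (j : ℕ))) z)
      = Matrix.of fun i j : Fin (m + 1) => c ^ (i : ℕ) *
          (Matrix.of fun i' j' : Fin (m + 1) =>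
            iteratedDeriv (i' : ℕ) (fun w => f₁ w ^ (m - (j' : ℕ)) * f₂ w ^ (j' : ℕ)) z) i j := by
    ext i j
    rw [Matrix.of_apply, Dop_iter]
    simp
  rw [hmat, Matrix.det_mul_column (fun i : Fin (m+1) => c ^ (i : ℕ))]
  rw [core hΩo hf₁a hf₂a m hm hz]
  have hc : (∏ i : Fin (m + 1), c ^ (i : ℕ)) = c ^ (m * (m + 1) / 2) := by
    rw [Finset.prod_pow_eq_pow_sum]
    congr 1
    rw [Fin.sum_univ_eq_sum_range (fun i => i) (m + 1), Finset.sum_range_id,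
      Nat.add_sub_cancel, Nat.mul_comm]
  rw [hc]
  have hW : f₁ z * Dop c f₂ z - f₂ z * Dop c f₁ z
      = c * (f₁ z * deriv f₂ z - f₂ z * deriv f₁ z) := by
    simp only [Dop]; ring
  rw [hW, mul_pow]
  ring
end

section
/- As formal power series in q with integer coefficients: (a) G(q)·∏_{n≥1}(1−qⁿ) = ∑_{n∈ℤ} (−1)ⁿ q^{(5n²+3n)/2}, and (b) H(q)·∏_{n≥1}(1−qⁿ) = ∑_{n∈ℤ} (−1)ⁿ q^{(5n²+n)/2}. (Equivalently, ch₁ = q^{9/40}(∑_{n∈ℤ}(−1)ⁿq^{(5n²+3n)/2})/η and ch₂ = q^{1/40}(∑_{n∈ℤ}(−1)ⁿq^{(5n²+n)/2})/η.) -/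
namespace Stmt7
open Polynomial Finset LaurentPolynomial


/-- Gaussian binomial coefficient as a polynomial in `q`, via the Pascal recurrence
`qb (M+1) (k+1) = q^(k+1) * qb M (k+1) + qb M k`. -/
noncomputable def qb : ℕ → ℕ → Polynomial ℤ
  | _, 0 => 1
  | 0, _ + 1 => 0
  | M + 1, k + 1 => X ^ (k + 1) * qb M (k + 1) + qb M k

@[simp] lemma qb_zero_right (M : ℕ) : qb M 0 = 1 := by cases M <;> rfl

lemma qb_succ_succ (M k : ℕ) :
    qb (M + 1) (k + 1) = X ^ (k + 1) * qb M (k + 1) + qb M k := rfl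

lemma qb_eq_zero : ∀ {M k : ℕ}, M < k → qb M k = 0
  | 0, _ + 1, _ => rfl
  | M + 1, k + 1, h => by
    rw [qb_succ_succ, qb_eq_zero (by omega), qb_eq_zero (show M < k by omega)]
    simp

@[simp] lemma qb_diag : ∀ M : ℕ, qb M M = 1
  | 0 => rfl
  | M + 1 => by
    rw [qb_succ_succ, qb_eq_zero (Nat.lt_succ_self M), qb_diag M]
    simp

/-- `pq m = ∏_{j=1}^m (1 - q^j)`. -/
noncomputable def pq (m : ℕ) : Polynomial ℤ := ∏ j ∈ range m, (1 - X ^ (j + 1))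

@[simp] lemma pq_zero : pq 0 = 1 := by simp [pq]

lemma pq_succ (m : ℕ) : pq (m + 1) = pq m * (1 - X ^ (m + 1)) := by
  simp [pq, prod_range_succ]

/-- Key product identity: `pq B * pq (A-B) * qb A B = pq A`. -/
lemma claimD : ∀ A B : ℕ, B ≤ A → pq B * pq (A - B) * qb A B = pq A := by
  intro A
  induction A with
  | zero => intro B hB; interval_cases B; simp
  | succ A ih =>
    intro B hB
    match B with
    | 0 => simp
    | k + 1 =>
      rcases eq_or_lt_of_le hB with h | h
      · have hkA : k = A := by omega
        subst hkA; simp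
      · have hk : k + 1 ≤ A := by omega
        have h1 : A + 1 - (k + 1) = (A - (k + 1)) + 1 := by omega
        have h2 : A - k = (A - (k + 1)) + 1 := by omega
        rw [qb_succ_succ, mul_add]
        have e1 : pq (A + 1 - (k + 1)) = pq (A - (k + 1)) * (1 - X ^ (A - k)) := by
          rw [h1, pq_succ, ← h2]
        have e2 : pq (A + 1 - (k + 1)) = pq (A - k) := by congr 1; omega
        have e3 : pq (k + 1) = pq k * (1 - X ^ (k + 1)) := pq_succ k
        have t1 : pq (k + 1) * pq (A + 1 - (k + 1)) * (X ^ (k + 1) * qb A (k + 1))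
            = X ^ (k + 1) * (1 - X ^ (A - k)) * pq A := by
          rw [e1]
          linear_combination (X ^ (k + 1) * (1 - X ^ (A - k))) * ih (k + 1) hk
        have t2 : pq (k + 1) * pq (A + 1 - (k + 1)) * qb A k
            = (1 - X ^ (k + 1)) * pq A := by
          rw [e2, e3]
          linear_combination (1 - X ^ (k + 1)) * ih k (by omega)
        rw [t1, t2, pq_succ]
        have hx : (X : Polynomial ℤ) ^ (k + 1) * X ^ (A - k) = X ^ (A + 1) := by
          rw [← pow_add]; congr 1; omega
        linear_combination (-(pq A)) * hx
/-- the substitution `q ↦ T 5` into Laurent polynomials -/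
noncomputable def ψ : Polynomial ℤ →+* LaurentPolynomial ℤ :=
  eval₂RingHom (Int.castRingHom _) (T 5)

@[simp] lemma ψ_X : ψ X = T 5 := by simp [ψ]
@[simp] lemma ψ_X_pow (n : ℕ) : ψ (X ^ n) = T (5 * n) := by
  rw [map_pow, ψ_X, T_pow, mul_comm]

lemma choose_two_succ (k : ℕ) : (k + 1).choose 2 = k.choose 2 + k := by
  rw [Nat.choose_succ_succ]; simp [Nat.choose_one_right]; omega

/-- Gauss's q-binomial theorem, specialized to base `T 5`, with a free integer offset `b`. -/
lemma gauss (M : ℕ) (b : ℤ) :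
    ∏ j ∈ range M, (1 - T (b + 5 * (j : ℤ)) : LaurentPolynomial ℤ)
      = ∑ k ∈ range (M + 1),
        (-1 : LaurentPolynomial ℤ) ^ k * T (5 * (k.choose 2 : ℤ) + b * k) * ψ (qb M k) := by
  induction M generalizing b with
  | zero => simp
  | succ M ih =>
    have hL : ∀ j ∈ range M, (1 - T (b + 5 * ((j : ℕ) + 1 : ℕ)) : LaurentPolynomial ℤ)
        = 1 - T ((b + 5) + 5 * (j : ℤ)) := by
      intro j _; congr 1; push_cast; ring
    rw [prod_range_succ', prod_congr rfl hL, ih (b + 5)]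
    have h0 : (1 - T (b + 5 * ((0 : ℕ) : ℤ)) : LaurentPolynomial ℤ) = 1 - T b := by
      norm_num
    rw [h0]
    conv_rhs => rw [sum_range_succ']
    have hterm : ∀ j ∈ range (M + 1),
        (-1 : LaurentPolynomial ℤ) ^ (j + 1) *
            T (5 * (((j + 1 : ℕ)).choose 2 : ℤ) + b * ((j + 1 : ℕ) : ℤ)) * ψ (qb (M + 1) (j + 1))
          = (-1 : LaurentPolynomial ℤ) ^ (j + 1) *
              T (5 * (((j + 1 : ℕ)).choose 2 : ℤ) + (b + 5) * ((j + 1 : ℕ) : ℤ)) *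
                ψ (qb M (j + 1))
            + (-T b) * ((-1 : LaurentPolynomial ℤ) ^ j *
                T (5 * ((j : ℕ).choose 2 : ℤ) + (b + 5) * (j : ℤ)) * ψ (qb M j)) := by
      intro j _
      have e1 : (T (5 * (((j + 1 : ℕ)).choose 2 : ℤ) + b * ((j + 1 : ℕ) : ℤ)) *
            T (5 * ((j + 1 : ℕ) : ℤ)) : LaurentPolynomial ℤ)
          = T (5 * (((j + 1 : ℕ)).choose 2 : ℤ) + (b + 5) * ((j + 1 : ℕ) : ℤ)) := by
        rw [← T_add]; congr 1; push_cast; ring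
      have e2 : (T (5 * (((j + 1 : ℕ)).choose 2 : ℤ) + b * ((j + 1 : ℕ) : ℤ))
            : LaurentPolynomial ℤ)
          = T b * T (5 * ((j : ℕ).choose 2 : ℤ) + (b + 5) * (j : ℤ)) := by
        rw [← T_add]; congr 1; push_cast [choose_two_succ]; ring
      rw [qb_succ_succ, map_add, map_mul, ψ_X_pow]
      have hcast : (5 * ((j + 1 : ℕ)) : ℤ) = 5 * ((j + 1 : ℕ) : ℤ) := by push_cast; ring
      rw [hcast]
      calc (-1 : LaurentPolynomial ℤ) ^ (j + 1) *
            T (5 * (((j + 1 : ℕ)).choose 2 : ℤ) + b * ((j + 1 : ℕ) : ℤ)) *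
              (T (5 * ((j + 1 : ℕ) : ℤ)) * ψ (qb M (j + 1)) + ψ (qb M j))
          = (-1) ^ (j + 1) *
              (T (5 * (((j + 1 : ℕ)).choose 2 : ℤ) + b * ((j + 1 : ℕ) : ℤ)) *
                T (5 * ((j + 1 : ℕ) : ℤ))) * ψ (qb M (j + 1))
            + (-1) ^ (j + 1) *
              T (5 * (((j + 1 : ℕ)).choose 2 : ℤ) + b * ((j + 1 : ℕ) : ℤ)) * ψ (qb M j) := by
            ring
        _ = _ := by rw [e1, e2]; ring
    rw [sum_congr rfl hterm, sum_add_distrib]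
    have hA : ∑ j ∈ range (M + 1), (-1 : LaurentPolynomial ℤ) ^ (j + 1) *
          T (5 * (((j + 1 : ℕ)).choose 2 : ℤ) + (b + 5) * ((j + 1 : ℕ) : ℤ)) * ψ (qb M (j + 1))
        = (∑ k ∈ range (M + 1),
            (-1 : LaurentPolynomial ℤ) ^ k *
              T (5 * ((k : ℕ).choose 2 : ℤ) + (b + 5) * (k : ℤ)) * ψ (qb M k)) - 1 := by
      have := sum_range_succ' (fun k => (-1 : LaurentPolynomial ℤ) ^ k *
          T (5 * ((k : ℕ).choose 2 : ℤ) + (b + 5) * (k : ℤ)) * ψ (qb M k)) (M + 1)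
      rw [sum_range_succ] at this
      simp only [qb_eq_zero (Nat.lt_succ_self M), map_zero, mul_zero, add_zero] at this
      rw [this]
      simp
    have hB : ∑ j ∈ range (M + 1), (-T b) * ((-1 : LaurentPolynomial ℤ) ^ j *
          T (5 * ((j : ℕ).choose 2 : ℤ) + (b + 5) * (j : ℤ)) * ψ (qb M j))
        = (-T b) * ∑ k ∈ range (M + 1),
            (-1 : LaurentPolynomial ℤ) ^ k *
              T (5 * ((k : ℕ).choose 2 : ℤ) + (b + 5) * (k : ℤ)) * ψ (qb M k) := by
      rw [mul_sum]
    rw [hA, hB]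
    have h00 : (-1 : LaurentPolynomial ℤ) ^ 0 *
        T (5 * (((0 : ℕ)).choose 2 : ℤ) + b * ((0 : ℕ) : ℤ)) * ψ (qb (M + 1) 0) = 1 := by
      simp
    rw [h00]
    ring


noncomputable def σp : Polynomial ℤ →+* Polynomial ℤ := eval₂RingHom C (X ^ 5)

lemma T_prod {ι : Type*} (s : Finset ι) (g : ι → ℤ) :
    ∏ j ∈ s, (T (g j) : LaurentPolynomial ℤ) = T (∑ j ∈ s, g j) := by
  induction s using Finset.cons_induction with
  | empty => simp
  | cons i s hi ih => rw [prod_cons, sum_cons, ih, T_add]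

lemma psi_eq (p : Polynomial ℤ) : ψ p = Polynomial.toLaurent (σp p) := by
  show ψ p = Polynomial.toLaurent (eval₂ C (X ^ 5) p)
  rw [hom_eval₂]
  have h1 : (Polynomial.toLaurent (R := ℤ)).comp C = Int.castRingHom _ :=
    RingHom.ext_int _ _
  have h2 : Polynomial.toLaurent (X ^ 5 : Polynomial ℤ) = T 5 := by
    simpa using Polynomial.toLaurent_X_pow (R := ℤ) 5
  rw [h1, h2]; rfl

/-- the exponent occurring in the theta sum -/
noncomputable def ep (N a k : ℕ) : ℤ :=
  (∑ j ∈ range N, (5 * ((N : ℤ) - j) - a)) + 5 * (k.choose 2 : ℤ) + ((a : ℤ) - 5 * N) * k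

lemma choose_two_succ' (k : ℕ) : (k + 1).choose 2 = k.choose 2 + k := by
  rw [Nat.choose_succ_succ]; simp [Nat.choose_one_right]; omega

lemma two_choose_two (k : ℕ) : 2 * ((k.choose 2 : ℕ) : ℤ) = k * (k - 1) := by
  induction k with
  | zero => simp
  | succ k ih => rw [choose_two_succ']; push_cast at ih ⊢; ring_nf; ring_nf at ih; omega

lemma two_ep (N a k : ℕ) :
    2 * ep N a k = 5 * ((k : ℤ) - N) ^ 2 - (5 - 2 * a) * ((k : ℤ) - N) := by
  have hs : (∑ j ∈ range N, (5 * ((N : ℤ) - j) - a)) * 2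
      = 5 * N * (N + 1) - 2 * a * N := by
    have h0 : (∑ j ∈ range N, (j : ℤ)) * 2 = N * (N - 1) := by
      induction N with
      | zero => simp
      | succ n ih => rw [sum_range_succ]; push_cast; push_cast at ih; ring_nf; ring_nf at ih; omega
    have e : (∑ j ∈ range N, (5 * ((N : ℤ) - j) - a))
        = (range N).card • (5 * (N : ℤ) - a) - 5 * ∑ j ∈ range N, (j : ℤ) := by
      rw [← sum_const, mul_sum, ← sum_sub_distrib]
      exact sum_congr rfl (by intros; ring)
    rw [card_range, nsmul_eq_mul] at e
    rw [e]
    linarith [h0]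
  have ht := two_choose_two k
  unfold ep
  nlinarith [hs, ht]

lemma consec_nonneg (n : ℤ) : 0 ≤ n * (n - 1) := by
  rcases le_or_gt n 0 with h | h
  · have := mul_nonneg (neg_nonneg.2 h) (by omega : (0:ℤ) ≤ 1 - n)
    nlinarith
  · exact mul_nonneg (by omega) (by omega)

lemma ep_abs_le (N a k : ℕ) (ha : 1 ≤ a) (ha2 : a ≤ 2) :
    |(k : ℤ) - N| ≤ ep N a k := by
  have h := two_ep N a k
  have h5 := consec_nonneg ((k : ℤ) - N)
  have h6 := consec_nonneg (-((k : ℤ) - N))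
  have ha' : (1 : ℤ) ≤ a := by exact_mod_cast ha
  have ha2' : (a : ℤ) ≤ 2 := by exact_mod_cast ha2
  rcases abs_cases ((k : ℤ) - N) with ⟨h1, h2⟩ | ⟨h1, h2⟩ <;> rw [h1] <;> nlinarith

lemma ep_nonneg (N a k : ℕ) (ha : 1 ≤ a) (ha2 : a ≤ 2) : 0 ≤ ep N a k :=
  le_trans (abs_nonneg _) (ep_abs_le N a k ha ha2)


lemma psi_pq (N : ℕ) :
    ψ (pq N) = ∏ j ∈ range N, (1 - T (5 * ((j : ℤ) + 1)) : LaurentPolynomial ℤ) := by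
  unfold pq
  rw [map_prod]
  refine prod_congr rfl ?_
  intro j _
  rw [map_sub, map_one, ψ_X_pow]
  congr 2


lemma key_laurent (N a : ℕ) :
    (∏ i ∈ range N, (1 - T (5 * ((i : ℤ) + 1) - a) : LaurentPolynomial ℤ)) *
        (∏ j ∈ range N, (1 - T ((a : ℤ) + 5 * j) : LaurentPolynomial ℤ)) *
        (∏ j ∈ range N, (1 - T (5 * ((j : ℤ) + 1)) : LaurentPolynomial ℤ))
      = ∑ k ∈ range (2 * N + 1),
          (-1 : LaurentPolynomial ℤ) ^ (k + N) * T (ep N a k) * ψ (pq N * qb (2 * N) k) := by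
  have hg := gauss (2 * N) ((a : ℤ) - 5 * N)
  rw [show range (2 * N) = range (N + N) from by rw [two_mul], prod_range_add] at hg
  have hB : ∀ j ∈ range N,
      (1 - T (((a : ℤ) - 5 * N) + 5 * ((N + j : ℕ) : ℤ)) : LaurentPolynomial ℤ)
        = 1 - T ((a : ℤ) + 5 * j) := by
    intro j _; congr 1; push_cast; ring
  rw [prod_congr rfl hB] at hg
  have hpair : (∏ j ∈ range N, (-T (5 * ((N : ℤ) - j) - a) : LaurentPolynomial ℤ)) *
      (∏ j ∈ range N, (1 - T (((a : ℤ) - 5 * N) + 5 * (j : ℤ)) : LaurentPolynomial ℤ))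
      = ∏ i ∈ range N, (1 - T (5 * ((i : ℤ) + 1) - a) : LaurentPolynomial ℤ) := by
    rw [← prod_mul_distrib]
    have h1 : ∀ j ∈ range N,
        ((-T (5 * ((N : ℤ) - j) - a) : LaurentPolynomial ℤ) *
          (1 - T (((a : ℤ) - 5 * N) + 5 * (j : ℤ))))
        = 1 - T (5 * ((N : ℤ) - j) - a) := by
      intro j _
      have hT : (T (5 * ((N : ℤ) - j) - a) * T (((a : ℤ) - 5 * N) + 5 * (j : ℤ))
          : LaurentPolynomial ℤ) = 1 := by
        rw [← T_add]
        have : (5 * ((N : ℤ) - j) - a) + (((a : ℤ) - 5 * N) + 5 * (j : ℤ)) = 0 := by ring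
        rw [this, T_zero]
      linear_combination hT
    rw [prod_congr rfl h1, ← prod_range_reflect
      (fun i => (1 - T (5 * ((i : ℤ) + 1) - a) : LaurentPolynomial ℤ)) N]
    refine prod_congr rfl ?_
    intro j hj
    have hj' : j < N := mem_range.mp hj
    congr 2
    have : ((N - 1 - j : ℕ) : ℤ) = (N : ℤ) - 1 - j := by omega
    rw [this]; ring
  have hu : (∏ j ∈ range N, (-T (5 * ((N : ℤ) - j) - a) : LaurentPolynomial ℤ))
      = (-1 : LaurentPolynomial ℤ) ^ N *
          T (∑ j ∈ range N, (5 * ((N : ℤ) - j) - a)) := by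
    have h1 : ∀ j ∈ range N, (-T (5 * ((N : ℤ) - j) - a) : LaurentPolynomial ℤ)
        = (-1) * T (5 * ((N : ℤ) - j) - a) := by intro j _; ring
    rw [prod_congr rfl h1, prod_mul_distrib, prod_const, card_range, T_prod]
  calc (∏ i ∈ range N, (1 - T (5 * ((i : ℤ) + 1) - a) : LaurentPolynomial ℤ)) *
        (∏ j ∈ range N, (1 - T ((a : ℤ) + 5 * j) : LaurentPolynomial ℤ)) *
        (∏ j ∈ range N, (1 - T (5 * ((j : ℤ) + 1)) : LaurentPolynomial ℤ))
      = ((∏ j ∈ range N, (-T (5 * ((N : ℤ) - j) - a) : LaurentPolynomial ℤ)) *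
          ((∏ j ∈ range N, (1 - T (((a : ℤ) - 5 * N) + 5 * (j : ℤ)) : LaurentPolynomial ℤ)) *
            (∏ j ∈ range N, (1 - T ((a : ℤ) + 5 * j) : LaurentPolynomial ℤ)))) * ψ (pq N) := by
        rw [psi_pq, ← hpair]; ring
    _ = ((∏ j ∈ range N, (-T (5 * ((N : ℤ) - j) - a) : LaurentPolynomial ℤ)) *
          (∑ k ∈ range (2 * N + 1),
            (-1 : LaurentPolynomial ℤ) ^ k *
              T (5 * ((k.choose 2 : ℕ) : ℤ) + ((a : ℤ) - 5 * N) * k) * ψ (qb (2 * N) k))) *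
          ψ (pq N) := by rw [hg]
    _ = _ := by
        rw [hu, mul_sum, sum_mul]
        refine sum_congr rfl ?_
        intro k _
        rw [map_mul]
        have hpow : (-1 : LaurentPolynomial ℤ) ^ (k + N) = (-1) ^ k * (-1) ^ N :=
          pow_add _ k N
        have hT : (T (∑ j ∈ range N, (5 * ((N : ℤ) - j) - a)) *
            T (5 * ((k.choose 2 : ℕ) : ℤ) + ((a : ℤ) - 5 * N) * k) : LaurentPolynomial ℤ)
            = T (ep N a k) := by
          rw [← T_add]; congr 1; unfold ep; ring
        linear_combination (T (ep N a k) * ψ (pq N) * ψ (qb (2 * N) k)) * hpow +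
          ((-1 : LaurentPolynomial ℤ) ^ k * (-1 : LaurentPolynomial ℤ) ^ N * ψ (pq N) *
            ψ (qb (2 * N) k)) * hT

/-! ### Power series truncation toolkit -/

section PSsec
open PowerSeries

local notation "PS" => PowerSeries ℤ

lemma coeff_eq_of_dvd {K d : ℕ} (hd : d < K) {f g : PS}
    (h : (PowerSeries.X : PS) ^ K ∣ f - g) :
    PowerSeries.coeff d f = PowerSeries.coeff d g := by
  have := (PowerSeries.X_pow_dvd_iff.mp h) d hd
  rw [map_sub] at this
  linarith [this]

lemma dvd_mul_sub_one {K : ℕ} {a b : PS}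
    (ha : (PowerSeries.X : PS) ^ K ∣ a - 1) (hb : (PowerSeries.X : PS) ^ K ∣ b - 1) :
    (PowerSeries.X : PS) ^ K ∣ a * b - 1 := by
  have : a * b - 1 = a * (b - 1) + (a - 1) := by ring
  rw [this]
  exact dvd_add (Dvd.dvd.mul_left hb a) ha

lemma dvd_prod_sub_one {K : ℕ} {ι : Type*} {s : Finset ι} {f : ι → PS}
    (h : ∀ i ∈ s, (PowerSeries.X : PS) ^ K ∣ f i - 1) :
    (PowerSeries.X : PS) ^ K ∣ (∏ i ∈ s, f i) - 1 := by
  classical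
  induction s using Finset.cons_induction with
  | empty => simp
  | cons i s hi ih =>
    rw [prod_cons]
    exact dvd_mul_sub_one (h i (mem_cons_self i s))
      (ih fun j hj => h j (mem_cons.mpr (Or.inr hj)))

lemma dvd_mul_sub_mul {K : ℕ} {a a' b b' : PS}
    (ha : (PowerSeries.X : PS) ^ K ∣ a - a') (hb : (PowerSeries.X : PS) ^ K ∣ b - b') :
    (PowerSeries.X : PS) ^ K ∣ a * b - a' * b' := by
  have : a * b - a' * b' = a * (b - b') + (a - a') * b' := by ring
  rw [this]
  exact dvd_add (Dvd.dvd.mul_left hb a) (Dvd.dvd.mul_right ha b')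

lemma dvd_one_sub_X_pow {K m : ℕ} (hm : K ≤ m) :
    (PowerSeries.X : PS) ^ K ∣ (1 - PowerSeries.X ^ m) - 1 := by
  have : (1 - PowerSeries.X ^ m : PS) - 1 = -(PowerSeries.X ^ m) := by ring
  rw [this]
  exact (pow_dvd_pow _ hm).neg_right

lemma isUnit_one_sub_X_pow (m : ℕ) (hm : 1 ≤ m) :
    IsUnit (1 - PowerSeries.X ^ m : PS) := by
  rw [PowerSeries.isUnit_iff_constantCoeff]
  have : PowerSeries.constantCoeff (1 - PowerSeries.X ^ m : PS) = 1 := by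
    rw [map_sub, map_one, map_pow, PowerSeries.constantCoeff_X,
      zero_pow (by omega : m ≠ 0), sub_zero]
  rw [this]
  exact isUnit_one

lemma dvd_inverse_sub_one {K m : ℕ} (hm1 : 1 ≤ m) (hm : K ≤ m) :
    (PowerSeries.X : PS) ^ K ∣ Ring.inverse (1 - PowerSeries.X ^ m : PS) - 1 := by
  have hu := isUnit_one_sub_X_pow m hm1
  have h1 : (1 - PowerSeries.X ^ m : PS) * Ring.inverse (1 - PowerSeries.X ^ m : PS) = 1 :=
    Ring.mul_inverse_cancel _ hu
  have : Ring.inverse (1 - PowerSeries.X ^ m : PS) - 1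
      = Ring.inverse (1 - PowerSeries.X ^ m : PS) * PowerSeries.X ^ m := by
    linear_combination h1
  rw [this]
  exact Dvd.dvd.mul_left (pow_dvd_pow _ hm) _

/-- coerced `pq` -/
noncomputable def Upq (m : ℕ) : PS := ∏ j ∈ range m, (1 - PowerSeries.X ^ (j + 1))

lemma coe_one_sub_X_pow (m : ℕ) :
    ((1 - Polynomial.X ^ m : Polynomial ℤ) : PS) = 1 - PowerSeries.X ^ m := by
  ext n
  simp [Polynomial.coeff_coe, PowerSeries.coeff_X_pow, Polynomial.coeff_X_pow,
    PowerSeries.coeff_one, Polynomial.coeff_one]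

lemma coe_prod {ι : Type*} (s : Finset ι) (f : ι → Polynomial ℤ) :
    ((∏ i ∈ s, f i : Polynomial ℤ) : PS) = ∏ i ∈ s, ((f i : Polynomial ℤ) : PS) := by
  classical
  induction s using Finset.cons_induction with
  | empty => simp
  | cons i s hi ih => rw [prod_cons, Polynomial.coe_mul, ih, prod_cons]

lemma coe_pq (m : ℕ) : ((pq m : Polynomial ℤ) : PS) = Upq m := by
  unfold pq Upq
  rw [coe_prod]
  exact prod_congr rfl fun j _ => coe_one_sub_X_pow (j + 1)

lemma isUnit_Upq (m : ℕ) : IsUnit (Upq m) := by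
  induction m with
  | zero => simp [Upq]
  | succ m ih =>
    unfold Upq at ih ⊢
    rw [prod_range_succ]
    exact ih.mul (isUnit_one_sub_X_pow _ (by omega))

lemma Upq_congr {K m m' : ℕ} (h1 : K - 1 ≤ m') (h2 : m' ≤ m) :
    (PowerSeries.X : PS) ^ K ∣ Upq m - Upq m' := by
  have hsplit : Upq m = Upq m' * ∏ j ∈ Finset.Ico m' m, (1 - PowerSeries.X ^ (j + 1)) := by
    unfold Upq
    rw [range_eq_Ico, range_eq_Ico, prod_Ico_consecutive _ (Nat.zero_le m') h2]
  rw [hsplit]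
  have : Upq m' * (∏ j ∈ Finset.Ico m' m, (1 - PowerSeries.X ^ (j + 1))) - Upq m'
      = Upq m' * ((∏ j ∈ Finset.Ico m' m, (1 - PowerSeries.X ^ (j + 1))) - 1) := by ring
  rw [this]
  refine Dvd.dvd.mul_left (dvd_prod_sub_one fun j hj => ?_) _
  have := (Finset.mem_Ico.mp hj).1
  exact dvd_one_sub_X_pow (by omega)

lemma dvd_of_dvd_mul_unit {f u g : PS} (hu : IsUnit u) (h : g ∣ f * u) : g ∣ f := by
  obtain ⟨w, rfl⟩ := hu
  have : f = f * ↑w * ↑w⁻¹ := by rw [mul_assoc, Units.mul_inv, mul_one]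
  rw [this]
  exact Dvd.dvd.mul_right h _

/-- the key truncation estimate -/
lemma trunc_qb {N k K : ℕ} (hk : k ≤ 2 * N) (hK1 : K ≤ k + 1) (hK2 : K ≤ 2 * N - k + 1)
    (hK3 : K ≤ N + 1) :
    (PowerSeries.X : PS) ^ K ∣ ((pq N * qb (2 * N) k : Polynomial ℤ) : PS) - 1 := by
  have hD : pq k * pq (2 * N - k) * qb (2 * N) k = pq (2 * N) := claimD (2 * N) k hk
  have hD' : Upq k * Upq (2 * N - k) * ((qb (2 * N) k : Polynomial ℤ) : PS) = Upq (2 * N) := by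
    rw [← coe_pq, ← coe_pq, ← coe_pq, ← Polynomial.coe_mul, ← Polynomial.coe_mul, hD]
  set Qb : PS := ((qb (2 * N) k : Polynomial ℤ) : PS) with hQb
  have hco : ((pq N * qb (2 * N) k : Polynomial ℤ) : PS) = Upq N * Qb := by
    rw [Polynomial.coe_mul, coe_pq]
  rw [hco]
  have key : (PowerSeries.X : PS) ^ K ∣ (Upq N * Qb - 1) * (Upq k * Upq (2 * N - k)) := by
    have h1 : (Upq N * Qb - 1) * (Upq k * Upq (2 * N - k))
        = Upq N * Upq (2 * N) - Upq k * Upq (2 * N - k) := by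
      linear_combination (Upq N) * hD'
    rw [h1]
    have c1 : (PowerSeries.X : PS) ^ K ∣ Upq N - Upq (K - 1) := Upq_congr le_rfl (by omega)
    have c2 : (PowerSeries.X : PS) ^ K ∣ Upq (2 * N) - Upq (K - 1) := Upq_congr le_rfl (by omega)
    have c3 : (PowerSeries.X : PS) ^ K ∣ Upq k - Upq (K - 1) := Upq_congr le_rfl (by omega)
    have c4 : (PowerSeries.X : PS) ^ K ∣ Upq (2 * N - k) - Upq (K - 1) := Upq_congr le_rfl (by omega)
    have e : Upq N * Upq (2 * N) - Upq k * Upq (2 * N - k)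
        = (Upq N * Upq (2 * N) - Upq (K - 1) * Upq (K - 1))
          - (Upq k * Upq (2 * N - k) - Upq (K - 1) * Upq (K - 1)) := by ring
    rw [e]
    exact dvd_sub (dvd_mul_sub_mul c1 c2) (dvd_mul_sub_mul c3 c4)
  exact dvd_of_dvd_mul_unit ((isUnit_Upq k).mul (isUnit_Upq (2 * N - k))) key

end PSsec

lemma key_poly (N a : ℕ) (ha : 1 ≤ a) (ha2 : a ≤ 2) :
    (∏ i ∈ range N, (1 - X ^ (5 * (i + 1) - a) : Polynomial ℤ)) *
        (∏ j ∈ range N, (1 - X ^ (a + 5 * j) : Polynomial ℤ)) *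
        (∏ j ∈ range N, (1 - X ^ (5 * (j + 1)) : Polynomial ℤ))
      = ∑ k ∈ range (2 * N + 1),
          (-1 : Polynomial ℤ) ^ (k + N) * X ^ ((ep N a k).toNat) * σp (pq N * qb (2 * N) k) := by
  apply Polynomial.toLaurent_injective
  rw [map_mul, map_mul, map_prod, map_prod, map_prod, map_sum]
  have h1 : ∀ i ∈ range N, Polynomial.toLaurent (1 - X ^ (5 * (i + 1) - a) : Polynomial ℤ)
      = 1 - T (5 * ((i : ℤ) + 1) - a) := by
    intro i _
    rw [map_sub, map_one, Polynomial.toLaurent_X_pow]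
    congr 2
    omega
  have h2 : ∀ j ∈ range N, Polynomial.toLaurent (1 - X ^ (a + 5 * j) : Polynomial ℤ)
      = 1 - T ((a : ℤ) + 5 * j) := by
    intro j _
    rw [map_sub, map_one, Polynomial.toLaurent_X_pow]
    congr 2
  have h3 : ∀ j ∈ range N, Polynomial.toLaurent (1 - X ^ (5 * (j + 1)) : Polynomial ℤ)
      = 1 - T (5 * ((j : ℤ) + 1)) := by
    intro j _
    rw [map_sub, map_one, Polynomial.toLaurent_X_pow]
    congr 2
  have h4 : ∀ k ∈ range (2 * N + 1),
      Polynomial.toLaurent ((-1 : Polynomial ℤ) ^ (k + N) * X ^ ((ep N a k).toNat) *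
          σp (pq N * qb (2 * N) k))
        = (-1 : LaurentPolynomial ℤ) ^ (k + N) * T (ep N a k) * ψ (pq N * qb (2 * N) k) := by
    intro k _
    rw [map_mul, map_mul, map_pow, map_neg, map_one, Polynomial.toLaurent_X_pow, ← psi_eq]
    congr 2
    rw [Int.toNat_of_nonneg (ep_nonneg N a k ha ha2)]
  rw [prod_congr rfl h1, prod_congr rfl h2, prod_congr rfl h3, sum_congr rfl h4]
  exact key_laurent N a

lemma neg_one_zpow_coe (n : ℤ) :
    (((-1 : ℤˣ) ^ n : ℤˣ) : ℤ) = if Even n then 1 else -1 := by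
  rcases Int.even_or_odd n with ⟨t, ht⟩ | ⟨t, ht⟩
  · subst ht
    rw [if_pos ⟨t, rfl⟩, zpow_add]
    rw [Int.units_mul_self]
    rfl
  · subst ht
    rw [if_neg (by simp [Int.even_add_one, parity_simps])]
    rw [zpow_add, two_mul, zpow_add, Int.units_mul_self, one_mul, zpow_one]
    rfl

section PSsec2
open PowerSeries
local notation "PS" => PowerSeries ℤ

lemma coe_sub' (u v : Polynomial ℤ) : ((u - v : Polynomial ℤ) : PS) = ↑u - ↑v := by
  ext n
  simp [Polynomial.coeff_coe]

/-- coefficient evaluation of the theta-side terms -/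
lemma coeff_key (d a : ℕ) (ha : 1 ≤ a) (ha2 : a ≤ 2) :
    ((∏ i ∈ range (d + 1), (1 - Polynomial.X ^ (5 * (i + 1) - a) : Polynomial ℤ)) *
        (∏ j ∈ range (d + 1), (1 - Polynomial.X ^ (a + 5 * j) : Polynomial ℤ)) *
        (∏ j ∈ range (d + 1), (1 - Polynomial.X ^ (5 * (j + 1)) : Polynomial ℤ))).coeff d
      = ∑ n ∈ Finset.Icc (-(d : ℤ) - 1) ((d : ℤ) + 1),
          if 5 * n ^ 2 + (5 - 2 * (a : ℤ)) * n = 2 * (d : ℤ)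
            then (((-1 : ℤˣ) ^ n : ℤˣ) : ℤ) else 0 := by
  set N := d + 1 with hN
  rw [key_poly N a ha ha2, Polynomial.finset_sum_coeff]
  have hterm : ∀ k ∈ range (2 * N + 1),
      ((-1 : Polynomial ℤ) ^ (k + N) * Polynomial.X ^ ((ep N a k).toNat) *
          σp (pq N * qb (2 * N) k)).coeff d
        = if ep N a k = (d : ℤ) then (-1 : ℤ) ^ (k + N) else 0 := by
    intro k hkmem
    have hk : k ≤ 2 * N := by have := mem_range.mp hkmem; omega
    set j : ℕ := (N - k) + (k - N) with hjdef
    have hjabs : ((j : ℕ) : ℤ) = |(k : ℤ) - N| := by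
      rcases le_total k N with h | h
      · rw [abs_of_nonpos (by omega : (k : ℤ) - N ≤ 0)]; omega
      · rw [abs_of_nonneg (by omega : (0 : ℤ) ≤ (k : ℤ) - N)]; omega
    set K : ℕ := N + 1 - j with hKdef
    have htr := trunc_qb (N := N) (k := k) (K := K) hk (by omega) (by omega) (by omega)
    have hpoly : (X : Polynomial ℤ) ^ K ∣ (pq N * qb (2 * N) k) - 1 := by
      rw [Polynomial.X_pow_dvd_iff]
      intro i hi
      have h0 := PowerSeries.X_pow_dvd_iff.mp htr i hi
      rw [show ((pq N * qb (2 * N) k : Polynomial ℤ) : PS) - 1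
          = (((pq N * qb (2 * N) k - 1 : Polynomial ℤ)) : PS) by
        rw [coe_sub']; norm_cast] at h0
      rw [Polynomial.coeff_coe] at h0
      exact h0
    have hsig : (X : Polynomial ℤ) ^ (5 * K) ∣ σp (pq N * qb (2 * N) k) - 1 := by
      have hdvd := map_dvd σp hpoly
      rw [map_sub, map_one] at hdvd
      have hXK : σp ((X : Polynomial ℤ) ^ K) = Polynomial.X ^ (5 * K) := by
        rw [map_pow]
        have : σp (X : Polynomial ℤ) = Polynomial.X ^ 5 := by
          simp [σp]
        rw [this, ← pow_mul]
      rwa [hXK] at hdvd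
    have hnn : 0 ≤ ep N a k := ep_nonneg N a k ha ha2
    have htn : ((ep N a k).toNat : ℤ) = ep N a k := Int.toNat_of_nonneg hnn
    have habs : ((j : ℕ) : ℤ) ≤ ep N a k := by
      rw [hjabs]; exact ep_abs_le N a k ha ha2
    have hC : ((-1 : Polynomial ℤ)) ^ (k + N) = Polynomial.C ((-1 : ℤ) ^ (k + N)) := by
      simp
    rw [hC, mul_assoc, mul_comm (Polynomial.X ^ ((ep N a k).toNat)) (σp (pq N * qb (2 * N) k)),
      Polynomial.coeff_C_mul, Polynomial.coeff_mul_X_pow']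
    by_cases hle : (ep N a k).toNat ≤ d
    · have harith : d - (ep N a k).toNat < 5 * K := by
        have h1 : ((ep N a k).toNat : ℤ) = ep N a k := htn
        have h2 : ((j : ℕ) : ℤ) ≤ ep N a k := habs
        omega
      have hco : (σp (pq N * qb (2 * N) k)).coeff (d - (ep N a k).toNat)
          = (1 : Polynomial ℤ).coeff (d - (ep N a k).toNat) := by
        have h0 := Polynomial.X_pow_dvd_iff.mp hsig (d - (ep N a k).toNat) harith
        rw [Polynomial.coeff_sub] at h0
        linarith
      rw [if_pos hle, hco, Polynomial.coeff_one]
      by_cases heq : ep N a k = (d : ℤ)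
      · have hz : d - (ep N a k).toNat = 0 := by omega
        rw [hz, if_pos rfl, mul_one, if_pos heq]
      · have hz : ¬(d - (ep N a k).toNat = 0) := by omega
        rw [if_neg hz, mul_zero, if_neg heq]
    · rw [if_neg hle, mul_zero, if_neg (by omega)]
  rw [sum_congr rfl hterm]
  refine sum_bij' (fun k _ => (N : ℤ) - k) (fun n _ => ((N : ℤ) - n).toNat) ?_ ?_ ?_ ?_ ?_
  · intro k hkmem
    have := mem_range.mp hkmem
    rw [Finset.mem_Icc]
    omega
  · intro n hn
    rw [Finset.mem_Icc] at hn
    rw [mem_range]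
    omega
  · intro k hkmem
    have := mem_range.mp hkmem
    omega
  · intro n hn
    rw [Finset.mem_Icc] at hn
    omega
  · intro k hkmem
    have hk : k ≤ 2 * N := by have := mem_range.mp hkmem; omega
    have h3 : 2 * ep N a k
        = 5 * ((N : ℤ) - k) ^ 2 + (5 - 2 * a) * ((N : ℤ) - k) := by
      linear_combination two_ep N a k
    have hcond : (ep N a k = (d : ℤ))
        ↔ (5 * ((N : ℤ) - k) ^ 2 + (5 - 2 * (a : ℤ)) * ((N : ℤ) - k) = 2 * (d : ℤ)) := by
      constructor <;> intro h <;> linarith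
    rw [if_congr hcond rfl rfl]
    by_cases hc : 5 * ((N : ℤ) - k) ^ 2 + (5 - 2 * (a : ℤ)) * ((N : ℤ) - k) = 2 * (d : ℤ)
    · rw [if_pos hc, if_pos hc, neg_one_zpow_coe]
      have hpar : Even ((N : ℤ) - k) ↔ Even (k + N) := by
        rw [Int.even_sub, Nat.even_add]
        simp [Int.even_coe_nat]
        tauto
      rcases Nat.even_or_odd (k + N) with he | ho
      · rw [Even.neg_one_pow he, if_pos (hpar.mpr he)]
      · rw [Odd.neg_one_pow ho, if_neg (by
          intro hcon
          exact (Nat.not_even_iff_odd.mpr ho) (hpar.mp hcon))]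
    · rw [if_neg hc, if_neg hc]

end PSsec2

section PSsec3
open PowerSeries
local notation "PS" => PowerSeries ℤ

lemma coeff_stable {g : ℕ → PS} (hg : ∀ n K, K ≤ n + 1 → (PowerSeries.X : PS) ^ K ∣ g n - 1)
    {i M : ℕ} (hM : i < M) :
    PowerSeries.coeff i (∏ n ∈ range (i + 1), g n)
      = PowerSeries.coeff i (∏ n ∈ range M, g n) := by
  have hsplit : (∏ n ∈ range M, g n)
      = (∏ n ∈ range (i + 1), g n) * ∏ n ∈ Finset.Ico (i + 1) M, g n := by
    rw [range_eq_Ico, range_eq_Ico]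
    exact (prod_Ico_consecutive _ (Nat.zero_le _) hM).symm
  refine (coeff_eq_of_dvd (Nat.lt_succ_self i) ?_).symm
  rw [hsplit]
  have : (∏ n ∈ range (i + 1), g n) * (∏ n ∈ Finset.Ico (i + 1) M, g n)
        - (∏ n ∈ range (i + 1), g n)
      = (∏ n ∈ range (i + 1), g n) * ((∏ n ∈ Finset.Ico (i + 1) M, g n) - 1) := by ring
  rw [this]
  refine Dvd.dvd.mul_left (dvd_prod_sub_one fun n hn => ?_) _
  have := (Finset.mem_Ico.mp hn).1
  exact hg n (i + 1) (by omega)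

lemma prod_range_five (D : ℕ) (f : ℕ → PS) :
    ∏ m ∈ range (5 * D), f m
      = ∏ n ∈ range D,
          (f (5 * n) * f (5 * n + 1) * f (5 * n + 2) * f (5 * n + 3) * f (5 * n + 4)) := by
  induction D with
  | zero => simp
  | succ D ih =>
    rw [show 5 * (D + 1) = 5 * D + 5 from by ring, prod_range_add, ih]
    have h5 : ∏ i ∈ range 5, f (5 * D + i)
        = f (5 * D) * f (5 * D + 1) * f (5 * D + 2) * f (5 * D + 3) * f (5 * D + 4) := by
      rw [show (5 : ℕ) = 4 + 1 from rfl, prod_range_succ, prod_range_succ, prod_range_succ,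
        prod_range_succ, prod_range_one, Nat.add_zero]
    conv_rhs => rw [prod_range_succ]
    rw [h5]

lemma cancel_two (u v p q r : PS) (hu : IsUnit u) (hv : IsUnit v) :
    (Ring.inverse u * Ring.inverse v) * (p * u * v * q * r) = p * q * r := by
  have h1 := Ring.mul_inverse_cancel u hu
  have h2 := Ring.mul_inverse_cancel v hv
  calc (Ring.inverse u * Ring.inverse v) * (p * u * v * q * r)
      = (u * Ring.inverse u) * ((v * Ring.inverse v) * (p * q * r)) := by ring
    _ = p * q * r := by rw [h1, h2, one_mul, one_mul]

lemma cancel_two' (u v p q r : PS) (hu : IsUnit u) (hv : IsUnit v) :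
    (Ring.inverse u * Ring.inverse v) * (u * p * q * v * r) = p * q * r := by
  have h1 := Ring.mul_inverse_cancel u hu
  have h2 := Ring.mul_inverse_cancel v hv
  calc (Ring.inverse u * Ring.inverse v) * (u * p * q * v * r)
      = (u * Ring.inverse u) * ((v * Ring.inverse v) * (p * q * r)) := by ring
    _ = p * q * r := by rw [h1, h2, one_mul, one_mul]

lemma coeff_GP (g : ℕ → PS) (hg : ∀ n K, K ≤ n + 1 → (PowerSeries.X : PS) ^ K ∣ g n - 1)
    (G P : PS)
    (hGc : ∀ d : ℕ, PowerSeries.coeff d G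
      = PowerSeries.coeff d (∏ n ∈ range (d + 1), g n))
    (hPc : ∀ d : ℕ, PowerSeries.coeff d P
      = PowerSeries.coeff d (∏ n ∈ range (d + 1), (1 - PowerSeries.X ^ (n + 1))))
    (d : ℕ) :
    PowerSeries.coeff d (G * P)
      = PowerSeries.coeff d ((∏ n ∈ range (d + 1), g n) *
          ∏ m ∈ range (5 * (d + 1)), (1 - PowerSeries.X ^ (m + 1))) := by
  rw [PowerSeries.coeff_mul, PowerSeries.coeff_mul]
  refine sum_congr rfl fun p hp => ?_
  have hpd : p.1 + p.2 = d := Finset.HasAntidiagonal.mem_antidiagonal.mp hp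
  have hP' : ∀ n K, K ≤ n + 1 →
      (PowerSeries.X : PS) ^ K ∣ (1 - PowerSeries.X ^ (n + 1)) - 1 :=
    fun n K hK => dvd_one_sub_X_pow hK
  congr 1
  · rw [hGc p.1]
    exact coeff_stable hg (by omega)
  · rw [hPc p.2]
    exact coeff_stable hP' (by omega)

lemma partG (d : ℕ) :
    ((∏ n ∈ range (d + 1), (Ring.inverse (1 - PowerSeries.X ^ (5 * n + 2)) *
        Ring.inverse (1 - PowerSeries.X ^ (5 * n + 3)) : PS)) *
      ∏ m ∈ range (5 * (d + 1)), (1 - PowerSeries.X ^ (m + 1)))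
    = (((∏ i ∈ range (d + 1), (1 - Polynomial.X ^ (5 * (i + 1) - 1) : Polynomial ℤ)) *
        (∏ j ∈ range (d + 1), (1 - Polynomial.X ^ (1 + 5 * j) : Polynomial ℤ)) *
        (∏ j ∈ range (d + 1), (1 - Polynomial.X ^ (5 * (j + 1)) : Polynomial ℤ)) :
          Polynomial ℤ) : PS) := by
  rw [prod_range_five (d + 1) (fun m => (1 : PS) - PowerSeries.X ^ (m + 1)),
    ← prod_mul_distrib]
  have hcan : ∀ n ∈ range (d + 1),
      ((Ring.inverse (1 - PowerSeries.X ^ (5 * n + 2)) *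
        Ring.inverse (1 - PowerSeries.X ^ (5 * n + 3)) : PS)) *
        ((1 - PowerSeries.X ^ (5 * n + 1)) * (1 - PowerSeries.X ^ (5 * n + 1 + 1)) *
          (1 - PowerSeries.X ^ (5 * n + 2 + 1)) * (1 - PowerSeries.X ^ (5 * n + 3 + 1)) *
          (1 - PowerSeries.X ^ (5 * n + 4 + 1)))
      = (1 - PowerSeries.X ^ (5 * n + 1)) * (1 - PowerSeries.X ^ (5 * n + 4)) *
          (1 - PowerSeries.X ^ (5 * n + 5)) := by
    intro n _
    rw [show 5 * n + 1 + 1 = 5 * n + 2 from by omega,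
      show 5 * n + 2 + 1 = 5 * n + 3 from by omega,
      show 5 * n + 3 + 1 = 5 * n + 4 from by omega,
      show 5 * n + 4 + 1 = 5 * n + 5 from by omega]
    exact cancel_two _ _ _ _ _ (isUnit_one_sub_X_pow _ (by omega))
      (isUnit_one_sub_X_pow _ (by omega))
  rw [prod_congr rfl hcan, prod_mul_distrib, prod_mul_distrib]
  rw [Polynomial.coe_mul, Polynomial.coe_mul, coe_prod, coe_prod, coe_prod]
  have c1 : ∀ i ∈ range (d + 1),
      ((1 - Polynomial.X ^ (5 * (i + 1) - 1) : Polynomial ℤ) : PS)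
        = 1 - PowerSeries.X ^ (5 * i + 4) := by
    intro i _
    rw [coe_one_sub_X_pow, show 5 * (i + 1) - 1 = 5 * i + 4 from by omega]
  have c2 : ∀ j ∈ range (d + 1),
      ((1 - Polynomial.X ^ (1 + 5 * j) : Polynomial ℤ) : PS)
        = 1 - PowerSeries.X ^ (5 * j + 1) := by
    intro j _
    rw [coe_one_sub_X_pow, show 1 + 5 * j = 5 * j + 1 from by omega]
  have c3 : ∀ j ∈ range (d + 1),
      ((1 - Polynomial.X ^ (5 * (j + 1)) : Polynomial ℤ) : PS)
        = 1 - PowerSeries.X ^ (5 * j + 5) := by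
    intro j _
    rw [coe_one_sub_X_pow, show 5 * (j + 1) = 5 * j + 5 from by omega]
  rw [prod_congr rfl c1, prod_congr rfl c2, prod_congr rfl c3]
  ring

lemma partH (d : ℕ) :
    ((∏ n ∈ range (d + 1), (Ring.inverse (1 - PowerSeries.X ^ (5 * n + 1)) *
        Ring.inverse (1 - PowerSeries.X ^ (5 * n + 4)) : PS)) *
      ∏ m ∈ range (5 * (d + 1)), (1 - PowerSeries.X ^ (m + 1)))
    = (((∏ i ∈ range (d + 1), (1 - Polynomial.X ^ (5 * (i + 1) - 2) : Polynomial ℤ)) *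
        (∏ j ∈ range (d + 1), (1 - Polynomial.X ^ (2 + 5 * j) : Polynomial ℤ)) *
        (∏ j ∈ range (d + 1), (1 - Polynomial.X ^ (5 * (j + 1)) : Polynomial ℤ)) :
          Polynomial ℤ) : PS) := by
  rw [prod_range_five (d + 1) (fun m => (1 : PS) - PowerSeries.X ^ (m + 1)),
    ← prod_mul_distrib]
  have hcan : ∀ n ∈ range (d + 1),
      ((Ring.inverse (1 - PowerSeries.X ^ (5 * n + 1)) *
        Ring.inverse (1 - PowerSeries.X ^ (5 * n + 4)) : PS)) *
        ((1 - PowerSeries.X ^ (5 * n + 1)) * (1 - PowerSeries.X ^ (5 * n + 1 + 1)) *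
          (1 - PowerSeries.X ^ (5 * n + 2 + 1)) * (1 - PowerSeries.X ^ (5 * n + 3 + 1)) *
          (1 - PowerSeries.X ^ (5 * n + 4 + 1)))
      = (1 - PowerSeries.X ^ (5 * n + 2)) * (1 - PowerSeries.X ^ (5 * n + 3)) *
          (1 - PowerSeries.X ^ (5 * n + 5)) := by
    intro n _
    rw [show 5 * n + 1 + 1 = 5 * n + 2 from by omega,
      show 5 * n + 2 + 1 = 5 * n + 3 from by omega,
      show 5 * n + 3 + 1 = 5 * n + 4 from by omega,
      show 5 * n + 4 + 1 = 5 * n + 5 from by omega]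
    exact cancel_two' _ _ _ _ _ (isUnit_one_sub_X_pow _ (by omega))
      (isUnit_one_sub_X_pow _ (by omega))
  rw [prod_congr rfl hcan, prod_mul_distrib, prod_mul_distrib]
  rw [Polynomial.coe_mul, Polynomial.coe_mul, coe_prod, coe_prod, coe_prod]
  have c1 : ∀ i ∈ range (d + 1),
      ((1 - Polynomial.X ^ (5 * (i + 1) - 2) : Polynomial ℤ) : PS)
        = 1 - PowerSeries.X ^ (5 * i + 3) := by
    intro i _
    rw [coe_one_sub_X_pow, show 5 * (i + 1) - 2 = 5 * i + 3 from by omega]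
  have c2 : ∀ j ∈ range (d + 1),
      ((1 - Polynomial.X ^ (2 + 5 * j) : Polynomial ℤ) : PS)
        = 1 - PowerSeries.X ^ (5 * j + 2) := by
    intro j _
    rw [coe_one_sub_X_pow, show 2 + 5 * j = 5 * j + 2 from by omega]
  have c3 : ∀ j ∈ range (d + 1),
      ((1 - Polynomial.X ^ (5 * (j + 1)) : Polynomial ℤ) : PS)
        = 1 - PowerSeries.X ^ (5 * j + 5) := by
    intro j _
    rw [coe_one_sub_X_pow, show 5 * (j + 1) = 5 * j + 5 from by omega]
  rw [prod_congr rfl c1, prod_congr rfl c2, prod_congr rfl c3]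
  ring

end PSsec3

end Stmt7

open PowerSeries Finset

/-- the Jacobi-triple-product evaluations
`G(q)·∏_{n≥1}(1−qⁿ) = ∑_{n∈ℤ} (−1)ⁿ q^{(5n²+3n)/2}` and
`H(q)·∏_{n≥1}(1−qⁿ) = ∑_{n∈ℤ} (−1)ⁿ q^{(5n²+n)/2}` in `ℤ⟦q⟧`.
The infinite products are pinned down coefficientwise by finite partial products;
the bilateral theta sums are pinned down coefficientwise (all integer solutions `n`
of `5n²+3n = 2d`, resp. `5n²+n = 2d`, satisfy `|n| ≤ d+1`). -/
theorem stmt_7 (G H P S₁ S₂ : PowerSeries ℤ)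
    (hG : ∀ d : ℕ, coeff d G = coeff d (∏ n ∈ range (d + 1),
      Ring.inverse (1 - (X : PowerSeries ℤ) ^ (5 * n + 2)) *
        Ring.inverse (1 - (X : PowerSeries ℤ) ^ (5 * n + 3))))
    (hH : ∀ d : ℕ, coeff d H = coeff d (∏ n ∈ range (d + 1),
      Ring.inverse (1 - (X : PowerSeries ℤ) ^ (5 * n + 1)) *
        Ring.inverse (1 - (X : PowerSeries ℤ) ^ (5 * n + 4))))
    (hP : ∀ d : ℕ, coeff d P =
      coeff d (∏ n ∈ range (d + 1), (1 - (X : PowerSeries ℤ) ^ (n + 1))))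
    (hS₁ : ∀ d : ℕ, coeff d S₁ = ∑ n ∈ Finset.Icc (-(d : ℤ) - 1) ((d : ℤ) + 1),
      if 5 * n ^ 2 + 3 * n = 2 * (d : ℤ) then (((-1 : ℤˣ) ^ n : ℤˣ) : ℤ) else 0)
    (hS₂ : ∀ d : ℕ, coeff d S₂ = ∑ n ∈ Finset.Icc (-(d : ℤ) - 1) ((d : ℤ) + 1),
      if 5 * n ^ 2 + n = 2 * (d : ℤ) then (((-1 : ℤˣ) ^ n : ℤˣ) : ℤ) else 0) :
    G * P = S₁ ∧ H * P = S₂ := by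
  constructor
  · refine PowerSeries.ext fun d => ?_
    rw [hS₁ d]
    have hg : ∀ n K : ℕ, K ≤ n + 1 → (PowerSeries.X : PowerSeries ℤ) ^ K ∣
        (Ring.inverse (1 - (X : PowerSeries ℤ) ^ (5 * n + 2)) *
          Ring.inverse (1 - (X : PowerSeries ℤ) ^ (5 * n + 3))) - 1 := by
      intro n K hK
      exact Stmt7.dvd_mul_sub_one (Stmt7.dvd_inverse_sub_one (by omega) (by omega))
        (Stmt7.dvd_inverse_sub_one (by omega) (by omega))
    rw [Stmt7.coeff_GP _ hg G P hG hP d, Stmt7.partG d, Polynomial.coeff_coe,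
      Stmt7.coeff_key d 1 (le_refl 1) (by norm_num)]
    refine Finset.sum_congr rfl fun n _ => ?_
    refine if_congr ?_ rfl rfl
    constructor <;> intro h <;> [skip; skip] <;> push_cast at h ⊢ <;> linarith
  · refine PowerSeries.ext fun d => ?_
    rw [hS₂ d]
    have hg : ∀ n K : ℕ, K ≤ n + 1 → (PowerSeries.X : PowerSeries ℤ) ^ K ∣
        (Ring.inverse (1 - (X : PowerSeries ℤ) ^ (5 * n + 1)) *
          Ring.inverse (1 - (X : PowerSeries ℤ) ^ (5 * n + 4))) - 1 := by
      intro n K hK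
      exact Stmt7.dvd_mul_sub_one (Stmt7.dvd_inverse_sub_one (by omega) (by omega))
        (Stmt7.dvd_inverse_sub_one (by omega) (by omega))
    rw [Stmt7.coeff_GP _ hg H P hH hP d, Stmt7.partH d, Polynomial.coeff_coe,
      Stmt7.coeff_key d 2 (by norm_num) (le_refl 2)]
    refine Finset.sum_congr rfl fun n _ => ?_
    refine if_congr ?_ rfl rfl
    constructor <;> intro h <;> push_cast at h ⊢ <;> linarith
end

section
/- Fix an integer m ≥ 2 and a holomorphic function Q : ℍ → ℂ. Suppose f, g : ℍ → ℂ are holomorphic, their Wronskian f·(q d/dq)g − g·(q d/dq)f is nowhere zero on ℍ, and each of y = f and y = g satisfies the differential equation (q d/dq)²y + 2·G₂·(q d/dq)y + Q·y = 0. Define functions R₁,…,R_m on ℍ by R₁ = m·Q, R₂ = m·((q d/dq)Q + 4·G₂·Q), and R_{i+1} = (q d/dq)R_i + (2i+2)·G₂·R_i + (i+1)(m−i)·Q·R_{i−1} for 2 ≤ i ≤ m−1. Then, writing ′ for q d/dq, one has W_{(q d/dq)}((f^m)′, (f^{m−1}g)′, …, (g^m)′) = (−1)^{m+1}·R_m·W_{(q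 d/dq)}(f^m, f^{m−1}g, …, g^m) identically on ℍ. -/
open Complex Finset

/-- The Eisenstein series `G₂(τ) = −1/12 + 2∑_{n≥1} n qⁿ/(1−qⁿ)`, `q = e^{2πiτ}`. -/
noncomputable def GTwo (τ : ℂ) : ℂ :=
  -(1 / 12) + 2 * ∑' n : ℕ, ((n : ℂ) + 1) * Complex.exp (2 * (Real.pi : ℂ) * I * τ) ^ (n + 1) /
    (1 - Complex.exp (2 * (Real.pi : ℂ) * I * τ) ^ (n + 1))

lemma isOpen_UHP : IsOpen UHP := by
  have : UHP = Complex.im ⁻¹' Set.Ioi 0 := rfl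
  rw [this]; exact isOpen_Ioi.preimage Complex.continuous_im
lemma ramD_diffOn {h : ℂ → ℂ} (hh : DifferentiableOn ℂ h UHP) :
    DifferentiableOn ℂ (ramD h) UHP := by
  have : DifferentiableOn ℂ (deriv h) UHP :=
    ((hh.analyticOnNhd isOpen_UHP).deriv).differentiableOn
  exact (differentiableOn_const _).mul this
lemma ramD_congr {a b : ℂ → ℂ} (h : ∀ x ∈ UHP, a x = b x) {τ : ℂ} (hτ : τ ∈ UHP) :
    ramD a τ = ramD b τ := by
  unfold ramD
  congr 1
  exact Filter.EventuallyEq.deriv_eq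
    (Filter.eventuallyEq_of_mem (isOpen_UHP.mem_nhds hτ) h)
lemma ramD_mul {a b : ℂ → ℂ} {τ : ℂ} (ha : DifferentiableAt ℂ a τ)
    (hb : DifferentiableAt ℂ b τ) :
    ramD (fun z => a z * b z) τ = ramD a τ * b τ + a τ * ramD b τ := by
  unfold ramD; rw [deriv_fun_mul ha hb]; ring
lemma ramD_add {a b : ℂ → ℂ} {τ : ℂ} (ha : DifferentiableAt ℂ a τ)
    (hb : DifferentiableAt ℂ b τ) :
    ramD (fun z => a z + b z) τ = ramD a τ + ramD b τ := by
  unfold ramD; rw [deriv_fun_add ha hb]; ring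
lemma ramD_const_mul (c : ℂ) {a : ℂ → ℂ} {τ : ℂ} :
    ramD (fun z => c * a z) τ = c * ramD a τ := by
  unfold ramD; rw [deriv_const_mul_field]; ring
lemma ramD_pow {a : ℂ → ℂ} {τ : ℂ} (n : ℕ) (ha : DifferentiableAt ℂ a τ) :
    ramD (fun z => a z ^ n) τ = n * a τ ^ (n - 1) * ramD a τ := by
  unfold ramD; rw [deriv_fun_pow ha n]; ring
lemma ramD_sum {ι : Type*} (s : Finset ι) {F : ι → ℂ → ℂ} {τ : ℂ}
    (hF : ∀ k ∈ s, DifferentiableAt ℂ (F k) τ) :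
    ramD (fun z => ∑ k ∈ s, F k z) τ = ∑ k ∈ s, ramD (F k) τ := by
  unfold ramD; rw [deriv_fun_sum hF, Finset.mul_sum]

lemma abs_qexp_lt_one {τ : ℂ} (hτ : τ ∈ UHP) :
    ‖Complex.exp (2 * (Real.pi : ℂ) * I * τ)‖ < 1 := by
  rw [Complex.norm_exp]
  have : (2 * (Real.pi : ℂ) * I * τ).re = -(2 * Real.pi * τ.im) := by
    simp [Complex.mul_re, Complex.mul_im]
  rw [this, Real.exp_lt_one_iff, neg_lt_zero]
  have hπ := Real.pi_pos
  have him : 0 < τ.im := hτ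
  positivity


lemma GTwo_diffOn : DifferentiableOn ℂ GTwo UHP := by
  have key : DifferentiableOn ℂ (fun τ : ℂ => ∑' n : ℕ,
      ((n : ℂ) + 1) * Complex.exp (2 * (Real.pi : ℂ) * I * τ) ^ (n + 1) /
      (1 - Complex.exp (2 * (Real.pi : ℂ) * I * τ) ^ (n + 1))) UHP := by
    intro τ₀ hτ₀
    set w : ℂ → ℂ := fun τ => Complex.exp (2 * (Real.pi : ℂ) * I * τ) with hw
    have hw_diff : Differentiable ℂ w := by
      exact (Complex.differentiable_exp).comp (differentiable_id.const_mul _)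
    set r : ℝ := ‖w τ₀‖ with hr
    have hr1 : r < 1 := abs_qexp_lt_one hτ₀
    have hr0 : 0 ≤ r := norm_nonneg _
    set ρ : ℝ := (r + 1) / 2 with hρ
    have hρ1 : ρ < 1 := by rw [hρ]; linarith
    have hρ0 : 0 ≤ ρ := by rw [hρ]; linarith
    have hrρ : r < ρ := by rw [hρ]; linarith
    set V : Set ℂ := {τ | ‖w τ‖ < ρ} with hV
    have hVopen : IsOpen V := by
      have : Continuous fun τ => ‖w τ‖ :=
        hw_diff.continuous.norm
      exact isOpen_lt this continuous_const
    have hτ₀V : τ₀ ∈ V := hrρ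
    have hbound : ∀ (n : ℕ) (τ : ℂ), τ ∈ V →
        ‖w τ ^ (n + 1)‖ ≤ ρ ^ (n + 1) := by
      intro n τ hτ
      rw [norm_pow]
      exact pow_le_pow_left₀ (norm_nonneg _) (le_of_lt hτ) _
    have hden : ∀ (n : ℕ) (τ : ℂ), τ ∈ V → 1 - w τ ^ (n + 1) ≠ 0 := by
      intro n τ hτ
      intro h
      have h1 : w τ ^ (n + 1) = 1 := by linear_combination -h
      have h2 := hbound n τ hτ
      rw [h1] at h2
      simp only [norm_one] at h2
      have h3 : ρ ^ (n + 1) ≤ 1 := pow_le_one₀ hρ0 (le_of_lt hρ1)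
      have h4 : ρ ^ (n + 1) < 1 := pow_lt_one₀ hρ0 hρ1 (Nat.succ_ne_zero n)
      linarith
    have hsum : Summable (fun n : ℕ => ((n : ℝ) + 1) * ρ ^ (n + 1) / (1 - ρ)) := by
      apply Summable.div_const
      have h1 : Summable (fun n : ℕ => (n : ℝ) * ρ ^ n) := by
        simpa using summable_pow_mul_geometric_of_norm_lt_one 1 (by rwa [Real.norm_eq_abs, _root_.abs_of_nonneg hρ0])
      have h2 : Summable (fun n : ℕ => ρ ^ n) := summable_geometric_of_lt_one hρ0 hρ1
      have := (h1.add h2).mul_left ρ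
      apply this.congr
      intro n; ring
    have hdiff : DifferentiableOn ℂ (fun τ : ℂ => ∑' n : ℕ,
        ((n : ℂ) + 1) * w τ ^ (n + 1) / (1 - w τ ^ (n + 1))) V := by
      apply differentiableOn_tsum_of_summable_norm hsum _ hVopen
      · intro n τ hτ
        have hd := hden n τ hτ
        have h1 : ‖((n : ℂ) + 1) * w τ ^ (n + 1)‖ ≤ ((n : ℝ) + 1) * ρ ^ (n + 1) := by
          rw [norm_mul]
          apply mul_le_mul _ (hbound n τ hτ) (norm_nonneg _) (by positivity)
          have : ((n : ℂ) + 1) = ((n + 1 : ℕ) : ℂ) := by push_cast; ring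
          rw [this, Complex.norm_natCast]; push_cast; exact le_refl _
        have h2 : 1 - ρ ≤ ‖1 - w τ ^ (n + 1)‖ := by
          have h3 := norm_sub_norm_le (1 : ℂ) (w τ ^ (n + 1))
          rw [norm_one] at h3
          have h5 : ρ ^ (n + 1) ≤ ρ := pow_le_of_le_one hρ0 hρ1.le (Nat.succ_ne_zero n)
          linarith [hbound n τ hτ]
        rw [norm_div]
        have hden' : 0 < ‖1 - w τ ^ (n + 1)‖ := by
          have := norm_pos_iff.mpr (hden n τ hτ)
          exact this
        rw [div_le_div_iff₀ hden' (by linarith : (0:ℝ) < 1 - ρ)]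
        calc ‖((n : ℂ) + 1) * w τ ^ (n + 1)‖ * (1 - ρ)
            ≤ (((n : ℝ) + 1) * ρ ^ (n + 1)) * (1 - ρ) := by
              apply mul_le_mul_of_nonneg_right h1 (by linarith)
          _ ≤ (((n : ℝ) + 1) * ρ ^ (n + 1)) * ‖1 - w τ ^ (n + 1)‖ := by
              apply mul_le_mul_of_nonneg_left h2 (by positivity)
      · intro n
        apply DifferentiableOn.div
        · exact (((hw_diff.pow _).const_mul _).differentiableOn)
        · exact ((differentiable_const _).sub (hw_diff.pow _)).differentiableOn
        · exact hden n
    exact ((hdiff.differentiableAt (hVopen.mem_nhds hτ₀V)).differentiableWithinAt)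
  have : GTwo = fun τ => -(1/12) + 2 * (fun τ : ℂ => ∑' n : ℕ,
      ((n : ℂ) + 1) * Complex.exp (2 * (Real.pi : ℂ) * I * τ) ^ (n + 1) /
      (1 - Complex.exp (2 * (Real.pi : ℂ) * I * τ) ^ (n + 1))) τ := rfl
  rw [this]
  exact (differentiableOn_const _).add ((key.const_smul (2:ℂ)).congr (by intro x hx; simp [smul_eq_mul]))

lemma ramD_zero_fun : ramD (fun _ => (0:ℂ)) = fun _ => 0 := by
  funext τ; unfold ramD; simp

noncomputable def Bc (Gf Qf : ℂ → ℂ) (m : ℕ) : ℕ → ℕ → ℂ → ℂ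
  | 0, k => if k = 1 then fun _ => 1 else fun _ => 0
  | 1, k =>
      if k = 0 then fun τ => (m : ℂ) * Qf τ
      else if k = 1 then fun τ => 2 * Gf τ
      else if k = 2 then fun _ => 1 else fun _ => 0
  | (i+2), k => fun τ =>
      ramD (Bc Gf Qf m (i+1) k) τ
      + (if k = 0 then 0 else Bc Gf Qf m (i+1) (k-1) τ)
      + (2 * ((i:ℂ)+1) + 2) * Gf τ * Bc Gf Qf m (i+1) k τ
      + (((i:ℂ)+1) + 1) * ((m:ℂ) - ((i:ℂ)+1)) * Qf τ * Bc Gf Qf m i k τ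

lemma Bc_zero (Gf Qf : ℂ → ℂ) (m : ℕ) : ∀ i k, i + 2 ≤ k → Bc Gf Qf m i k = fun _ => 0 := by
  intro i
  induction i using Nat.strong_induction_on with
  | _ i IH =>
    match i with
    | 0 => intro k hk; unfold Bc; rw [if_neg (by omega)]
    | 1 => intro k hk; unfold Bc
           rw [if_neg (by omega), if_neg (by omega), if_neg (by omega)]
    | (i+2) =>
      intro k hk
      funext τ
      unfold Bc
      rw [IH (i+1) (by omega) k (by omega), IH (i+1) (by omega) (k-1) (by omega),
        IH i (by omega) k (by omega), if_neg (by omega), ramD_zero_fun]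
      simp

lemma Bc_top (Gf Qf : ℂ → ℂ) (m : ℕ) : ∀ i, Bc Gf Qf m i (i+1) = fun _ => 1 := by
  intro i
  induction i using Nat.strong_induction_on with
  | _ i IH =>
    match i with
    | 0 => unfold Bc; rw [if_pos rfl]
    | 1 => unfold Bc; rw [if_neg (by omega), if_neg (by omega), if_pos rfl]
    | (i+2) =>
      funext τ
      unfold Bc
      rw [Bc_zero Gf Qf m (i+1) (i+3) (by omega), Bc_zero Gf Qf m i (i+3) (by omega),
        if_neg (by omega), ramD_zero_fun]
      have : i + 3 - 1 = i + 2 := by omega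
      rw [this, IH (i+1) (by omega)]
      simp

lemma Bc_diffOn {Gf Qf : ℂ → ℂ} (hG : DifferentiableOn ℂ Gf UHP)
    (hQ : DifferentiableOn ℂ Qf UHP) (m : ℕ) :
    ∀ i k, DifferentiableOn ℂ (Bc Gf Qf m i k) UHP := by
  intro i
  induction i using Nat.strong_induction_on with
  | _ i IH =>
    match i with
    | 0 =>
      intro k; unfold Bc
      split
      · exact differentiableOn_const _
      · exact differentiableOn_const _
    | 1 =>
      intro k; unfold Bc
      split
      · exact (differentiableOn_const _).mul hQ
      · split
        · exact (differentiableOn_const _).mul hG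
        · split
          · exact differentiableOn_const _
          · exact differentiableOn_const _
    | (i+2) =>
      intro k
      have d1 : DifferentiableOn ℂ (ramD (Bc Gf Qf m (i+1) k)) UHP :=
        ramD_diffOn (IH (i+1) (by omega) k)
      have d2 : DifferentiableOn ℂ
          (fun τ => if k = 0 then (0:ℂ) else Bc Gf Qf m (i+1) (k-1) τ) UHP := by
        split
        · exact differentiableOn_const _
        · exact IH (i+1) (by omega) (k-1)
      have d3 : DifferentiableOn ℂ
          (fun τ => (2 * ((i:ℂ)+1) + 2) * Gf τ * Bc Gf Qf m (i+1) k τ) UHP :=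
        (((differentiableOn_const _).mul hG).mul (IH (i+1) (by omega) k))
      have d4 : DifferentiableOn ℂ
          (fun τ => (((i:ℂ)+1) + 1) * ((m:ℂ) - ((i:ℂ)+1)) * Qf τ * Bc Gf Qf m i k τ) UHP :=
        (((differentiableOn_const _).mul hQ).mul (IH i (by omega) k))
      exact ((d1.add d2).add d3).add d4

lemma iter_diffOn {a : ℂ → ℂ} (h : DifferentiableOn ℂ a UHP) :
    ∀ k, DifferentiableOn ℂ (ramD^[k] a) UHP := by
  intro k
  induction k with
  | zero => exact h
  | succ k ih => rw [Function.iterate_succ_apply']; exact ramD_diffOn ih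

lemma diffAt_of_on {a : ℂ → ℂ} (h : DifferentiableOn ℂ a UHP) {τ : ℂ} (hτ : τ ∈ UHP) :
    DifferentiableAt ℂ a τ :=
  h.differentiableAt (isOpen_UHP.mem_nhds hτ)

lemma sigma_rule (m : ℕ) (Qf y : ℂ → ℂ)
    (hy : DifferentiableOn ℂ y UHP) (hy' : DifferentiableOn ℂ (ramD y) UHP)
    (hode : ∀ τ ∈ UHP, ramD (ramD y) τ = -(2 * GTwo τ * ramD y τ) - Qf τ * y τ)
    (l : ℕ) (hl1 : 1 ≤ l) (hlm : l ≤ m) :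
    ∀ τ ∈ UHP,
      ramD (fun z => y z ^ (m - l) * ramD y z ^ l) τ
        = ((m:ℂ) - l) * (y τ ^ (m - (l+1)) * ramD y τ ^ (l+1))
          - 2 * l * GTwo τ * (y τ ^ (m - l) * ramD y τ ^ l)
          - l * Qf τ * (y τ ^ (m - (l-1)) * ramD y τ ^ (l-1)) := by
  intro τ hτ
  have hyd := diffAt_of_on hy hτ
  have hy'd := diffAt_of_on hy' hτ
  rw [ramD_mul (hyd.fun_pow _) (hy'd.fun_pow _), ramD_pow _ hyd, ramD_pow _ hy'd, hode τ hτ]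
  have e1 : m - (l+1) = (m - l) - 1 := by omega
  have e2 : m - (l-1) = (m - l) + 1 := by omega
  have e3 : (l-1) + 1 = l := by omega
  have hcast : ((m - l : ℕ) : ℂ) = (m:ℂ) - l := by
    push_cast [hlm]; ring
  rw [e1, e2, hcast]
  have p1 : ramD y τ ^ (l+1) = ramD y τ ^ l * ramD y τ := pow_succ _ _
  have p2 : y τ ^ ((m-l)+1) = y τ ^ (m-l) * y τ := pow_succ _ _
  have p3 : ramD y τ ^ l = ramD y τ ^ (l-1) * ramD y τ := by
    conv_lhs => rw [← e3]
    exact pow_succ _ _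
  rw [p1, p2, p3]
  ring

lemma main_ind (m : ℕ) (hm : 1 ≤ m) (Qf : ℂ → ℂ) (hQ : DifferentiableOn ℂ Qf UHP)
    (y : ℂ → ℂ) (hy : DifferentiableOn ℂ y UHP)
    (hode : ∀ τ ∈ UHP, ramD (ramD y) τ = -(2 * GTwo τ * ramD y τ) - Qf τ * y τ)
    (Y : ℂ → ℂ) (hYdef : Y = fun z => y z ^ m) :
    ∀ i, i ≤ m → ∀ τ ∈ UHP,
      ∑ k ∈ Finset.range (i+2), Bc GTwo Qf m i k τ * (ramD^[k] Y) τ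
        = ((m.descFactorial (i+1) : ℕ) : ℂ) * (y τ ^ (m - (i+1)) * ramD y τ ^ (i+1)) := by
  have hy' : DifferentiableOn ℂ (ramD y) UHP := ramD_diffOn hy
  have hY : DifferentiableOn ℂ Y UHP := by rw [hYdef]; exact hy.pow m
  have hDkY : ∀ k, DifferentiableOn ℂ (ramD^[k] Y) UHP := iter_diffOn hY
  have hDY1 : ∀ x ∈ UHP, ramD Y x = (m:ℂ) * (y x ^ (m-1) * ramD y x) := by
    intro x hx
    rw [hYdef, ramD_pow m (diffAt_of_on hy hx)]

    ring
  intro i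
  induction i using Nat.strong_induction_on with
  | _ i IH =>
    match i with
    | 0 =>
      intro _ τ hτ
      rw [Finset.sum_range_succ, Finset.sum_range_succ, Finset.sum_range_zero]
      show 0 + Bc GTwo Qf m 0 0 τ * (ramD^[0] Y) τ + Bc GTwo Qf m 0 1 τ * (ramD^[1] Y) τ = _
      unfold Bc
      rw [if_neg (by omega), if_pos rfl]
      simp only [Function.iterate_zero, Function.iterate_one, id_eq]
      rw [hDY1 τ hτ]
      simp [Nat.descFactorial]
    | 1 =>
      intro h1m τ hτ
      rw [Finset.sum_range_succ, Finset.sum_range_succ, Finset.sum_range_succ,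
        Finset.sum_range_zero]
      show 0 + Bc GTwo Qf m 1 0 τ * (ramD^[0] Y) τ + Bc GTwo Qf m 1 1 τ * (ramD^[1] Y) τ
        + Bc GTwo Qf m 1 2 τ * (ramD^[2] Y) τ = _
      unfold Bc
      rw [if_pos rfl, if_neg (by omega), if_pos rfl, if_neg (by omega), if_neg (by omega),
        if_pos rfl]
      have hD2 : (ramD^[2] Y) τ = (m:ℂ) * (((m:ℂ) - 1) * (y τ ^ (m - 2) * ramD y τ ^ 2)
          - 2 * 1 * GTwo τ * (y τ ^ (m - 1) * ramD y τ ^ 1)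
          - 1 * Qf τ * (y τ ^ (m - 0) * ramD y τ ^ 0)) := by
        show ramD (ramD^[1] Y) τ = _
        rw [Function.iterate_one]
        rw [ramD_congr hDY1 hτ, ramD_const_mul]
        congr 1
        have := sigma_rule m Qf y hy hy' hode 1 le_rfl h1m τ hτ
        simpa using this
      rw [hD2]
      simp only [Function.iterate_zero, Function.iterate_one, id_eq]
      rw [hDY1 τ hτ]
      have hcast : ((m.descFactorial 2 : ℕ) : ℂ) = ((m:ℂ) - 1) * (m:ℂ) := by
        rw [show (2:ℕ) = 1 + 1 from rfl, Nat.descFactorial_succ, Nat.descFactorial_one]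
        push_cast [Nat.cast_sub h1m]
        ring
      rw [hcast]
      simp only [Nat.sub_zero, pow_zero, pow_one, hYdef]
      norm_num
      ring
    | (i+2) =>

      intro him τ hτ
      have hi1 : i + 1 ≤ m := by omega
      have hi2 : i + 2 ≤ m := by omega
      have H1 := IH (i+1) (by omega) hi1
      have H0 := IH i (by omega) (by omega)
      have hBd : ∀ j k, DifferentiableAt ℂ (Bc GTwo Qf m j k) τ :=
        fun j k => diffAt_of_on (Bc_diffOn GTwo_diffOn hQ m j k) hτ
      have hYd : ∀ k, DifferentiableAt ℂ (ramD^[k] Y) τ :=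
        fun k => diffAt_of_on (hDkY k) hτ
      have hsplit : ∀ k ∈ Finset.range (i+4),
          Bc GTwo Qf m (i+2) k τ * (ramD^[k] Y) τ
            = ramD (Bc GTwo Qf m (i+1) k) τ * (ramD^[k] Y) τ
              + (if k = 0 then 0 else Bc GTwo Qf m (i+1) (k-1) τ) * (ramD^[k] Y) τ
              + (2 * ((i:ℂ)+1) + 2) * GTwo τ * (Bc GTwo Qf m (i+1) k τ * (ramD^[k] Y) τ)
              + (((i:ℂ)+1) + 1) * ((m:ℂ) - ((i:ℂ)+1)) * Qf τ
                  * (Bc GTwo Qf m i k τ * (ramD^[k] Y) τ) := by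
        intro k _
        show (ramD (Bc GTwo Qf m (i+1) k) τ
          + (if k = 0 then 0 else Bc GTwo Qf m (i+1) (k-1) τ)
          + (2 * ((i:ℂ)+1) + 2) * GTwo τ * Bc GTwo Qf m (i+1) k τ
          + (((i:ℂ)+1) + 1) * ((m:ℂ) - ((i:ℂ)+1)) * Qf τ * Bc GTwo Qf m i k τ)
            * (ramD^[k] Y) τ = _
        ring
      rw [Finset.sum_congr rfl hsplit, Finset.sum_add_distrib, Finset.sum_add_distrib,
        Finset.sum_add_distrib, ← Finset.mul_sum, ← Finset.mul_sum]
      have hA : ∑ k ∈ Finset.range (i+4), ramD (Bc GTwo Qf m (i+1) k) τ * (ramD^[k] Y) τ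
          = ∑ k ∈ Finset.range (i+3), ramD (Bc GTwo Qf m (i+1) k) τ * (ramD^[k] Y) τ := by
        rw [Finset.sum_range_succ, Bc_zero GTwo Qf m (i+1) (i+3) (by omega), ramD_zero_fun]
        simp
      have hB : ∑ k ∈ Finset.range (i+4),
          (if k = 0 then 0 else Bc GTwo Qf m (i+1) (k-1) τ) * (ramD^[k] Y) τ
          = ∑ k ∈ Finset.range (i+3), Bc GTwo Qf m (i+1) k τ * (ramD^[k+1] Y) τ := by
        rw [Finset.sum_range_succ']
        simp
      have hC : ∑ k ∈ Finset.range (i+4), Bc GTwo Qf m (i+1) k τ * (ramD^[k] Y) τ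
          = ∑ k ∈ Finset.range (i+3), Bc GTwo Qf m (i+1) k τ * (ramD^[k] Y) τ := by
        rw [Finset.sum_range_succ, Bc_zero GTwo Qf m (i+1) (i+3) (by omega)]
        simp
      have hD : ∑ k ∈ Finset.range (i+4), Bc GTwo Qf m i k τ * (ramD^[k] Y) τ
          = ∑ k ∈ Finset.range (i+2), Bc GTwo Qf m i k τ * (ramD^[k] Y) τ := by
        rw [Finset.sum_range_succ, Finset.sum_range_succ,
          Bc_zero GTwo Qf m i (i+3) (by omega), Bc_zero GTwo Qf m i (i+2) (by omega)]
        simp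
      rw [hA, hB, hC, hD]
      have hPhi : ramD (fun x => ∑ k ∈ Finset.range (i+3),
            Bc GTwo Qf m (i+1) k x * (ramD^[k] Y) x) τ
          = (∑ k ∈ Finset.range (i+3), ramD (Bc GTwo Qf m (i+1) k) τ * (ramD^[k] Y) τ)
            + ∑ k ∈ Finset.range (i+3), Bc GTwo Qf m (i+1) k τ * (ramD^[k+1] Y) τ := by
        rw [ramD_sum _ (fun k _ => (hBd (i+1) k).fun_mul (hYd k)), ← Finset.sum_add_distrib]
        apply Finset.sum_congr rfl
        intro k _
        rw [ramD_mul (hBd (i+1) k) (hYd k), Function.iterate_succ_apply']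
      rw [← hPhi]
      have hΦ1 : ramD (fun x => ∑ k ∈ Finset.range (i+3),
            Bc GTwo Qf m (i+1) k x * (ramD^[k] Y) x) τ
          = ((m.descFactorial (i+1+1) : ℕ) : ℂ) *
              (((m:ℂ) - (i+1+1 : ℕ)) * (y τ ^ (m - (i+1+1+1)) * ramD y τ ^ (i+1+1+1))
               - 2 * (i+1+1 : ℕ) * GTwo τ * (y τ ^ (m - (i+1+1)) * ramD y τ ^ (i+1+1))
               - (i+1+1 : ℕ) * Qf τ * (y τ ^ (m - (i+1+1-1)) * ramD y τ ^ (i+1+1-1))) := by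
        rw [ramD_congr (fun x hx => H1 x hx) hτ, ramD_const_mul]
        congr 1
        exact sigma_rule m Qf y hy hy' hode (i+1+1) (by omega) (by omega) τ hτ
      rw [hΦ1, H1 τ hτ, H0 τ hτ]
      have hγ2 : ((m.descFactorial (i+2+1) : ℕ) : ℂ)
          = ((m:ℂ) - ((i:ℂ)+2)) * ((m.descFactorial (i+2) : ℕ) : ℂ) := by
        rw [Nat.descFactorial_succ]
        push_cast [Nat.cast_sub hi2]
        ring
      have hγ1 : ((m.descFactorial (i+2) : ℕ) : ℂ)
          = ((m:ℂ) - ((i:ℂ)+1)) * ((m.descFactorial (i+1) : ℕ) : ℂ) := by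
        rw [show i+2 = (i+1)+1 from rfl, Nat.descFactorial_succ]
        push_cast [Nat.cast_sub hi1]
        ring
      simp only [show i+1+1 = i+2 from rfl, show i+1+1+1 = i+3 from rfl,
        show i+1+1-1 = i+1 from rfl, show i+2+1 = i+3 from rfl]
      rw [hγ2, hγ1]
      push_cast
      ring

lemma iter_sum (n : ℕ) (c : ℕ → ℂ) (e : ℕ → ℂ → ℂ)
    (he : ∀ j, DifferentiableOn ℂ (e j) UHP) :
    ∀ k, ∀ τ ∈ UHP,
      ramD^[k] (fun z => ∑ j ∈ Finset.range n, c j * e j z) τ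
        = ∑ j ∈ Finset.range n, c j * (ramD^[k] (e j)) τ := by
  intro k
  induction k with
  | zero => intro τ _; simp
  | succ k ih =>
    intro τ hτ
    rw [Function.iterate_succ_apply', ramD_congr ih hτ,
      ramD_sum _ (fun j _ => ((iter_diffOn (he j) k).differentiableAt
        (isOpen_UHP.mem_nhds hτ)).const_mul (c j))]
    apply Finset.sum_congr rfl
    intro j _
    rw [ramD_const_mul, Function.iterate_succ_apply']

lemma poly_extract (n : ℕ) (d : ℕ → ℂ)
    (h : ∀ α : ℂ, ∑ j ∈ Finset.range (n+1), α ^ (n - j) * d j = 0) :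
    ∀ j ≤ n, d j = 0 := by
  intro j hj
  set p : Polynomial ℂ := ∑ j ∈ Finset.range (n+1), Polynomial.C (d j) * Polynomial.X ^ (n-j)
    with hp
  have hpz : p = 0 := by
    apply Polynomial.funext
    intro α
    rw [hp]
    simp only [Polynomial.eval_finset_sum, Polynomial.eval_mul, Polynomial.eval_C,
      Polynomial.eval_pow, Polynomial.eval_X, Polynomial.eval_zero]
    rw [← h α]
    apply Finset.sum_congr rfl
    intro j _
    ring
  have hcoeff : p.coeff (n - j) = d j := by
    rw [hp, Polynomial.finset_sum_coeff]
    rw [Finset.sum_eq_single_of_mem j (Finset.mem_range.mpr (by omega))]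
    · simp [Polynomial.coeff_C_mul, Polynomial.coeff_X_pow]
    · intro b hb hbj
      have hb' := Finset.mem_range.mp hb
      have hne : ¬((n - j : ℕ) = n - b) := by omega
      simp only [Polynomial.coeff_C_mul, Polynomial.coeff_X_pow]
      rw [if_neg hne, mul_zero]
  rw [hpz] at hcoeff
  simpa using hcoeff.symm

lemma Bc_matches_R (m : ℕ) (hm : 2 ≤ m) (Qf : ℂ → ℂ) (R : ℕ → ℂ → ℂ)
    (hR1 : R 1 = fun τ => (m : ℂ) * Qf τ)
    (hR2 : R 2 = fun τ => (m : ℂ) * (ramD Qf τ + 4 * GTwo τ * Qf τ))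
    (hRrec : ∀ i : ℕ, 2 ≤ i → i ≤ m - 1 →
      R (i + 1) = fun τ => ramD (R i) τ + (2 * (i : ℂ) + 2) * GTwo τ * R i τ +
        ((i : ℂ) + 1) * ((m : ℂ) - (i : ℂ)) * Qf τ * R (i - 1) τ) :
    ∀ i, 1 ≤ i → i ≤ m → Bc GTwo Qf m i 0 = R i := by
  intro i
  induction i using Nat.strong_induction_on with
  | _ i IH =>
    match i with
    | 0 => intro h _; omega
    | 1 =>
      intro _ _
      rw [hR1]; unfold Bc; rw [if_pos rfl]
    | (i+2) =>
      cases i with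
      | zero =>
        intro _ h2m
        funext τ
        have hR2' : R (0+2) τ = (m : ℂ) * (ramD Qf τ + 4 * GTwo τ * Qf τ) :=
          congrFun hR2 τ
        rw [hR2']
        simp only [Bc]
        norm_num
        rw [ramD_const_mul]
        ring
      | succ j =>
        intro _ him
        have e1 : Bc GTwo Qf m (j+2) 0 = R (j+2) := IH (j+2) (by omega) (by omega) (by omega)
        have e0 : Bc GTwo Qf m (j+1) 0 = R (j+1) := IH (j+1) (by omega) (by omega) (by omega)
        funext τ
        have goalr : R (j+1+2) τ = ramD (R (j+2)) τ
            + (2 * ((j+2 : ℕ) : ℂ) + 2) * GTwo τ * R (j+2) τ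
            + (((j+2 : ℕ) : ℂ) + 1) * ((m:ℂ) - ((j+2 : ℕ) : ℂ)) * Qf τ * R (j+1) τ :=
          congrFun (hRrec (j+2) (by omega) (by omega)) τ
        rw [goalr, ← e1, ← e0]
        simp only [Bc]
        norm_num
        push_cast
        ring


/-- if `f, g` are holomorphic solutions of
`(q d/dq)²y + 2·G₂·(q d/dq)y + Q·y = 0` on `ℍ` with nowhere-vanishing Wronskian,
and `R₁,…,R_m` are given by the recursion `R₁ = mQ`,
`R₂ = m(ΘQ + 4G₂Q)`, `R_{i+1} = ΘR_i + (2i+2)G₂R_i + (i+1)(m−i)QR_{i−1}`,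
then the Wronskian of the derivatives `(f^{m-j}g^j)'` equals
`(−1)^{m+1}·R_m` times the Wronskian of the `f^{m-j}g^j` on `ℍ`. -/
theorem stmt_11 (m : ℕ) (hm : 2 ≤ m) (Q f g : ℂ → ℂ)
    (hQ : DifferentiableOn ℂ Q UHP)
    (hf : DifferentiableOn ℂ f UHP) (hg : DifferentiableOn ℂ g UHP)
    (hW : ∀ τ ∈ UHP, f τ * ramD g τ - g τ * ramD f τ ≠ 0)
    (hfode : ∀ τ ∈ UHP, ramD (ramD f) τ + 2 * GTwo τ * ramD f τ + Q τ * f τ = 0)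
    (hgode : ∀ τ ∈ UHP, ramD (ramD g) τ + 2 * GTwo τ * ramD g τ + Q τ * g τ = 0)
    (R : ℕ → ℂ → ℂ)
    (hR1 : R 1 = fun τ => (m : ℂ) * Q τ)
    (hR2 : R 2 = fun τ => (m : ℂ) * (ramD Q τ + 4 * GTwo τ * Q τ))
    (hRrec : ∀ i : ℕ, 2 ≤ i → i ≤ m - 1 →
      R (i + 1) = fun τ => ramD (R i) τ + (2 * (i : ℂ) + 2) * GTwo τ * R i τ +
        ((i : ℂ) + 1) * ((m : ℂ) - (i : ℂ)) * Q τ * R (i - 1) τ) :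
    ∀ τ ∈ UHP,
      Matrix.det (Matrix.of fun i j : Fin (m + 1) =>
          (ramD^[(i : ℕ)] (ramD (fun z => f z ^ (m - (j : ℕ)) * g z ^ (j : ℕ)))) τ)
        = (-1) ^ (m + 1) * R m τ *
          Matrix.det (Matrix.of fun i j : Fin (m + 1) =>
            (ramD^[(i : ℕ)] (fun z => f z ^ (m - (j : ℕ)) * g z ^ (j : ℕ))) τ) := by
  intro τ hτ
  have hy_diff : ∀ α β : ℂ, DifferentiableOn ℂ (fun z => α * f z + β * g z) UHP :=
    fun α β => ((differentiableOn_const α).mul hf).add ((differentiableOn_const β).mul hg)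
  have hode_y : ∀ α β : ℂ, ∀ x ∈ UHP,
      ramD (ramD (fun z => α * f z + β * g z)) x
        = -(2 * GTwo x * ramD (fun z => α * f z + β * g z) x) - Q x * (α * f x + β * g x) := by
    intro α β x hx
    have h1 : ∀ z ∈ UHP, ramD (fun z => α * f z + β * g z) z
        = α * ramD f z + β * ramD g z := by
      intro z hz
      rw [ramD_add ((diffAt_of_on hf hz).const_mul α) ((diffAt_of_on hg hz).const_mul β),
        ramD_const_mul, ramD_const_mul]
    rw [ramD_congr h1 hx,
      ramD_add ((diffAt_of_on (ramD_diffOn hf) hx).const_mul α)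
        ((diffAt_of_on (ramD_diffOn hg) hx).const_mul β),
      ramD_const_mul, ramD_const_mul, h1 x hx]
    have hf0 := hfode x hx
    have hg0 := hgode x hx
    linear_combination α * hf0 + β * hg0
  have hbinom : ∀ α : ℂ, (fun z => (α * f z + 1 * g z) ^ m)
      = fun z => ∑ j ∈ Finset.range (m+1),
          (α^(m-j) * (m.choose j : ℂ)) * (f z ^ (m-j) * g z ^ j) := by
    intro α; funext z
    rw [add_comm (α * f z), add_pow]
    apply Finset.sum_congr rfl
    intro j hj
    ring
  have hcol : ∀ j : ℕ, j ≤ m → ∑ k ∈ Finset.range (m+2),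
      Bc GTwo Q m m k τ * (ramD^[k] (fun z => f z ^ (m-j) * g z ^ j)) τ = 0 := by
    have hper : ∀ α : ℂ, ∑ j ∈ Finset.range (m+1), α^(m-j) * ((m.choose j : ℂ) *
        (∑ k ∈ Finset.range (m+2),
          Bc GTwo Q m m k τ * (ramD^[k] (fun z => f z ^ (m-j) * g z ^ j)) τ)) = 0 := by
      intro α
      have hmain := main_ind m (by omega) Q hQ (fun z => α * f z + 1 * g z) (hy_diff α 1)
        (hode_y α 1) (fun z => (α * f z + 1 * g z) ^ m) rfl m le_rfl τ hτ
      have hz : ((m.descFactorial (m+1) : ℕ) : ℂ) = 0 := by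
        rw [Nat.descFactorial_eq_zero_iff_lt.mpr (by omega)]
        simp
      rw [hz, zero_mul, hbinom α] at hmain
      have hswap : ∀ k ∈ Finset.range (m+2),
          Bc GTwo Q m m k τ * (ramD^[k] (fun z => ∑ j ∈ Finset.range (m+1),
            (α^(m-j) * (m.choose j : ℂ)) * (f z ^ (m-j) * g z ^ j))) τ
          = ∑ j ∈ Finset.range (m+1), (α^(m-j) * (m.choose j : ℂ)) *
              (Bc GTwo Q m m k τ * (ramD^[k] (fun z => f z ^ (m-j) * g z ^ j)) τ) := by
        intro k _
        rw [iter_sum (m+1) (fun j => α^(m-j) * (m.choose j : ℂ))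
          (fun j => fun z => f z ^ (m-j) * g z ^ j)
          (fun j => (hf.pow _).mul (hg.pow _)) k τ hτ, Finset.mul_sum]
        apply Finset.sum_congr rfl
        intro j _
        ring
      rw [Finset.sum_congr rfl hswap, Finset.sum_comm] at hmain
      rw [← hmain]
      apply Finset.sum_congr rfl
      intro j _
      rw [← Finset.mul_sum, mul_assoc]
    intro j hj
    have hd := poly_extract m (fun j => (m.choose j : ℂ) *
      (∑ k ∈ Finset.range (m+2),
        Bc GTwo Q m m k τ * (ramD^[k] (fun z => f z ^ (m-j) * g z ^ j)) τ)) hper j hj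
    have hC : ((m.choose j : ℕ) : ℂ) ≠ 0 := Nat.cast_ne_zero.mpr (Nat.choose_pos hj).ne'
    exact (mul_eq_zero.mp hd).resolve_left hC
  -- determinant part
  have hBR : Bc GTwo Q m m 0 = R m :=
    Bc_matches_R m hm Q R hR1 hR2 hRrec m (by omega) le_rfl
  set Mt : Matrix (Fin (m+1)) (Fin (m+1)) ℂ :=
    Matrix.of fun i j : Fin (m+1) =>
      (ramD^[(i : ℕ)] (fun z => f z ^ (m - (j : ℕ)) * g z ^ (j : ℕ))) τ with hMt
  set A : Matrix (Fin (m+1)) (Fin (m+1)) ℂ := Mt.submatrix (finRotate (m+1)) id with hA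
  have hD1 : ∀ j : Fin (m+1), (ramD^[m+1] (fun z => f z ^ (m - (j:ℕ)) * g z ^ (j:ℕ))) τ
      = ∑ k ∈ Finset.range (m+1),
          -(Bc GTwo Q m m k τ * (ramD^[k] (fun z => f z ^ (m - (j:ℕ)) * g z ^ (j:ℕ))) τ) := by
    intro j
    have h0 := hcol (j:ℕ) (by omega)
    rw [Finset.sum_range_succ, Bc_top] at h0
    rw [Finset.sum_neg_distrib]
    linear_combination h0
  have hLHS : (Matrix.of fun i j : Fin (m + 1) =>
      (ramD^[(i : ℕ)] (ramD (fun z => f z ^ (m - (j : ℕ)) * g z ^ (j : ℕ)))) τ)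
      = A.updateRow (Fin.last m)
          (∑ k : Fin (m+1), (-(Bc GTwo Q m m ((finRotate (m+1) k : ℕ)) τ)) • A k) := by
    ext i j
    by_cases hi : i = Fin.last m
    · subst hi
      rw [Matrix.updateRow_self]
      have hsum : (∑ k : Fin (m+1), (-(Bc GTwo Q m m ((finRotate (m+1) k : ℕ)) τ)) • A k) j
          = ∑ k : Fin (m+1), -(Bc GTwo Q m m ((finRotate (m+1) k : ℕ)) τ *
              (ramD^[((finRotate (m+1) k : ℕ))]
                (fun z => f z ^ (m - (j:ℕ)) * g z ^ (j:ℕ))) τ) := by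
        rw [Finset.sum_apply]
        apply Finset.sum_congr rfl
        intro k _
        simp only [hA, hMt, Pi.smul_apply, Matrix.submatrix_apply, Matrix.of_apply,
          id_eq, smul_eq_mul]
        ring
      rw [hsum]
      rw [Equiv.sum_comp (finRotate (m+1)) (fun r : Fin (m+1) =>
        -(Bc GTwo Q m m ((r : ℕ)) τ *
          (ramD^[(r:ℕ)] (fun z => f z ^ (m - (j:ℕ)) * g z ^ (j:ℕ))) τ))]
      rw [Fin.sum_univ_eq_sum_range (fun k : ℕ =>
        -(Bc GTwo Q m m k τ *
          (ramD^[k] (fun z => f z ^ (m - (j:ℕ)) * g z ^ (j:ℕ))) τ))]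
      show (ramD^[((Fin.last m : Fin (m+1)) : ℕ)]
        (ramD (fun z => f z ^ (m - (j:ℕ)) * g z ^ (j:ℕ)))) τ = _
      rw [Fin.val_last, ← Function.iterate_succ_apply]
      exact hD1 j
    · rw [Matrix.updateRow_ne hi]
      show (ramD^[(i:ℕ)] (ramD (fun z => f z ^ (m - (j:ℕ)) * g z ^ (j:ℕ)))) τ = _
      simp only [hA, hMt, Matrix.submatrix_apply, Matrix.of_apply, id_eq]
      rw [coe_finRotate_of_ne_last hi, ← Function.iterate_succ_apply]
  rw [hLHS, Matrix.det_updateRow_sum A (Fin.last m)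
    (fun k => -(Bc GTwo Q m m ((finRotate (m+1) k : ℕ)) τ))]
  have hcl : -(Bc GTwo Q m m ((finRotate (m+1) (Fin.last m) : ℕ)) τ) = -(R m τ) := by
    rw [finRotate_last]
    show -(Bc GTwo Q m m ((0 : Fin (m+1)) : ℕ) τ) = _
    rw [Fin.val_zero, hBR]
  show (-(Bc GTwo Q m m ((finRotate (m+1) (Fin.last m) : ℕ)) τ)) • A.det = _
  rw [hcl, hA, Matrix.det_permute, sign_finRotate]
  simp only [smul_eq_mul, Units.val_pow_eq_pow_val, Units.val_neg, Units.val_one,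
    Int.cast_pow, Int.cast_neg, Int.cast_one]
  rw [show m + 1 - 1 = m by omega]
  ring
end

section
/- Let Θ be the ℚ-linear derivation of the polynomial ring ℚ[X,Y] determined by Θ(X) = −(1/3)·Y and Θ(Y) = −(1/2)·X². Fix a positive integer m and set α = m/3, and for l ∈ ℕ define G_l = ∑_{r,s≥0, 2r+3s=l} (α(α−1)⋯(α−r−s+1)/(r!·s!))·(−3X)^r·(2Y)^s ∈ ℚ[X,Y] and Ḡ_l = (l!/6^l)·G_l. Then Ḡ₂ = −(m/18)·X, Ḡ₃ = (m/54)·Y, and for every integer l ≥ 4: Ḡ_l = Θ(Ḡ_{l−1}) + (l−1)(m−l+2)·(−X/18)·Ḡ_{l−2}. -/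
open Finset MvPolynomial

lemma fin2_eq_iff (d : Fin 2 →₀ ℕ) (r s : ℕ) :
    Finsupp.single 0 r + Finsupp.single 1 s = d ↔ r = d 0 ∧ s = d 1 := by
  constructor
  · rintro rfl
    constructor <;> simp [Finsupp.single_apply]
  · rintro ⟨rfl, rfl⟩
    ext i; fin_cases i <;> simp [Finsupp.single_apply]

lemma coeff_ee (d : Fin 2 →₀ ℕ) (r s : ℕ) :
    coeff d ((X 0:MvPolynomial (Fin 2) ℚ)^r * X 1 ^ s) = if r = d 0 ∧ s = d 1 then 1 else 0 := by
  have h : ((X 0:MvPolynomial (Fin 2) ℚ)^r * X 1 ^ s) = monomial (Finsupp.single 0 r + Finsupp.single 1 s) 1 := by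
    rw [X_pow_eq_monomial, X_pow_eq_monomial, monomial_mul, one_mul]
  rw [h, coeff_monomial]
  simp only [fin2_eq_iff]

lemma collapse_sum (n : ℕ) (F : ℕ → ℕ → ℚ) (a b : ℕ)
    (hF : ∀ r s, ¬(r = a ∧ s = b) → F r s = 0) :
    ∑ r ∈ range n, ∑ s ∈ range n, F r s = if a < n ∧ b < n then F a b else 0 := by
  by_cases ha : a < n ∧ b < n
  · rw [if_pos ha]
    rw [Finset.sum_eq_single a]
    · rw [Finset.sum_eq_single b]
      · intro s hs hsb; exact hF a s (by tauto)
      · intro hb; exact absurd (Finset.mem_range.2 ha.2) hb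
    · intro r hr hra
      exact Finset.sum_eq_zero fun s _ => hF r s (by tauto)
    · intro h; exact absurd (Finset.mem_range.2 ha.1) h
  · rw [if_neg ha]
    apply Finset.sum_eq_zero; intro r hr
    apply Finset.sum_eq_zero; intro s hs
    apply hF
    rintro ⟨rfl, rfl⟩
    exact ha ⟨Finset.mem_range.1 hr, Finset.mem_range.1 hs⟩

noncomputable def wq (m l r s : ℕ) : ℚ :=
  (l.factorial : ℚ) / 6 ^ l *
    ((descPochhammer ℚ (r + s)).eval ((m : ℚ) / 3) /
      ((r.factorial : ℚ) * (s.factorial : ℚ))) * (-3) ^ r * 2 ^ s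

noncomputable def GE (m l : ℕ) : MvPolynomial (Fin 2) ℚ :=
  C ((l.factorial : ℚ) / 6 ^ l) * ∑ r ∈ range (l + 1), ∑ s ∈ range (l + 1),
    if 2 * r + 3 * s = l then
      C ((descPochhammer ℚ (r + s)).eval ((m : ℚ) / 3) /
          ((r.factorial : ℚ) * (s.factorial : ℚ))) *
        (C (-3 : ℚ) * X 0) ^ r * (C (2 : ℚ) * X 1) ^ s
    else 0

lemma term_eq (m r s : ℕ) :
    (C ((descPochhammer ℚ (r + s)).eval ((m : ℚ) / 3) /
          ((r.factorial : ℚ) * (s.factorial : ℚ))) *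
        (C (-3 : ℚ) * X 0) ^ r * (C (2 : ℚ) * (X 1 : MvPolynomial (Fin 2) ℚ)) ^ s)
    = ((descPochhammer ℚ (r + s)).eval ((m : ℚ) / 3) /
          ((r.factorial : ℚ) * (s.factorial : ℚ)) * ((-3) ^ r * 2 ^ s)) • (X 0 ^ r * X 1 ^ s) := by
  rw [smul_eq_C_mul]
  simp only [map_mul, map_pow, mul_pow]
  ring

lemma coeff_GE (m l : ℕ) (d : Fin 2 →₀ ℕ) :
    coeff d (GE m l) = if 2 * d 0 + 3 * d 1 = l then wq m l (d 0) (d 1) else 0 := by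
  set c : ℕ → ℕ → ℚ := fun r s => (descPochhammer ℚ (r + s)).eval ((m : ℚ) / 3) /
      ((r.factorial : ℚ) * (s.factorial : ℚ)) with hc
  have hterm : ∀ r s : ℕ,
      coeff d (if 2 * r + 3 * s = l then
        C (c r s) * (C (-3 : ℚ) * X 0) ^ r * (C (2 : ℚ) * X 1) ^ s else 0)
      = if (2 * r + 3 * s = l) ∧ r = d 0 ∧ s = d 1 then c r s * ((-3) ^ r * 2 ^ s) else 0 := by
    intro r s
    by_cases h1 : 2 * r + 3 * s = l
    · rw [if_pos h1, term_eq, coeff_smul, smul_eq_mul, coeff_ee]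
      by_cases h3 : r = d 0 ∧ s = d 1
      · rw [if_pos h3, if_pos ⟨h1, h3⟩, mul_one]
      · rw [if_neg h3, if_neg (by tauto), mul_zero]
    · rw [if_neg h1, if_neg (by tauto), coeff_zero]
  rw [GE, coeff_C_mul, coeff_sum]
  simp only [hc] at hterm
  simp only [coeff_sum, hterm]
  rw [collapse_sum (l+1) _ (d 0) (d 1) (fun r s h => by rw [if_neg (by tauto)])]
  by_cases h : 2 * d 0 + 3 * d 1 = l
  · rw [if_pos ⟨by omega, by omega⟩, if_pos ⟨h, rfl, rfl⟩, if_pos h]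
    simp only [wq]; ring
  · rw [if_neg h]
    split_ifs with h2 h3
    · exact absurd h3.1 h
    · simp
    · simp

lemma theta_ee
    (Θ : Derivation ℚ (MvPolynomial (Fin 2) ℚ) (MvPolynomial (Fin 2) ℚ))
    (hΘX : Θ (X 0) = C (-(1 / 3) : ℚ) * X 1)
    (hΘY : Θ (X 1) = C (-(1 / 2) : ℚ) * X 0 ^ 2) (r s : ℕ) :
    Θ (X 0 ^ r * X 1 ^ s) =
      C ((r:ℚ)) * C (-(1/3) : ℚ) * (X 0 ^ (r-1) * X 1 ^ (s+1)) +
      C ((s:ℚ)) * C (-(1/2) : ℚ) * (X 0 ^ (r+2) * X 1 ^ (s-1)) := by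
  match r, s with
  | 0, 0 => simp
  | 0, s+1 =>
      simp only [Derivation.leibniz, Derivation.leibniz_pow, hΘX, hΘY, smul_eq_mul,
        nsmul_eq_mul, ← map_natCast (C : ℚ →+* MvPolynomial (Fin 2) ℚ)]
      simp
      ring
  | r+1, 0 =>
      simp only [Derivation.leibniz, Derivation.leibniz_pow, hΘX, hΘY, smul_eq_mul,
        nsmul_eq_mul, ← map_natCast (C : ℚ →+* MvPolynomial (Fin 2) ℚ)]
      simp
      ring
  | r+1, s+1 =>
      simp only [Derivation.leibniz, Derivation.leibniz_pow, hΘX, hΘY, smul_eq_mul,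
        nsmul_eq_mul, ← map_natCast (C : ℚ →+* MvPolynomial (Fin 2) ℚ)]
      simp only [Nat.add_sub_cancel]
      ring

lemma coeff_thetaGE
    (Θ : Derivation ℚ (MvPolynomial (Fin 2) ℚ) (MvPolynomial (Fin 2) ℚ))
    (hΘX : Θ (X 0) = C (-(1 / 3) : ℚ) * X 1)
    (hΘY : Θ (X 1) = C (-(1 / 2) : ℚ) * X 0 ^ 2)
    (m l : ℕ) (d : Fin 2 →₀ ℕ) :
    coeff d (Θ (GE m l)) =
      (if 1 ≤ d 1 ∧ 2 * (d 0 + 1) + 3 * (d 1 - 1) = l then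
        -((d 0 : ℚ) + 1) / 3 * wq m l (d 0 + 1) (d 1 - 1) else 0) +
      (if 2 ≤ d 0 ∧ 2 * (d 0 - 2) + 3 * (d 1 + 1) = l then
        -((d 1 : ℚ) + 1) / 2 * wq m l (d 0 - 2) (d 1 + 1) else 0) := by
  set c : ℕ → ℕ → ℚ := fun r s => (descPochhammer ℚ (r + s)).eval ((m : ℚ) / 3) /
      ((r.factorial : ℚ) * (s.factorial : ℚ)) with hc
  set a : ℚ := (l.factorial : ℚ) / 6 ^ l with hA
  -- the two pieces of the coefficient of Θ term
  set F1 : ℕ → ℕ → ℚ := fun r s =>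
    if 2 * r + 3 * s = l then
      a * (c r s * ((-3) ^ r * 2 ^ s)) * ((r : ℚ) * -(1/3)) *
        (if r - 1 = d 0 ∧ s + 1 = d 1 then 1 else 0) else 0 with hF1
  set F2 : ℕ → ℕ → ℚ := fun r s =>
    if 2 * r + 3 * s = l then
      a * (c r s * ((-3) ^ r * 2 ^ s)) * ((s : ℚ) * -(1/2)) *
        (if r + 2 = d 0 ∧ s - 1 = d 1 then 1 else 0) else 0 with hF2
  have hterm : ∀ r s : ℕ,
      a * coeff d (Θ (if 2 * r + 3 * s = l then
        C (c r s) * (C (-3 : ℚ) * X 0) ^ r * (C (2 : ℚ) * X 1) ^ s else 0))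
      = F1 r s + F2 r s := by
    intro r s
    simp only [hF1, hF2]
    by_cases h1 : 2 * r + 3 * s = l
    · rw [if_pos h1, term_eq, Θ.map_smul, theta_ee Θ hΘX hΘY, coeff_smul, smul_eq_mul,
        coeff_add,
        show (C (r:ℚ) * C (-(1/3):ℚ) : MvPolynomial (Fin 2) ℚ) = C ((r:ℚ) * -(1/3)) from
          (map_mul C _ _).symm,
        show (C (s:ℚ) * C (-(1/2):ℚ) : MvPolynomial (Fin 2) ℚ) = C ((s:ℚ) * -(1/2)) from
          (map_mul C _ _).symm,
        coeff_C_mul, coeff_C_mul, coeff_ee, coeff_ee, if_pos h1, if_pos h1]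
      ring
    · rw [if_neg h1, map_zero, coeff_zero, mul_zero, if_neg h1, if_neg h1, add_zero]
  have hsum : coeff d (Θ (GE m l)) = ∑ r ∈ range (l+1), ∑ s ∈ range (l+1), (F1 r s + F2 r s) := by
    rw [GE, ← smul_eq_C_mul, Θ.map_smul, coeff_smul, smul_eq_mul, map_sum, coeff_sum,
      Finset.mul_sum]
    refine Finset.sum_congr rfl fun r _ => ?_
    rw [map_sum, coeff_sum, Finset.mul_sum]
    exact Finset.sum_congr rfl fun s _ => hterm r s
  have hF1zero : ∀ r s, ¬(r = d 0 + 1 ∧ s = d 1 - 1) → F1 r s = 0 := by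
    intro r s h
    simp only [hF1]
    split_ifs with h1 h2
    · have hr : r = 0 := by omega
      subst hr; norm_num
    · simp
    · rfl
  have hF2zero : ∀ r s, ¬(r = d 0 - 2 ∧ s = d 1 + 1) → F2 r s = 0 := by
    intro r s h
    simp only [hF2]
    split_ifs with h1 h2
    · have hs : s = 0 := by omega
      subst hs; norm_num
    · simp
    · rfl
  rw [hsum]
  simp only [Finset.sum_add_distrib]
  rw [collapse_sum (l+1) F1 (d 0 + 1) (d 1 - 1) hF1zero,
      collapse_sum (l+1) F2 (d 0 - 2) (d 1 + 1) hF2zero]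
  congr 1
  · simp only [hF1]
    by_cases hT : 1 ≤ d 1 ∧ 2 * (d 0 + 1) + 3 * (d 1 - 1) = l
    · rw [if_pos (⟨by omega, by omega⟩ : d 0 + 1 < l + 1 ∧ d 1 - 1 < l + 1),
        if_pos hT.2, if_pos (⟨by omega, by omega⟩ : d 0 + 1 - 1 = d 0 ∧ d 1 - 1 + 1 = d 1),
        if_pos hT]
      simp only [wq, hc, hA]; push_cast; ring
    · rw [if_neg hT]
      split_ifs with h1 h2 h3
      · exact absurd (⟨by omega, by omega⟩ : 1 ≤ d 1 ∧ 2 * (d 0 + 1) + 3 * (d 1 - 1) = l) hT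
      · simp
      · simp
      · rfl
  · simp only [hF2]
    by_cases hT : 2 ≤ d 0 ∧ 2 * (d 0 - 2) + 3 * (d 1 + 1) = l
    · rw [if_pos (⟨by omega, by omega⟩ : d 0 - 2 < l + 1 ∧ d 1 + 1 < l + 1),
        if_pos hT.2, if_pos (⟨by omega, by omega⟩ : d 0 - 2 + 2 = d 0 ∧ d 1 + 1 - 1 = d 1),
        if_pos hT]
      simp only [wq, hc, hA]; push_cast; ring
    · rw [if_neg hT]
      split_ifs with h1 h2 h3
      · exact absurd (⟨by omega, by omega⟩ : 2 ≤ d 0 ∧ 2 * (d 0 - 2) + 3 * (d 1 + 1) = l) hT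
      · simp
      · simp
      · rfl

lemma coeff_third (m l : ℕ) (K : ℚ) (d : Fin 2 →₀ ℕ) :
    coeff d (C K * (C (-(1/18) : ℚ) * X 0) * GE m l) =
      if 1 ≤ d 0 ∧ 2 * (d 0 - 1) + 3 * d 1 = l then
        K * (-(1/18)) * wq m l (d 0 - 1) (d 1) else 0 := by
  have h : C K * (C (-(1/18) : ℚ) * X 0) * GE m l = (K * (-(1/18))) • (GE m l * X 0) := by
    rw [smul_eq_C_mul, map_mul]; ring
  rw [h, coeff_smul, coeff_mul_X']
  by_cases h0 : (0 : Fin 2) ∈ d.support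
  · rw [if_pos h0, coeff_GE]
    have e0 : (d - Finsupp.single 0 1 : Fin 2 →₀ ℕ) 0 = d 0 - 1 := by
      simp [Finsupp.sub_apply]
    have e1 : (d - Finsupp.single 0 1 : Fin 2 →₀ ℕ) 1 = d 1 := by
      simp [Finsupp.sub_apply, Finsupp.single_apply]
    rw [e0, e1]
    have hd0 : 1 ≤ d 0 := Nat.one_le_iff_ne_zero.2 (Finsupp.mem_support_iff.1 h0)
    by_cases hT : 2 * (d 0 - 1) + 3 * d 1 = l
    · rw [if_pos hT, if_pos ⟨hd0, hT⟩, smul_eq_mul]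
    · rw [if_neg hT, if_neg (by tauto), smul_zero]
  · rw [if_neg h0, smul_zero, if_neg]
    rintro ⟨h1, -⟩
    exact h0 (Finsupp.mem_support_iff.2 (by omega))

set_option maxHeartbeats 2000000 in
/-- in `ℚ[X,Y]` (with `X = E₄`, `Y = E₆`) let `Θ` be the derivation
with `Θ(X) = −(1/3)Y`, `Θ(Y) = −(1/2)X²`, and for a positive integer `m`, `α = m/3`,
let `G_l = ∑_{2r+3s=l} (α(α−1)⋯(α−r−s+1)/(r!s!))·(−3X)^r·(2Y)^s` and
`Ḡ_l = (l!/6^l)·G_l`.  Then `Ḡ₂ = −(m/18)X`, `Ḡ₃ = (m/54)Y`, and for every `l ≥ 4`,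
`Ḡ_l = Θ(Ḡ_{l−1}) + (l−1)(m−l+2)·(−X/18)·Ḡ_{l−2}`. -/
theorem stmt_18
    (Θ : Derivation ℚ (MvPolynomial (Fin 2) ℚ) (MvPolynomial (Fin 2) ℚ))
    (hΘX : Θ (X 0) = C (-(1 / 3) : ℚ) * X 1)
    (hΘY : Θ (X 1) = C (-(1 / 2) : ℚ) * X 0 ^ 2)
    (m : ℕ) (hm : 0 < m)
    (G : ℕ → MvPolynomial (Fin 2) ℚ)
    (hG : ∀ l : ℕ, G l = ∑ r ∈ range (l + 1), ∑ s ∈ range (l + 1),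
      if 2 * r + 3 * s = l then
        C ((descPochhammer ℚ (r + s)).eval ((m : ℚ) / 3) /
            ((r.factorial : ℚ) * (s.factorial : ℚ))) *
          (C (-3 : ℚ) * X 0) ^ r * (C (2 : ℚ) * X 1) ^ s
      else 0)
    (Gbar : ℕ → MvPolynomial (Fin 2) ℚ)
    (hGbar : ∀ l : ℕ, Gbar l = C ((l.factorial : ℚ) / 6 ^ l) * G l) :
    Gbar 2 = C (-(m : ℚ) / 18) * X 0 ∧
    Gbar 3 = C ((m : ℚ) / 54) * X 1 ∧
    ∀ l : ℕ, 4 ≤ l →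
      Gbar l = Θ (Gbar (l - 1)) +
        C (((l : ℚ) - 1) * ((m : ℚ) - (l : ℚ) + 2)) * (C (-(1 / 18) : ℚ) * X 0) *
          Gbar (l - 2) := by
  have hGE : ∀ j : ℕ, Gbar j = GE m j := fun j => by rw [hGbar, hG, GE]
  refine ⟨?_, ?_, ?_⟩
  · rw [hGE]
    apply MvPolynomial.ext
    intro d
    rw [coeff_GE,
      show C (-(m:ℚ)/18) * (X 0 : MvPolynomial (Fin 2) ℚ)
        = (-(m:ℚ)/18) • (X 0 ^ 1 * X 1 ^ 0) from by rw [smul_eq_C_mul]; ring,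
      coeff_smul, coeff_ee, smul_eq_mul]
    by_cases h : 1 = d 0 ∧ 0 = d 1
    · rw [if_pos (by omega : 2 * d 0 + 3 * d 1 = 2), if_pos h, mul_one]
      obtain ⟨h1, h2⟩ := h
      rw [← h1, ← h2]
      norm_num [wq, Nat.factorial, descPochhammer_one]
      ring
    · rw [if_neg (fun hc => h (by omega)), if_neg h, mul_zero]
  · rw [hGE]
    apply MvPolynomial.ext
    intro d
    rw [coeff_GE,
      show C ((m:ℚ)/54) * (X 1 : MvPolynomial (Fin 2) ℚ)
        = ((m:ℚ)/54) • (X 0 ^ 0 * X 1 ^ 1) from by rw [smul_eq_C_mul]; ring,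
      coeff_smul, coeff_ee, smul_eq_mul]
    by_cases h : 0 = d 0 ∧ 1 = d 1
    · rw [if_pos (by omega : 2 * d 0 + 3 * d 1 = 3), if_pos h, mul_one]
      obtain ⟨h1, h2⟩ := h
      rw [← h1, ← h2]
      norm_num [wq, Nat.factorial, descPochhammer_one]
      ring
    · rw [if_neg (fun hc => h (by omega)), if_neg h, mul_zero]
  · intro l hl
    obtain ⟨k, rfl⟩ : ∃ k, l = k + 4 := ⟨l - 4, by omega⟩
    rw [show k + 4 - 1 = k + 3 from by omega, show k + 4 - 2 = k + 2 from by omega,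
      hGE, hGE, hGE]
    apply MvPolynomial.ext
    intro d
    rw [coeff_add, coeff_GE, coeff_thetaGE Θ hΘX hΘY, coeff_third]
    by_cases hD : 2 * d 0 + 3 * d 1 = k + 4
    · by_cases ha0 : d 0 = 0
      · -- a = 0, b = b2 + 2, k = 3 b2 + 2
        obtain ⟨b2, hb, hk⟩ : ∃ b2, d 1 = b2 + 2 ∧ k = 3 * b2 + 2 := ⟨d 1 - 2, by omega, by omega⟩
        rw [if_pos hD, if_pos (⟨by omega, by omega⟩ :
              1 ≤ d 1 ∧ 2 * (d 0 + 1) + 3 * (d 1 - 1) = k + 3),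
          if_neg (by omega : ¬(2 ≤ d 0 ∧ 2 * (d 0 - 2) + 3 * (d 1 + 1) = k + 3)),
          if_neg (by omega : ¬(1 ≤ d 0 ∧ 2 * (d 0 - 1) + 3 * d 1 = k + 2))]
        rw [ha0, hb, hk]
        simp only [wq]
        rw [show (0:ℕ)+1 = 1 from rfl, show b2+2-1 = b2+1 from by omega,
          show (0:ℕ) + (b2+2) = b2+2 from by omega, show 1 + (b2+1) = b2+2 from by omega,
          show 3*b2+2+4 = (3*b2+2+3)+1 from by omega, show b2+2 = (b2+1)+1 from by omega]
        simp only [Nat.factorial_succ, Nat.factorial_zero, Nat.factorial_one, pow_succ,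
          pow_zero, Nat.cast_mul, Nat.cast_add, Nat.cast_ofNat, Nat.cast_one, Nat.cast_zero]
        push_cast
        have hf1 : ((3*b2+2+3).factorial : ℚ) ≠ 0 := by
          exact_mod_cast (Nat.factorial_pos _).ne'
        have hf2 : ((b2+1).factorial : ℚ) ≠ 0 := by
          exact_mod_cast (Nat.factorial_pos _).ne'
        have h6 : (6:ℚ) ^ (3*b2+2+3) ≠ 0 := by positivity
        field_simp
        ring
      · by_cases ha1 : d 0 = 1
        · obtain ⟨b2, hb, hk⟩ : ∃ b2, d 1 = b2 + 1 ∧ k = 3 * b2 + 1 :=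
            ⟨d 1 - 1, by omega, by omega⟩
          rw [if_pos hD, if_pos (⟨by omega, by omega⟩ :
                1 ≤ d 1 ∧ 2 * (d 0 + 1) + 3 * (d 1 - 1) = k + 3),
            if_neg (by omega : ¬(2 ≤ d 0 ∧ 2 * (d 0 - 2) + 3 * (d 1 + 1) = k + 3)),
            if_pos (⟨by omega, by omega⟩ : 1 ≤ d 0 ∧ 2 * (d 0 - 1) + 3 * d 1 = k + 2)]
          rw [ha1, hb, hk]
          simp only [wq]
          rw [show b2+1-1 = b2 from by omega, show (1:ℕ)+1 = 2 from rfl,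
            show (1:ℕ)-1 = 0 from rfl,
            show 1 + (b2+1) = (b2+1)+1 from by omega, show 2 + b2 = (b2+1)+1 from by omega,
            show (0:ℕ) + (b2+1) = b2+1 from by omega]
          simp only [descPochhammer_succ_eval]
          rw [show 3*b2+1+4 = ((3*b2+1+2)+1)+1 from by omega,
            show 3*b2+1+3 = (3*b2+1+2)+1 from by omega]
          simp only [Nat.factorial_succ, Nat.factorial_zero, Nat.factorial_one,
            show (2:ℕ).factorial = 2 from rfl, pow_succ, pow_zero, pow_one]
          push_cast
          have hf1 : ((3*b2+1+2).factorial : ℚ) ≠ 0 := by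
            exact_mod_cast (Nat.factorial_pos _).ne'
          have hf2 : ((b2).factorial : ℚ) ≠ 0 := by
            exact_mod_cast (Nat.factorial_pos _).ne'
          have h6 : (6:ℚ) ^ (3*b2+1+2) ≠ 0 := by positivity
          field_simp
          ring
        · by_cases hb0 : d 1 = 0
          · obtain ⟨a2, ha, hk⟩ : ∃ a2, d 0 = a2 + 2 ∧ k = 2 * a2 := ⟨d 0 - 2, by omega, by omega⟩
            rw [if_pos hD, if_neg (by omega :
                  ¬(1 ≤ d 1 ∧ 2 * (d 0 + 1) + 3 * (d 1 - 1) = k + 3)),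
              if_pos (⟨by omega, by omega⟩ : 2 ≤ d 0 ∧ 2 * (d 0 - 2) + 3 * (d 1 + 1) = k + 3),
              if_pos (⟨by omega, by omega⟩ : 1 ≤ d 0 ∧ 2 * (d 0 - 1) + 3 * d 1 = k + 2)]
            rw [ha, hb0, hk]
            simp only [wq]
            rw [show a2+2-2 = a2 from by omega, show a2+2-1 = a2+1 from by omega,
              show (0:ℕ)+1 = 1 from rfl,
              show a2+2+0 = (a2+1)+1 from by omega, show a2+1+0 = a2+1 from by omega]
            simp only [descPochhammer_succ_eval]
            rw [show 2*a2+4 = ((2*a2+2)+1)+1 from by omega,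
              show 2*a2+3 = (2*a2+2)+1 from by omega,
              show a2+2 = (a2+1)+1 from by omega]
            simp only [Nat.factorial_succ, Nat.factorial_zero, Nat.factorial_one,
              pow_succ, pow_zero, pow_one]
            push_cast
            have hf1 : ((2*a2+2).factorial : ℚ) ≠ 0 := by
              exact_mod_cast (Nat.factorial_pos _).ne'
            have hf2 : ((a2).factorial : ℚ) ≠ 0 := by
              exact_mod_cast (Nat.factorial_pos _).ne'
            have h6 : (6:ℚ) ^ (2*a2+2) ≠ 0 := by positivity
            field_simp
            ring
          · obtain ⟨a2, b2, ha, hb, hk⟩ : ∃ a2 b2, d 0 = a2 + 2 ∧ d 1 = b2 + 1 ∧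
                k = 2 * a2 + 3 * b2 + 3 := ⟨d 0 - 2, d 1 - 1, by omega, by omega, by omega⟩
            rw [if_pos hD, if_pos (⟨by omega, by omega⟩ :
                  1 ≤ d 1 ∧ 2 * (d 0 + 1) + 3 * (d 1 - 1) = k + 3),
              if_pos (⟨by omega, by omega⟩ : 2 ≤ d 0 ∧ 2 * (d 0 - 2) + 3 * (d 1 + 1) = k + 3),
              if_pos (⟨by omega, by omega⟩ : 1 ≤ d 0 ∧ 2 * (d 0 - 1) + 3 * d 1 = k + 2)]
            rw [ha, hb, hk]
            simp only [wq]
            rw [show a2+2-2 = a2 from by omega, show a2+2-1 = a2+1 from by omega,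
              show b2+1-1 = b2 from by omega,
              show a2+2+(b2+1) = (a2+b2+2)+1 from by omega,
              show a2+2+1+b2 = (a2+b2+2)+1 from by omega,
              show a2+(b2+1+1) = a2+b2+2 from by omega,
              show a2+1+(b2+1) = a2+b2+2 from by omega]
            simp only [descPochhammer_succ_eval]
            rw [show 2*a2+3*b2+3+4 = ((2*a2+3*b2+5)+1)+1 from by omega,
              show 2*a2+3*b2+3+3 = (2*a2+3*b2+5)+1 from by omega,
              show 2*a2+3*b2+3+2 = 2*a2+3*b2+5 from by omega,
              show a2+2 = (a2+1)+1 from by omega]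
            simp only [Nat.factorial_succ, Nat.factorial_zero, Nat.factorial_one,
              pow_succ, pow_zero, pow_one]
            push_cast
            have hf1 : ((2*a2+3*b2+5).factorial : ℚ) ≠ 0 := by
              exact_mod_cast (Nat.factorial_pos _).ne'
            have hf2 : ((a2).factorial : ℚ) ≠ 0 := by
              exact_mod_cast (Nat.factorial_pos _).ne'
            have hf3 : ((b2).factorial : ℚ) ≠ 0 := by
              exact_mod_cast (Nat.factorial_pos _).ne'
            have h6 : (6:ℚ) ^ (2*a2+3*b2+5) ≠ 0 := by positivity
            field_simp
            ring
    · rw [if_neg hD]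
      split_ifs <;> first | (exfalso; omega) | norm_num
end
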